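/- arXiv:2303.11719 — 8 statements merged into one kernel-verified Lean document; each statement's English description precedes it below -/
import Mathlib

section
/- Every tournament on 2k+1 vertices is k-arc-strong if and only if it is eulerian (i.e., every vertex has in-degree equal to out-degree). -/
/-- `D` is a tournament: an orientation of a complete graph. -/
def IsTournament {V : Type*} (D : V → V → Prop) : Prop :=
  (∀ v, ¬ D v v) ∧ ∀ u v : V, u ≠ v → (D u v ↔ ¬ D v u)

/-- Number of arcs of `D` leaving the set `S`. -/
noncomputable def outCut {V : Type*} (D : V → V → Prop) (S : Set V) : ℕ :=
  {p : V × V | p.1 ∈ S ∧ p.2 ∉ S ∧ D p.1 p.2}.ncard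

/-- `D` is `k`-arc-strong: every nonempty proper vertex subset has at least `k` out-going arcs. -/
def kArcStrong {V : Type*} (D : V → V → Prop) (k : ℕ) : Prop :=
  ∀ S : Set V, S.Nonempty → S ≠ Set.univ → k ≤ outCut D S

/-- Out-degree of a vertex. -/
noncomputable def outDeg {V : Type*} (D : V → V → Prop) (v : V) : ℕ := {w | D v w}.ncard

/-- In-degree of a vertex. -/
noncomputable def inDeg {V : Type*} (D : V → V → Prop) (v : V) : ℕ := {w | D w v}.ncard

set_option linter.unusedSectionVars false

open Finset

lemma ncard_eq_card_filter {α : Type*} [Fintype α] (P : α → Prop) [DecidablePred P] :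
    {v | P v}.ncard = (Finset.univ.filter P).card := by
  rw [← Set.ncard_coe_finset]; congr 1; ext v; simp

section tourn
variable {V : Type*} [Fintype V] {T : V → V → Prop}

lemma outDeg_add_inDeg (hT : IsTournament T) (v : V) :
    outDeg T v + inDeg T v + 1 = Fintype.card V := by
  classical
  rw [outDeg, inDeg, ncard_eq_card_filter, ncard_eq_card_filter]
  have hdisj : Disjoint (univ.filter (fun w => T v w)) (univ.filter (fun w => T w v)) := by
    rw [Finset.disjoint_filter]
    intro w _ h1 h2
    rcases eq_or_ne w v with rfl | hne
    · exact hT.1 w h1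
    · exact ((hT.2 v w hne.symm).mp h1) h2
  have hunion : (univ.filter (fun w => T v w)) ∪ (univ.filter (fun w => T w v))
      = univ.erase v := by
    ext w
    simp only [Finset.mem_union, Finset.mem_filter, Finset.mem_univ, true_and,
      Finset.mem_erase, and_true]
    constructor
    · rintro (h | h)
      · rintro rfl; exact hT.1 w h
      · rintro rfl; exact hT.1 w h
    · intro hne
      rcases Classical.em (T v w) with h | h
      · exact Or.inl h
      · exact Or.inr ((hT.2 w v hne).mpr h)
  have := Finset.card_union_of_disjoint hdisj
  rw [hunion, Finset.card_erase_of_mem (Finset.mem_univ v), Finset.card_univ] at this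
  have hpos : 0 < Fintype.card V := Fintype.card_pos_iff.mpr ⟨v⟩
  have key : #(Finset.univ.filter (T v)) = #(Finset.univ.filter (fun w => T v w)) := rfl
  omega

lemma outCut_singleton (hT : IsTournament T) (v : V) : outCut T {v} = outDeg T v := by
  have : {p : V × V | p.1 ∈ ({v} : Set V) ∧ p.2 ∉ ({v} : Set V) ∧ T p.1 p.2}
      = (fun w => (v, w)) '' {w | T v w} := by
    ext ⟨a, b⟩
    simp only [Set.mem_setOf_eq, Set.mem_singleton_iff, Set.mem_image, Prod.mk.injEq]
    constructor
    · rintro ⟨rfl, hb, h⟩; exact ⟨b, h, rfl, rfl⟩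
    · rintro ⟨w, hw, rfl, rfl⟩
      refine ⟨rfl, ?_, hw⟩
      rintro rfl; exact hT.1 _ hw
  rw [outCut, this, Set.ncard_image_of_injective _ (by intro a b h; simpa using h)]
  rfl

lemma outCut_compl_singleton (hT : IsTournament T) (v : V) : outCut T ({v}ᶜ) = inDeg T v := by
  have : {p : V × V | p.1 ∈ ({v}ᶜ : Set V) ∧ p.2 ∉ ({v}ᶜ : Set V) ∧ T p.1 p.2}
      = (fun w => (w, v)) '' {w | T w v} := by
    ext ⟨a, b⟩
    simp only [Set.mem_setOf_eq, Set.mem_compl_iff, Set.mem_singleton_iff, not_not,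
      Set.mem_image, Prod.mk.injEq]
    constructor
    · rintro ⟨ha, rfl, h⟩; exact ⟨a, h, rfl, rfl⟩
    · rintro ⟨w, hw, rfl, rfl⟩
      refine ⟨?_, rfl, hw⟩
      rintro rfl; exact hT.1 _ hw
  rw [outCut, this, Set.ncard_image_of_injective _ (by intro a b h; simpa using h)]
  rfl

end tourn

section count
variable {V : Type*} [Fintype V] {T : V → V → Prop}

open Classical in
lemma sum_outDeg (S : Set V) :
    ∑ v ∈ univ.filter (· ∈ S), outDeg T v
      = outCut T S + #(univ.filter (fun p : V × V => p.1 ∈ S ∧ p.2 ∈ S ∧ T p.1 p.2)) := by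
  classical
  have hfiber :
      #(univ.filter (fun p : V × V => p.1 ∈ S ∧ T p.1 p.2))
        = ∑ v ∈ univ.filter (· ∈ S),
            #((univ.filter (fun p : V × V => p.1 ∈ S ∧ T p.1 p.2)).filter
              (fun p => p.1 = v)) := by
    apply Finset.card_eq_sum_card_fiberwise (f := Prod.fst)
    intro p hp
    simp only [Finset.mem_coe, Finset.mem_filter, Finset.mem_univ, true_and] at hp ⊢
    exact hp.1
  have hdeg : ∀ v ∈ univ.filter (· ∈ S),
      #((univ.filter (fun p : V × V => p.1 ∈ S ∧ T p.1 p.2)).filter (fun p => p.1 = v))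
        = outDeg T v := by
    intro v hv
    simp only [Finset.mem_filter, Finset.mem_univ, true_and] at hv
    rw [outDeg, ncard_eq_card_filter]
    apply Finset.card_nbij' (fun p => p.2) (fun w => (v, w))
    · rintro ⟨a, b⟩ hp
      simp only [Finset.mem_coe, Finset.mem_filter, Finset.mem_univ, true_and] at hp ⊢
      rcases hp with ⟨⟨_, h⟩, rfl⟩
      exact h
    · intro w hw
      simp only [Finset.mem_coe, Finset.mem_filter, Finset.mem_univ, true_and] at hw ⊢
      exact ⟨⟨hv, hw⟩, trivial⟩
    · rintro ⟨a, b⟩ hp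
      simp only [Finset.mem_coe, Finset.mem_filter, Finset.mem_univ, true_and] at hp
      rw [hp.2]
    · intro w _; rfl
  have hsplit :
      #((univ.filter (fun p : V × V => p.1 ∈ S ∧ T p.1 p.2)).filter (fun p => p.2 ∈ S))
        + #((univ.filter (fun p : V × V => p.1 ∈ S ∧ T p.1 p.2)).filter (fun p => ¬ p.2 ∈ S))
        = #(univ.filter (fun p : V × V => p.1 ∈ S ∧ T p.1 p.2)) :=
    Finset.card_filter_add_card_filter_not _
  have e1 : (univ.filter (fun p : V × V => p.1 ∈ S ∧ T p.1 p.2)).filter (fun p => p.2 ∈ S)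
      = univ.filter (fun p : V × V => p.1 ∈ S ∧ p.2 ∈ S ∧ T p.1 p.2) := by
    ext ⟨a, b⟩; simp only [Finset.mem_filter, Finset.mem_univ, true_and]; tauto
  have e2 : (univ.filter (fun p : V × V => p.1 ∈ S ∧ T p.1 p.2)).filter (fun p => ¬ p.2 ∈ S)
      = univ.filter (fun p : V × V => p.1 ∈ S ∧ p.2 ∉ S ∧ T p.1 p.2) := by
    ext ⟨a, b⟩; simp only [Finset.mem_filter, Finset.mem_univ, true_and]; tauto
  have hcut : outCut T S = #(univ.filter (fun p : V × V => p.1 ∈ S ∧ p.2 ∉ S ∧ T p.1 p.2)) :=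
    ncard_eq_card_filter _
  rw [Finset.sum_congr rfl hdeg] at hfiber
  rw [e1, e2] at hsplit
  rw [hcut, ← hfiber, ← hsplit]
  omega

open Classical in
lemma sum_inDeg (S : Set V) :
    ∑ v ∈ univ.filter (· ∈ S), inDeg T v
      = outCut T Sᶜ + #(univ.filter (fun p : V × V => p.1 ∈ S ∧ p.2 ∈ S ∧ T p.1 p.2)) := by
  classical
  have hfiber :
      #(univ.filter (fun p : V × V => p.2 ∈ S ∧ T p.1 p.2))
        = ∑ v ∈ univ.filter (· ∈ S),
            #((univ.filter (fun p : V × V => p.2 ∈ S ∧ T p.1 p.2)).filter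
              (fun p => p.2 = v)) := by
    apply Finset.card_eq_sum_card_fiberwise (f := Prod.snd)
    intro p hp
    simp only [Finset.mem_coe, Finset.mem_filter, Finset.mem_univ, true_and] at hp ⊢
    exact hp.1
  have hdeg : ∀ v ∈ univ.filter (· ∈ S),
      #((univ.filter (fun p : V × V => p.2 ∈ S ∧ T p.1 p.2)).filter (fun p => p.2 = v))
        = inDeg T v := by
    intro v hv
    simp only [Finset.mem_filter, Finset.mem_univ, true_and] at hv
    rw [inDeg, ncard_eq_card_filter]
    apply Finset.card_nbij' (fun p => p.1) (fun w => (w, v))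
    · rintro ⟨a, b⟩ hp
      simp only [Finset.mem_coe, Finset.mem_filter, Finset.mem_univ, true_and] at hp ⊢
      rcases hp with ⟨⟨_, h⟩, rfl⟩
      exact h
    · intro w hw
      simp only [Finset.mem_coe, Finset.mem_filter, Finset.mem_univ, true_and] at hw ⊢
      exact ⟨⟨hv, hw⟩, trivial⟩
    · rintro ⟨a, b⟩ hp
      simp only [Finset.mem_coe, Finset.mem_filter, Finset.mem_univ, true_and] at hp
      rw [hp.2]
    · intro w _; rfl
  have hsplit :
      #((univ.filter (fun p : V × V => p.2 ∈ S ∧ T p.1 p.2)).filter (fun p => p.1 ∈ S))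
        + #((univ.filter (fun p : V × V => p.2 ∈ S ∧ T p.1 p.2)).filter (fun p => ¬ p.1 ∈ S))
        = #(univ.filter (fun p : V × V => p.2 ∈ S ∧ T p.1 p.2)) :=
    Finset.card_filter_add_card_filter_not _
  have e1 : (univ.filter (fun p : V × V => p.2 ∈ S ∧ T p.1 p.2)).filter (fun p => p.1 ∈ S)
      = univ.filter (fun p : V × V => p.1 ∈ S ∧ p.2 ∈ S ∧ T p.1 p.2) := by
    ext ⟨a, b⟩; simp only [Finset.mem_filter, Finset.mem_univ, true_and]; tauto
  have e2 : (univ.filter (fun p : V × V => p.2 ∈ S ∧ T p.1 p.2)).filter (fun p => ¬ p.1 ∈ S)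
      = univ.filter (fun p : V × V => p.1 ∈ Sᶜ ∧ p.2 ∉ Sᶜ ∧ T p.1 p.2) := by
    ext ⟨a, b⟩
    simp only [Finset.mem_filter, Finset.mem_univ, true_and, Set.mem_compl_iff, not_not]
    tauto
  have hcut : outCut T Sᶜ = #(univ.filter (fun p : V × V => p.1 ∈ Sᶜ ∧ p.2 ∉ Sᶜ ∧ T p.1 p.2)) :=
    ncard_eq_card_filter _
  rw [Finset.sum_congr rfl hdeg] at hfiber
  rw [e1, e2] at hsplit
  rw [hcut, ← hfiber, ← hsplit]
  omega

open Classical in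
lemma cross_count (hT : IsTournament T) (S : Set V) :
    outCut T S + outCut T Sᶜ = S.ncard * Sᶜ.ncard := by
  classical
  have hsplit :
      #((univ.filter (fun p : V × V => p.1 ∈ S ∧ p.2 ∉ S)).filter (fun p => T p.1 p.2))
        + #((univ.filter (fun p : V × V => p.1 ∈ S ∧ p.2 ∉ S)).filter (fun p => ¬ T p.1 p.2))
        = #(univ.filter (fun p : V × V => p.1 ∈ S ∧ p.2 ∉ S)) :=
    Finset.card_filter_add_card_filter_not _
  have e1 : (univ.filter (fun p : V × V => p.1 ∈ S ∧ p.2 ∉ S)).filter (fun p => T p.1 p.2)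
      = univ.filter (fun p : V × V => p.1 ∈ S ∧ p.2 ∉ S ∧ T p.1 p.2) := by
    ext ⟨a, b⟩; simp only [Finset.mem_filter, Finset.mem_univ, true_and]; tauto
  have e2 : #((univ.filter (fun p : V × V => p.1 ∈ S ∧ p.2 ∉ S)).filter (fun p => ¬ T p.1 p.2))
      = #(univ.filter (fun p : V × V => p.1 ∈ Sᶜ ∧ p.2 ∉ Sᶜ ∧ T p.1 p.2)) := by
    apply Finset.card_nbij' (fun p => (p.2, p.1)) (fun p => (p.2, p.1))
    · rintro ⟨a, b⟩ hp
      simp only [Finset.mem_coe, Finset.mem_filter, Finset.mem_univ, true_and, Set.mem_compl_iff, not_not] at hp ⊢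
      obtain ⟨⟨ha, hb⟩, hnT⟩ := hp
      have hne : b ≠ a := fun h => hb (h ▸ ha)
      exact ⟨hb, ha, (hT.2 b a hne).mpr hnT⟩
    · rintro ⟨a, b⟩ hp
      simp only [Finset.mem_coe, Finset.mem_filter, Finset.mem_univ, true_and, Set.mem_compl_iff, not_not] at hp ⊢
      obtain ⟨ha, hb, hTab⟩ := hp
      have hne : a ≠ b := fun h => ha (h ▸ hb)
      exact ⟨⟨hb, ha⟩, (hT.2 a b hne).mp hTab⟩
    · rintro ⟨a, b⟩ _; rfl
    · rintro ⟨a, b⟩ _; rfl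
  have ecard : #(univ.filter (fun p : V × V => p.1 ∈ S ∧ p.2 ∉ S))
      = S.ncard * Sᶜ.ncard := by
    have : (univ.filter (fun p : V × V => p.1 ∈ S ∧ p.2 ∉ S))
        = (univ.filter (· ∈ S)) ×ˢ (univ.filter (· ∈ Sᶜ)) := by
      ext ⟨a, b⟩
      simp only [Finset.mem_filter, Finset.mem_univ, true_and, Finset.mem_product,
        Set.mem_compl_iff]
    rw [this, Finset.card_product, ← ncard_eq_card_filter (· ∈ S),
      ← ncard_eq_card_filter (· ∈ Sᶜ)]
    rfl
  have hcut1 : outCut T S = #(univ.filter (fun p : V × V => p.1 ∈ S ∧ p.2 ∉ S ∧ T p.1 p.2)) :=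
    ncard_eq_card_filter _
  have hcut2 : outCut T Sᶜ = #(univ.filter (fun p : V × V => p.1 ∈ Sᶜ ∧ p.2 ∉ Sᶜ ∧ T p.1 p.2)) :=
    ncard_eq_card_filter _
  rw [e1] at hsplit
  omega

end count

/-- A tournament on `2k+1` vertices is `k`-arc-strong iff it is eulerian. -/
theorem stmt_0 (k : ℕ) (hk : 0 < k) (T : Fin (2 * k + 1) → Fin (2 * k + 1) → Prop)
    (hT : IsTournament T) :
    kArcStrong T k ↔ ∀ v, outDeg T v = inDeg T v := by
  constructor
  · intro hstrong v
    have hcard : (1:ℕ) < Fintype.card (Fin (2*k+1)) := by simp; omega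
    obtain ⟨w, hw⟩ := Fintype.exists_ne_of_one_lt_card hcard v
    have h1 : k ≤ outDeg T v := by
      rw [← outCut_singleton hT v]
      apply hstrong ({v} : Set _) ⟨v, rfl⟩
      intro h
      have : w ∈ ({v} : Set _) := h ▸ Set.mem_univ w
      exact hw this
    have h2 : k ≤ inDeg T v := by
      rw [← outCut_compl_singleton hT v]
      apply hstrong (({v}ᶜ : Set _)) ⟨w, hw⟩
      intro h
      have : v ∈ ({v}ᶜ : Set _) := h ▸ Set.mem_univ v
      exact this rfl
    have h3 := outDeg_add_inDeg hT v
    rw [Fintype.card_fin] at h3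
    omega
  · intro heul S hS hS'
    classical
    have hsum1 := sum_outDeg (T := T) S
    have hsum2 := sum_inDeg (T := T) S
    have hsame : ∑ v ∈ Finset.univ.filter (· ∈ S), outDeg T v
        = ∑ v ∈ Finset.univ.filter (· ∈ S), inDeg T v :=
      Finset.sum_congr rfl (fun v _ => heul v)
    have heq : outCut T S = outCut T Sᶜ := by omega
    have hcross := cross_count hT S
    have hcompl : S.ncard + Sᶜ.ncard = 2*k+1 := by
      have := Set.ncard_add_ncard_compl S
      simpa using this
    have hs1 : 1 ≤ S.ncard := (Set.ncard_pos).mpr hS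
    have ht1 : 1 ≤ Sᶜ.ncard := (Set.ncard_pos).mpr (Set.nonempty_compl.mpr hS')
    obtain ⟨a, ha⟩ : ∃ a, S.ncard = a + 1 := ⟨S.ncard - 1, by omega⟩
    obtain ⟨b, hb⟩ : ∃ b, Sᶜ.ncard = b + 1 := ⟨Sᶜ.ncard - 1, by omega⟩
    rw [ha, hb] at hcross hcompl
    have h2 : 2 * outCut T S = (a+1)*(b+1) := by omega
    have h3 : (a+1)*(b+1) = a*b + a + b + 1 := by ring
    set m := a * b with hm
    omega
end

section
/- Let D be a digraph, let S be a set of vertices such that for every pair of distinct vertices u,v in S and every set X of at most k-1 vertices disjoint from {u,v}, D-X contains a directed path from u to v (S is k-strong in D). If a vertex v not in S has at least k in-neighbours in S and at least k out-neighbours in S, then S ∪ {v} is k-strong in D. -/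
/-- `S` is `k`-strong in the digraph `D`: for all distinct `u, v ∈ S` and every set `X` of at
most `k-1` vertices disjoint from `{u, v}`, `D - X` contains a directed path from `u` to `v`. -/
def kStrongIn {V : Type*} (D : V → V → Prop) (k : ℕ) (S : Set V) : Prop :=
  ∀ u ∈ S, ∀ v ∈ S, u ≠ v → ∀ X : Set V, X.ncard ≤ k - 1 → u ∉ X → v ∉ X →
    Relation.ReflTransGen (fun a b => D a b ∧ a ∉ X ∧ b ∉ X) u v

/-- If `S` is `k`-strong in `D` and `v ∉ S` has at least `k` in-neighbours and at least `k`
out-neighbours in `S`, then `S ∪ {v}` is `k`-strong in `D`. -/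
theorem stmt_1 {V : Type*} [Fintype V] (D : V → V → Prop) (k : ℕ) (hk : 0 < k)
    (S : Set V) (hS : kStrongIn D k S) (v : V) (hv : v ∉ S)
    (hin : k ≤ {w | w ∈ S ∧ D w v}.ncard) (hout : k ≤ {w | w ∈ S ∧ D v w}.ncard) :
    kStrongIn D k (S ∪ {v}) := by
  intro u hu w hw huw X hX huX hwX
  have hXfin : X.Finite := Set.toFinite X
  have hXlt : X.ncard < k := lt_of_le_of_lt hX (Nat.sub_lt hk one_pos)
  have key : ∀ A : Set V, k ≤ A.ncard → ∃ z ∈ A, z ∉ X := by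
    intro A hA
    by_contra h
    push_neg at h
    have hsub : A ⊆ X := fun a ha => h a ha
    have := Set.ncard_le_ncard hsub hXfin
    omega
  rcases hu with hu | hu
  · rcases hw with hw | hw
    · exact hS u hu w hw huw X hX huX hwX
    · have hw' : w = v := hw
      subst hw'
      obtain ⟨z, ⟨hzS, hzD⟩, hzX⟩ := key _ hin
      have tail : Relation.ReflTransGen (fun a b => D a b ∧ a ∉ X ∧ b ∉ X) u z := by
        rcases eq_or_ne u z with rfl | hne
        · exact .refl
        · exact hS u hu z hzS hne X hX huX hzX
      exact tail.tail ⟨hzD, hzX, hwX⟩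
  · have hu' : u = v := hu
    subst hu'
    rcases hw with hw | hw
    · obtain ⟨z, ⟨hzS, hzD⟩, hzX⟩ := key _ hout
      have tail : Relation.ReflTransGen (fun a b => D a b ∧ a ∉ X ∧ b ∉ X) z w := by
        rcases eq_or_ne z w with rfl | hne
        · exact .refl
        · exact hS z hzS w hw hne X hX hzX hwX
      exact (Relation.ReflTransGen.single ⟨hzD, huX, hzX⟩).trans tail
    · exact absurd hw (Ne.symm huw)
end

section
/- Let n ≥ k+1 be positive integers and let G be an n-vertex multigraph. If for every edge uv of G there exists a set F of at most k edges such that every path from u to v in G uses an edge of F, then G has at most k(n-1) edges. -/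
/-- Let `G` be a multigraph on `n ≥ k+1` vertices (vertex type `V`, edge-index type `E` with
endpoint map `ends` and no loops). If for every edge `e` with endpoints `u, v` there is a set
`F` of at most `k` edges such that every `u`-`v` path uses an edge of `F` (i.e. `u` cannot
reach `v` avoiding `F`), then `G` has at most `k(n-1)` edges. -/
theorem stmt_3 (n k : ℕ) (hk : 0 < k) (hn : k + 1 ≤ n)
    (V : Type*) [Fintype V] (hV : Fintype.card V = n)
    (E : Type*) [Fintype E] (ends : E → Sym2 V) (hloop : ∀ e, ¬ (ends e).IsDiag)
    (hcut : ∀ (e : E) (u v : V), ends e = s(u, v) →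
      ∃ F : Finset E, F.card ≤ k ∧
        ¬ Relation.ReflTransGen (fun a b => ∃ f : E, f ∉ F ∧ ends f = s(a, b)) u v) :
    Fintype.card E ≤ k * (n - 1) := by
  classical
  have key : ∀ m : ℕ, ∀ S : Finset V, S.card = m →
      (Finset.univ.filter (fun e : E => ∀ x ∈ ends e, x ∈ S)).card ≤ k * (S.card - 1) := by
    intro m
    induction m using Nat.strong_induction_on with
    | _ m ih =>
      intro S hS
      by_cases hES : (Finset.univ.filter (fun e : E => ∀ x ∈ ends e, x ∈ S)) = ∅
      · simp [hES]
      · obtain ⟨e, he⟩ := Finset.nonempty_iff_ne_empty.mpr hES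
        rw [Finset.mem_filter] at he
        obtain ⟨u, v, huv⟩ : ∃ x y, ends e = s(x, y) := Sym2.exists.mp ⟨ends e, rfl⟩
        obtain ⟨F, hFcard, hFcut⟩ := hcut e u v huv
        set r : V → V → Prop := fun a b => b ∈ S ∧ ∃ f : E, f ∉ F ∧ ends f = s(a, b) with hr
        set A : Finset V := S.filter (fun a => Relation.ReflTransGen r u a) with hA
        have hAS : A ⊆ S := Finset.filter_subset _ _
        have huS : u ∈ S := he.2 u (by rw [huv]; simp)
        have hvS : v ∈ S := he.2 v (by rw [huv]; simp)
        have huA : u ∈ A := by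
          rw [hA, Finset.mem_filter]; exact ⟨huS, Relation.ReflTransGen.refl⟩
        have hvA : v ∉ A := by
          rw [hA, Finset.mem_filter]
          rintro ⟨-, hreach⟩
          exact hFcut (Relation.ReflTransGen.mono (p := fun a b => ∃ f : E, f ∉ F ∧ ends f = s(a, b)) (fun a b hab => hab.2) u v hreach)
        set B : Finset V := S \ A with hB
        have hvB : v ∈ B := Finset.mem_sdiff.mpr ⟨hvS, hvA⟩
        have hcard : B.card + A.card = S.card := Finset.card_sdiff_add_card_eq_card hAS
        have step : ∀ a b (f : E), a ∈ A → b ∈ S → f ∉ F → ends f = s(a, b) → b ∈ A := by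
          intro a b f haA hbS hf hfe
          rw [hA, Finset.mem_filter] at haA ⊢
          exact ⟨hbS, haA.2.tail ⟨hbS, f, hf, hfe⟩⟩
        have hsub : (Finset.univ.filter (fun e : E => ∀ x ∈ ends e, x ∈ S))
            ⊆ (Finset.univ.filter (fun e : E => ∀ x ∈ ends e, x ∈ A))
              ∪ (Finset.univ.filter (fun e : E => ∀ x ∈ ends e, x ∈ B)) ∪ F := by
          intro f hf
          rw [Finset.mem_filter] at hf
          obtain ⟨a, b, hab⟩ : ∃ x y, ends f = s(x, y) := Sym2.exists.mp ⟨ends f, rfl⟩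
          have haS : a ∈ S := hf.2 a (by rw [hab]; simp)
          have hbS : b ∈ S := hf.2 b (by rw [hab]; simp)
          by_cases hfF : f ∈ F
          · exact Finset.mem_union_right _ hfF
          by_cases haA : a ∈ A <;> by_cases hbA : b ∈ A
          · refine Finset.mem_union_left _ (Finset.mem_union_left _ ?_)
            simp only [Finset.mem_filter, Finset.mem_univ, true_and]
            intro x hx
            rw [hab, Sym2.mem_iff] at hx
            rcases hx with rfl | rfl <;> assumption
          · exact absurd (step a b f haA hbS hfF hab) hbA
          · exact absurd (step b a f hbA haS hfF (by rw [hab, Sym2.eq_swap])) haA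
          · refine Finset.mem_union_left _ (Finset.mem_union_right _ ?_)
            simp only [Finset.mem_filter, Finset.mem_univ, true_and]
            intro x hx
            rw [hab, Sym2.mem_iff] at hx
            rcases hx with rfl | rfl <;> exact Finset.mem_sdiff.mpr ⟨by assumption, by assumption⟩
        have hApos : 0 < A.card := Finset.card_pos.mpr ⟨u, huA⟩
        have hBpos : 0 < B.card := Finset.card_pos.mpr ⟨v, hvB⟩
        have hAm : A.card < m := by omega
        have hBm : B.card < m := by omega
        have h1 := ih A.card hAm A rfl
        have h2 := ih B.card hBm B rfl
        have h3 := Finset.card_le_card hsub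
        have h4 := Finset.card_union_le
          ((Finset.univ.filter (fun e : E => ∀ x ∈ ends e, x ∈ A))
            ∪ (Finset.univ.filter (fun e : E => ∀ x ∈ ends e, x ∈ B))) F
        have h5 := Finset.card_union_le
          (Finset.univ.filter (fun e : E => ∀ x ∈ ends e, x ∈ A))
          (Finset.univ.filter (fun e : E => ∀ x ∈ ends e, x ∈ B))
        have heq : k * (A.card - 1) + k * (B.card - 1) + k = k * (S.card - 1) := by
          have : (A.card - 1) + ((B.card - 1) + 1) = S.card - 1 := by omega
          calc k * (A.card - 1) + k * (B.card - 1) + k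
              = k * ((A.card - 1) + ((B.card - 1) + 1)) := by ring
            _ = k * (S.card - 1) := by rw [this]
        omega
  have h := key (Fintype.card V) Finset.univ rfl
  have h2 : (Finset.univ.filter (fun e : E => ∀ x ∈ ends e, x ∈ (Finset.univ : Finset V)))
      = Finset.univ := by simp
  rw [h2] at h
  simpa [Finset.card_univ, hV] using h
end

section
/- For every positive integer t, there exists a 2-edge-connected digraph D on 2^{t-1}+1+C(2^{t-1}+1, 2) vertices with a specified vertex s such that every digraph obtained from D by at most t-1 inversions contains a sink or a source distinct from s. -/
/-- Inversion of the vertex set `X` in the digraph `D`: all arcs with both endpoints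
in `X` are reversed. -/
def dinv {V : Type*} (D : V → V → Prop) (X : Set V) : V → V → Prop :=
  fun u v => (u ∈ X ∧ v ∈ X ∧ D v u) ∨ (¬ (u ∈ X ∧ v ∈ X) ∧ D u v)

/-- Successive inversions of a list of vertex sets. -/
def dinvFam {V : Type*} (D : V → V → Prop) (Xs : List (Set V)) : V → V → Prop :=
  Xs.foldl dinv D

/-- The underlying multigraph of the digraph `D` is `m`-edge-connected: every nonempty proper
vertex subset is incident to at least `m` crossing arcs (in either direction). -/
def edgeConn {V : Type*} (D : V → V → Prop) (m : ℕ) : Prop :=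
  ∀ S : Set V, S.Nonempty → S ≠ Set.univ →
    m ≤ outCut D S + outCut (fun a b => D b a) S

/-! ### Auxiliary material -/

section Aux

variable {V W : Type*}

/-- Pull back a digraph along an equivalence. -/
def pullD (e : V ≃ W) (D : W → W → Prop) : V → V → Prop := fun a b => D (e a) (e b)

lemma dinv_pull (e : V ≃ W) (D : W → W → Prop) (X : Set V) :
    dinv (pullD e D) X = pullD e (dinv D (e '' X)) := by
  funext u v
  simp only [dinv, pullD, e.injective.mem_set_image]

lemma dinvFam_pull (e : V ≃ W) (D : W → W → Prop) (Xs : List (Set V)) :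
    dinvFam (pullD e D) Xs = pullD e (dinvFam D (Xs.map (fun X => e '' X))) := by
  induction Xs generalizing D with
  | nil => rfl
  | cons X Xs ih =>
      show dinvFam (dinv (pullD e D) X) Xs = _
      rw [dinv_pull, ih]
      rfl

lemma outCut_pull (e : V ≃ W) (D : W → W → Prop) (S : Set V) :
    outCut (pullD e D) S = outCut D (e '' S) := by
  unfold outCut
  have h : {p : W × W | p.1 ∈ e '' S ∧ p.2 ∉ e '' S ∧ D p.1 p.2}
      = (Prod.map e e) '' {p : V × V | p.1 ∈ S ∧ p.2 ∉ S ∧ (pullD e D) p.1 p.2} := by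
    ext ⟨a, b⟩
    constructor
    · rintro ⟨ha, hb, hd⟩
      refine ⟨(e.symm a, e.symm b), ⟨?_, ?_, ?_⟩, by simp⟩
      · simpa [Set.mem_image_equiv] using ha
      · simpa [Set.mem_image_equiv] using hb
      · simpa [pullD] using hd
    · rintro ⟨⟨u, v⟩, ⟨hu, hv, hd⟩, heq⟩
      have heq' : (e u, e v) = (a, b) := heq
      cases heq'
      exact ⟨⟨u, hu, rfl⟩, by simpa [e.injective.mem_set_image] using hv, hd⟩
  rw [h, Set.ncard_image_of_injective _ (e.injective.prodMap e.injective)]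

lemma edgeConn_pull (e : V ≃ W) (D : W → W → Prop) {m : ℕ} (h : edgeConn D m) :
    edgeConn (pullD e D) m := by
  intro S hS hSu
  rw [show (fun a b => pullD e D b a) = pullD e (fun a b => D b a) from rfl,
    outCut_pull, outCut_pull]
  refine h (e '' S) (hS.image e) ?_
  intro hc
  apply hSu
  ext v
  simp only [Set.mem_univ, iff_true]
  have : e v ∈ e '' S := hc ▸ Set.mem_univ _
  exact e.injective.mem_set_image.mp this

lemma two_le_ncard_add [Finite V] {A B : Set (V × V)} {a b : V × V}
    (ha : a ∈ A ∪ B) (hb : b ∈ A ∪ B) (hab : a ≠ b) : 2 ≤ A.ncard + B.ncard := by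
  have hA : A.Finite := Set.toFinite A
  have hB : B.Finite := Set.toFinite B
  rcases ha with ha | ha <;> rcases hb with hb | hb
  · have : 1 < A.ncard := (Set.one_lt_ncard hA).mpr ⟨a, ha, b, hb, hab⟩
    omega
  · have h1 : 0 < A.ncard := (Set.ncard_pos hA).mpr ⟨a, ha⟩
    have h2 : 0 < B.ncard := (Set.ncard_pos hB).mpr ⟨b, hb⟩
    omega
  · have h1 : 0 < A.ncard := (Set.ncard_pos hA).mpr ⟨b, hb⟩
    have h2 : 0 < B.ncard := (Set.ncard_pos hB).mpr ⟨a, ha⟩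
    omega
  · have : 1 < B.ncard := (Set.one_lt_ncard hB).mpr ⟨a, ha, b, hb, hab⟩
    omega

/-! ### The sink/source invariant -/

variable {E : V → V → Prop} {X : Set V} {m u v : V}

lemma dinv_both {a b : V} (ha : a ∈ X) (hb : b ∈ X) : dinv E X a b ↔ E b a := by
  simp [dinv, ha, hb]

lemma dinv_notboth {a b : V} (h : ¬(a ∈ X ∧ b ∈ X)) : dinv E X a b ↔ E a b := by
  simp only [dinv, h, false_and, and_false, not_false_iff, true_and, false_or]
  tauto

/-- `m` is a sink with in-neighbourhood exactly `{u, v}`, or a source with out-neighbourhood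
exactly `{u, v}`. -/
def goodAt (E : V → V → Prop) (m u v : V) : Prop :=
  ((∀ w, E w m ↔ (w = u ∨ w = v)) ∧ (∀ w, ¬ E m w)) ∨
  ((∀ w, E m w ↔ (w = u ∨ w = v)) ∧ (∀ w, ¬ E w m))

lemma dinv_flip (D : V → V → Prop) (X : Set V) :
    dinv (fun a b => D b a) X = fun a b => dinv D X b a := by
  funext a b
  simp only [dinv, eq_iff_iff]
  tauto

lemma stepSink (hX : u ∈ X ↔ v ∈ X)
    (h1 : ∀ w, E w m ↔ (w = u ∨ w = v)) (h2 : ∀ w, ¬ E m w) :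
    goodAt (dinv E X) m u v := by
  by_cases hm : m ∈ X
  · by_cases hu : u ∈ X
    · have hv : v ∈ X := hX.mp hu
      right
      refine ⟨fun w => ?_, fun w => ?_⟩
      · by_cases hw : w ∈ X
        · rw [dinv_both hm hw, h1 w]
        · rw [dinv_notboth (fun h => hw h.2)]
          exact iff_of_false (h2 w) (by rintro (rfl | rfl) <;> [exact hw hu; exact hw hv])
      · by_cases hw : w ∈ X
        · rw [dinv_both hw hm]; exact h2 w
        · rw [dinv_notboth (fun h => hw h.1)]
          intro hE
          rcases (h1 w).mp hE with rfl | rfl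
          · exact hw hu
          · exact hw hv
    · have hv : v ∉ X := fun h => hu (hX.mpr h)
      left
      refine ⟨fun w => ?_, fun w => ?_⟩
      · by_cases hw : w ∈ X
        · rw [dinv_both hw hm]
          exact iff_of_false (h2 w) (by rintro (rfl | rfl) <;> [exact hu hw; exact hv hw])
        · rw [dinv_notboth (fun h => hw h.1)]; exact h1 w
      · by_cases hw : w ∈ X
        · rw [dinv_both hm hw]
          intro hE
          rcases (h1 w).mp hE with rfl | rfl
          · exact hu hw
          · exact hv hw
        · rw [dinv_notboth (fun h => hw h.2)]; exact h2 w
  · left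
    refine ⟨fun w => ?_, fun w => ?_⟩
    · rw [dinv_notboth (fun h => hm h.2)]; exact h1 w
    · rw [dinv_notboth (fun h => hm h.1)]; exact h2 w

lemma stepGood (hX : u ∈ X ↔ v ∈ X) (h : goodAt E m u v) : goodAt (dinv E X) m u v := by
  rcases h with ⟨h1, h2⟩ | ⟨h1, h2⟩
  · exact stepSink hX h1 h2
  · have h' : goodAt (dinv (fun a b => E b a) X) m u v :=
      stepSink (E := fun a b => E b a) hX h1 h2
    rw [dinv_flip] at h'
    rcases h' with h' | h'
    · exact Or.inr h'
    · exact Or.inl h'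

lemma foldGood (Xs : List (Set V)) (hXs : ∀ X ∈ Xs, (u ∈ X ↔ v ∈ X))
    (h : goodAt E m u v) : goodAt (dinvFam E Xs) m u v := by
  induction Xs generalizing E with
  | nil => exact h
  | cons X Xs ih =>
      exact ih (fun Y hY => hXs Y (List.mem_cons_of_mem _ hY))
        (stepGood (hXs X List.mem_cons_self) h)

end Aux

/-! ### The construction -/

/-- Vertex type: `k` outer vertices plus one vertex for each pair of outer vertices. -/
abbrev Wk (k : ℕ) := Fin k ⊕ {s : Finset (Fin k) // s.card = 2}

/-- The digraph: a transitive tournament on the outer vertices, and each pair vertex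
receives an arc from each of its two elements. -/
def Dk (k : ℕ) : Wk k → Wk k → Prop
  | Sum.inl a, Sum.inl b => a < b
  | Sum.inl a, Sum.inr s => a ∈ s.1
  | Sum.inr _, _ => False

lemma Dk_irrefl (k : ℕ) (x : Wk k) : ¬ Dk k x x := by
  cases x with
  | inl a => exact lt_irrefl a
  | inr s => exact id

lemma edgeConn_Dk (k : ℕ) : edgeConn (Dk k) 2 := by
  intro S hS hSu
  have hF : outCut (Dk k) S
      = {p : Wk k × Wk k | p.1 ∈ S ∧ p.2 ∉ S ∧ Dk k p.1 p.2}.ncard := rfl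
  have hB : outCut (fun a b => Dk k b a) S
      = {p : Wk k × Wk k | p.1 ∈ S ∧ p.2 ∉ S ∧ Dk k p.2 p.1}.ncard := rfl
  rw [hF, hB]
  by_cases hall : ∀ i : Fin k, Sum.inl i ∈ S
  · obtain ⟨x, hx⟩ := (Set.ne_univ_iff_exists_notMem S).mp hSu
    cases x with
    | inl i => exact absurd (hall i) hx
    | inr s =>
        obtain ⟨i, j, hij, hs⟩ := Finset.card_eq_two.mp s.2
        refine two_le_ncard_add (a := (Sum.inl i, Sum.inr s)) (b := (Sum.inl j, Sum.inr s))
          (Or.inl ⟨hall i, hx, ?_⟩) (Or.inl ⟨hall j, hx, ?_⟩) ?_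
        · show i ∈ s.1; rw [hs]; simp
        · show j ∈ s.1; rw [hs]; simp
        · simp [Prod.ext_iff, hij]
  · push_neg at hall
    obtain ⟨j, hj⟩ := hall
    by_cases hnone : ∀ i : Fin k, Sum.inl i ∉ S
    · obtain ⟨x, hx⟩ := hS
      cases x with
      | inl i => exact absurd hx (hnone i)
      | inr s =>
          obtain ⟨i, j', hij, hs⟩ := Finset.card_eq_two.mp s.2
          refine two_le_ncard_add (a := (Sum.inr s, Sum.inl i)) (b := (Sum.inr s, Sum.inl j'))
            (Or.inr ⟨hx, hnone i, ?_⟩) (Or.inr ⟨hx, hnone j', ?_⟩) ?_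
          · show i ∈ s.1; rw [hs]; simp
          · show j' ∈ s.1; rw [hs]; simp
          · simp [Prod.ext_iff, hij]
    · push_neg at hnone
      obtain ⟨i, hi⟩ := hnone
      have hij : i ≠ j := fun h => hj (h ▸ hi)
      set P : Wk k := Sum.inr ⟨{i, j}, Finset.card_pair hij⟩ with hP
      -- first crossing arc: between the outer vertices i and j
      have harc1 : (Sum.inl i, Sum.inl j) ∈
          ({p : Wk k × Wk k | p.1 ∈ S ∧ p.2 ∉ S ∧ Dk k p.1 p.2} ∪
           {p : Wk k × Wk k | p.1 ∈ S ∧ p.2 ∉ S ∧ Dk k p.2 p.1}) := by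
        rcases lt_or_gt_of_ne hij with h | h
        · exact Or.inl ⟨hi, hj, h⟩
        · exact Or.inr ⟨hi, hj, h⟩
      -- second crossing arc: incident to the pair vertex P
      have hiP : Dk k (Sum.inl i) P := by show i ∈ ({i, j} : Finset (Fin k)); simp
      have hjP : Dk k (Sum.inl j) P := by show j ∈ ({i, j} : Finset (Fin k)); simp
      by_cases hPS : P ∈ S
      · refine two_le_ncard_add (a := (Sum.inl i, Sum.inl j)) (b := (P, Sum.inl j))
          harc1 (Or.inr ⟨hPS, hj, hjP⟩) ?_
        simp [hP, Prod.ext_iff]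
      · refine two_le_ncard_add (a := (Sum.inl i, Sum.inl j)) (b := (Sum.inl i, P))
          harc1 (Or.inl ⟨hi, hPS, hiP⟩) ?_
        simp [hP, Prod.ext_iff]

/-- For every positive integer `t`, there exists a 2-edge-connected digraph `D` on
`2^(t-1) + 1 + C(2^(t-1)+1, 2)` vertices with a specified vertex `s` such that every digraph
obtained from `D` by at most `t-1` inversions contains a sink or a source distinct from `s`. -/
theorem stmt_5 (t : ℕ) (ht : 0 < t) :
    ∃ D : Fin (2 ^ (t - 1) + 1 + Nat.choose (2 ^ (t - 1) + 1) 2) →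
        Fin (2 ^ (t - 1) + 1 + Nat.choose (2 ^ (t - 1) + 1) 2) → Prop,
      (∀ v, ¬ D v v) ∧ edgeConn D 2 ∧
      ∃ s, ∀ Xs : List (Set (Fin (2 ^ (t - 1) + 1 + Nat.choose (2 ^ (t - 1) + 1) 2))),
        Xs.length ≤ t - 1 →
        ∃ v, v ≠ s ∧
          ((∀ w, ¬ dinvFam D Xs v w) ∨ (∀ w, ¬ dinvFam D Xs w v)) := by
  classical
  set k : ℕ := 2 ^ (t - 1) + 1 with hk
  have hcard : Fintype.card (Fin (k + Nat.choose k 2)) = Fintype.card (Wk k) := by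
    simp [Wk, Fintype.card_finset_len]
  obtain e : Fin (k + Nat.choose k 2) ≃ Wk k := Fintype.equivOfCardEq hcard
  refine ⟨pullD e (Dk k), fun v => Dk_irrefl k (e v), edgeConn_pull e _ (edgeConn_Dk k),
    e.symm (Sum.inl ⟨0, Nat.succ_pos _⟩), ?_⟩
  intro Xs hlen
  set Ys : List (Set (Wk k)) := Xs.map (fun X => e '' X) with hYs
  -- pigeonhole: two outer vertices with the same membership pattern
  have hpigeon : ∃ u v : Fin k, u ≠ v ∧ ∀ Y ∈ Ys, (Sum.inl u ∈ Y ↔ Sum.inl v ∈ Y) := by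
    have hcard2 : Fintype.card (Fin Ys.length → Bool) < Fintype.card (Fin k) := by
      simp only [Fintype.card_fun, Fintype.card_bool, Fintype.card_fin]
      have h1 : Ys.length ≤ t - 1 := by simpa [hYs] using hlen
      calc 2 ^ Ys.length ≤ 2 ^ (t - 1) := Nat.pow_le_pow_right (by norm_num) h1
        _ < k := by omega
    obtain ⟨u, v, huv, hf⟩ := Fintype.exists_ne_map_eq_of_card_lt
      (fun (u : Fin k) (i : Fin Ys.length) => decide (Sum.inl u ∈ Ys.get i)) hcard2
    refine ⟨u, v, huv, fun Y hY => ?_⟩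
    obtain ⟨i, rfl⟩ := List.mem_iff_get.mp hY
    have := congrFun hf i
    simpa [decide_eq_decide] using this
  obtain ⟨u, v, huv, hmem⟩ := hpigeon
  set m : Wk k := Sum.inr ⟨{u, v}, Finset.card_pair huv⟩ with hm
  -- initially m is a sink with in-neighbourhood {inl u, inl v}
  have hinit : goodAt (Dk k) m (Sum.inl u) (Sum.inl v) := by
    left
    refine ⟨fun w => ?_, fun w => ?_⟩
    · cases w with
      | inl a =>
          show a ∈ ({u, v} : Finset (Fin k)) ↔ _
          simp [Finset.mem_insert, Sum.inl.injEq]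
      | inr s =>
          simp only [hm]
          exact iff_of_false id (by rintro (h | h) <;> exact Sum.inr_ne_inl h)
    · exact id
  have hgood : goodAt (dinvFam (Dk k) Ys) m (Sum.inl u) (Sum.inl v) :=
    foldGood Ys hmem hinit
  refine ⟨e.symm m, ?_, ?_⟩
  · intro h
    have := e.symm.injective h
    exact Sum.inr_ne_inl this
  · rw [dinvFam_pull, ← hYs]
    rcases hgood with ⟨_, h2⟩ | ⟨_, h2⟩
    · left
      intro w
      show ¬ dinvFam (Dk k) Ys (e (e.symm m)) (e w)
      rw [Equiv.apply_symm_apply]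
      exact h2 (e w)
    · right
      intro w
      show ¬ dinvFam (Dk k) Ys (e w) (e (e.symm m))
      rw [Equiv.apply_symm_apply]
      exact h2 (e w)
end

section
/- For every integer n ≥ 3 there is a 2-edge-connected digraph D on n vertices such that every digraph obtained from D by applying at most (1/2)⌈log₂ n⌉ - 1 inversions contains a sink or a source. -/
/-! ### Auxiliary machinery: parity of flips realised by a list of inversions -/

/-- Whether the pair `(u, v)` gets flipped by the inversions `Xs`:
the parity of the number of sets of `Xs` containing both `u` and `v`. -/
noncomputable def flipb {V : Type*} (Xs : List (Set V)) (u v : V) : Bool :=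
  Xs.foldr (fun X b => xor (@decide (u ∈ X ∧ v ∈ X) (Classical.propDecidable _)) b) false

lemma flipb_nil {V : Type*} (u v : V) : flipb ([] : List (Set V)) u v = false := rfl

lemma flipb_cons {V : Type*} (X : Set V) (Xs : List (Set V)) (u v : V) :
    flipb (X :: Xs) u v =
      xor (@decide (u ∈ X ∧ v ∈ X) (Classical.propDecidable _)) (flipb Xs u v) := rfl

lemma flipb_symm {V : Type*} (Xs : List (Set V)) (u v : V) : flipb Xs u v = flipb Xs v u := by
  induction Xs with
  | nil => rfl
  | cons X Xs ih =>
    rw [flipb_cons, flipb_cons, ih]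
    congr 1
    rw [decide_eq_decide]
    exact and_comm

lemma flipb_congr {V : Type*} (Xs : List (Set V)) (u a b : V)
    (h : ∀ X ∈ Xs, (a ∈ X ↔ b ∈ X)) : flipb Xs u a = flipb Xs u b := by
  induction Xs with
  | nil => rfl
  | cons X Xs ih =>
    rw [flipb_cons, flipb_cons, ih (fun Y hY => h Y (List.mem_cons_of_mem _ hY))]
    congr 1
    rw [decide_eq_decide]
    exact and_congr_right fun _ => h X List.mem_cons_self

/-- Characterization of iterated inversion via the flip parity. -/
lemma dinvFam_iff {V : Type*} (Xs : List (Set V)) : ∀ (D : V → V → Prop) (u v : V),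
    dinvFam D Xs u v ↔
      ((flipb Xs u v = true ∧ D v u) ∨ (flipb Xs u v = false ∧ D u v)) := by
  induction Xs with
  | nil => intro D u v; simp [dinvFam, flipb_nil]
  | cons X Xs ih =>
    intro D u v
    have h0 : dinvFam D (X :: Xs) u v ↔ dinvFam (dinv D X) Xs u v := Iff.rfl
    rw [h0, ih, flipb_cons]
    by_cases h : u ∈ X ∧ v ∈ X
    · have e1 : dinv D X v u ↔ D u v := by simp [dinv, h.1, h.2]
      have e2 : dinv D X u v ↔ D v u := by simp [dinv, h.1, h.2]
      cases hb : flipb Xs u v <;> simp [e1, e2, h, hb]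
    · have e1 : dinv D X v u ↔ D v u := by
        simp only [dinv]
        constructor
        · rintro (⟨h1, h2, _⟩ | ⟨_, h2⟩)
          · exact absurd ⟨h2, h1⟩ h
          · exact h2
        · intro hD; exact Or.inr ⟨fun hc => h ⟨hc.2, hc.1⟩, hD⟩
      have e2 : dinv D X u v ↔ D u v := by
        simp only [dinv]
        constructor
        · rintro (⟨h1, h2, _⟩ | ⟨_, h2⟩)
          · exact absurd ⟨h1, h2⟩ h
          · exact h2
        · intro hD; exact Or.inr ⟨h, hD⟩
      cases hb : flipb Xs u v <;> simp [e1, e2, h, hb]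

/-! ### The construction -/

/-- first base of candidate `c` -/
def paf (s c : ℕ) : ℕ := (c - s) % s

/-- second base of candidate `c` -/
def pbf (s c : ℕ) : ℕ := ((c - s) % s + (c - s) / s % (s - 1) + 1) % s

/-- The digraph: a digon cycle on bases `0..s-1`; each candidate `c ≥ s` is a sink
with two in-arcs, from bases `paf s c` and `pbf s c`. -/
def myD (n s : ℕ) : Fin n → Fin n → Prop := fun u v =>
  (u.val < s ∧ v.val < s ∧ (v.val = (u.val + 1) % s ∨ u.val = (v.val + 1) % s)) ∨
  (s ≤ v.val ∧ (u.val = paf s v.val ∨ u.val = pbf s v.val))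

lemma paf_lt {s : ℕ} (hs : 0 < s) (c : ℕ) : paf s c < s := Nat.mod_lt _ hs

lemma pbf_lt {s : ℕ} (hs : 0 < s) (c : ℕ) : pbf s c < s := Nat.mod_lt _ hs

lemma paf_ne_pbf {s : ℕ} (hs : 2 ≤ s) (c : ℕ) : paf s c ≠ pbf s c := by
  intro h
  rw [paf, pbf] at h
  set a := (c - s) % s with ha
  set d := (c - s) / s % (s - 1) with hd
  have hal : a < s := Nat.mod_lt _ (by omega)
  have hdl : d < s - 1 := Nat.mod_lt _ (by omega)
  rcases Nat.lt_or_ge (a + d + 1) s with hlt | hge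
  · rw [Nat.mod_eq_of_lt hlt] at h
    omega
  · rw [Nat.mod_eq_sub_mod hge, Nat.mod_eq_of_lt (by omega)] at h
    omega

lemma succ_mod_ne {s : ℕ} (hs : 2 ≤ s) {a : ℕ} (ha : a < s) : (a + 1) % s ≠ a := by
  rcases Nat.lt_or_ge (a + 1) s with h | h
  · rw [Nat.mod_eq_of_lt h]; omega
  · have : a + 1 = s := by omega
    rw [this, Nat.mod_self]; omega

/-- On a cyclic structure, a property holding at one point, failing at another,
and propagating along successors, is contradictory. -/
lemma cyc {s : ℕ} (hs : 2 ≤ s) (P : ℕ → Prop)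
    (hstep : ∀ x, x < s → P x → P ((x + 1) % s))
    {a b : ℕ} (ha : a < s) (haP : P a) (hb : b < s) (hbP : ¬ P b) : False := by
  have key : ∀ t, P ((a + t) % s) := by
    intro t
    induction t with
    | zero => simpa [Nat.mod_eq_of_lt ha] using haP
    | succ t ih =>
      have hlt : (a + t) % s < s := Nat.mod_lt _ (by omega)
      have h2 := hstep _ hlt ih
      have e : ((a + t) % s + 1) % s = (a + (t + 1)) % s := by
        conv_rhs => rw [show a + (t + 1) = a + t + 1 from by omega,
          Nat.add_mod (a + t) 1 s, Nat.mod_eq_of_lt (show 1 < s from by omega)]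
      rwa [e] at h2
  have h3 := key (s - a + b)
  rw [show a + (s - a + b) = s + b from by omega, Nat.add_mod_left,
    Nat.mod_eq_of_lt hb] at h3
  exact hbP h3

/-- For every `n ≥ 3` there is a 2-edge-connected digraph `D` on `n` vertices such that every
digraph obtained from `D` by at most `(1/2)⌈log₂ n⌉ - 1` inversions contains a sink or a
source. -/
theorem stmt_6 (n : ℕ) (hn : 3 ≤ n) :
    ∃ D : Fin n → Fin n → Prop, (∀ v, ¬ D v v) ∧ edgeConn D 2 ∧
      ∀ Xs : List (Set (Fin n)), (Xs.length : ℝ) ≤ (Nat.clog 2 n : ℝ) / 2 - 1 →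
        ∃ v, (∀ w, ¬ dinvFam D Xs v w) ∨ (∀ w, ¬ dinvFam D Xs w v) := by
  classical
  set s : ℕ := max 2 (Nat.sqrt n) with hsdef
  have hs2 : 2 ≤ s := le_max_left _ _
  have hs0 : 0 < s := by omega
  have hsn : s < n := max_lt (by omega) (Nat.sqrt_lt_self (by omega))
  refine ⟨myD n s, ?_, ?_, ?_⟩
  · -- irreflexive
    intro v hv
    rcases hv with ⟨h1, _, h3 | h3⟩ | ⟨h1, h2 | h2⟩
    · exact succ_mod_ne hs2 h1 h3.symm
    · exact succ_mod_ne hs2 h1 h3.symm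
    · have := paf_lt hs0 v.val; omega
    · have := pbf_lt hs0 v.val; omega
  · -- 2-edge-connectivity
    intro S hSne hSuniv
    by_cases hin : ∀ a (ha : a < s), (⟨a, lt_trans ha hsn⟩ : Fin n) ∈ S
    · -- all bases in S
      obtain ⟨v, hv⟩ := (Set.ne_univ_iff_exists_notMem S).mp hSuniv
      have hvs : s ≤ v.val := by
        by_contra h
        push_neg at h
        exact hv (by simpa using hin v.val h)
      set A : Fin n := ⟨paf s v.val, lt_trans (paf_lt hs0 _) hsn⟩ with hA
      set B : Fin n := ⟨pbf s v.val, lt_trans (pbf_lt hs0 _) hsn⟩ with hB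
      have hAB : ((A, v) : Fin n × Fin n) ≠ (B, v) := by
        intro h
        exact paf_ne_pbf hs2 v.val (congrArg Fin.val (congrArg Prod.fst h))
      have h2 : 2 ≤ outCut (myD n s) S := by
        have hsub : ({(A, v), (B, v)} : Set (Fin n × Fin n)) ⊆
            {p : Fin n × Fin n | p.1 ∈ S ∧ p.2 ∉ S ∧ myD n s p.1 p.2} := by
          rintro p (rfl | rfl)
          · exact ⟨hin (paf s v.val) (paf_lt hs0 _), hv, Or.inr ⟨hvs, Or.inl rfl⟩⟩
          · exact ⟨hin (pbf s v.val) (pbf_lt hs0 _), hv, Or.inr ⟨hvs, Or.inr rfl⟩⟩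
        calc (2 : ℕ) = ({(A, v), (B, v)} : Set (Fin n × Fin n)).ncard :=
              (Set.ncard_pair hAB).symm
        _ ≤ _ := Set.ncard_le_ncard hsub (Set.toFinite _)
      omega
    · by_cases hout : ∀ a (ha : a < s), (⟨a, lt_trans ha hsn⟩ : Fin n) ∉ S
      · -- all bases out of S
        obtain ⟨v, hv⟩ := hSne
        have hvs : s ≤ v.val := by
          by_contra h
          push_neg at h
          exact (hout v.val h) (by simpa using hv)
        set A : Fin n := ⟨paf s v.val, lt_trans (paf_lt hs0 _) hsn⟩ with hA
        set B : Fin n := ⟨pbf s v.val, lt_trans (pbf_lt hs0 _) hsn⟩ with hB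
        have hAB : ((v, A) : Fin n × Fin n) ≠ (v, B) := by
          intro h
          exact paf_ne_pbf hs2 v.val (congrArg Fin.val (congrArg Prod.snd h))
        have h2 : 2 ≤ outCut (fun a b => myD n s b a) S := by
          have hsub : ({(v, A), (v, B)} : Set (Fin n × Fin n)) ⊆
              {p : Fin n × Fin n | p.1 ∈ S ∧ p.2 ∉ S ∧ myD n s p.2 p.1} := by
            rintro p (rfl | rfl)
            · exact ⟨hv, hout (paf s v.val) (paf_lt hs0 _), Or.inr ⟨hvs, Or.inl rfl⟩⟩
            · exact ⟨hv, hout (pbf s v.val) (pbf_lt hs0 _), Or.inr ⟨hvs, Or.inr rfl⟩⟩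
          calc (2 : ℕ) = ({(v, A), (v, B)} : Set (Fin n × Fin n)).ncard :=
                (Set.ncard_pair hAB).symm
          _ ≤ _ := Set.ncard_le_ncard hsub (Set.toFinite _)
        omega
      · -- the bases are split by S
        push_neg at hin hout
        obtain ⟨b, hbs, hbS⟩ := hin
        obtain ⟨a, has, haS⟩ := hout
        have hex : ∃ x, x < s ∧ (∃ hx : x < n, (⟨x, hx⟩ : Fin n) ∈ S) ∧
            ¬ (∃ hx : (x + 1) % s < n, (⟨(x + 1) % s, hx⟩ : Fin n) ∈ S) := by
          by_contra hstep
          push_neg at hstep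
          refine cyc hs2 (fun x => ∃ hx : x < n, (⟨x, hx⟩ : Fin n) ∈ S) ?_ has
            ⟨lt_trans has hsn, haS⟩ hbs ?_
          · intro x hx hPx
            rcases hstep x hx hPx with ⟨h1, h2⟩
            exact ⟨h1, h2⟩
          · rintro ⟨h1, h2⟩
            exact hbS (by simpa using h2)
        obtain ⟨x, hxs, ⟨hxn, hxS⟩, hxnS⟩ := hex
        have hx1n : (x + 1) % s < n := lt_trans (Nat.mod_lt _ hs0) hsn
        have hx1S : (⟨(x + 1) % s, hx1n⟩ : Fin n) ∉ S := fun h => hxnS ⟨hx1n, h⟩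
        have hD1 : myD n s ⟨x, hxn⟩ ⟨(x + 1) % s, hx1n⟩ :=
          Or.inl ⟨hxs, Nat.mod_lt _ hs0, Or.inl rfl⟩
        have hD2 : myD n s ⟨(x + 1) % s, hx1n⟩ ⟨x, hxn⟩ :=
          Or.inl ⟨Nat.mod_lt _ hs0, hxs, Or.inr rfl⟩
        have h1 : 0 < outCut (myD n s) S := by
          refine (Set.ncard_pos (Set.toFinite _)).mpr ?_
          exact ⟨(⟨x, hxn⟩, ⟨(x + 1) % s, hx1n⟩), hxS, hx1S, hD1⟩
        have h2 : 0 < outCut (fun a b => myD n s b a) S := by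
          refine (Set.ncard_pos (Set.toFinite _)).mpr ?_
          exact ⟨(⟨x, hxn⟩, ⟨(x + 1) % s, hx1n⟩), hxS, hx1S, hD2⟩
        omega
  · -- resistance to inversions
    intro Xs hlen
    by_contra hcon
    push_neg at hcon
    set k : ℕ := Xs.length with hk
    have hclog : 2 * k + 2 ≤ Nat.clog 2 n := by
      have h2 : ((2 * k + 2 : ℕ) : ℝ) ≤ ((Nat.clog 2 n : ℕ) : ℝ) := by
        push_cast
        rw [hk]
        linarith
      exact_mod_cast h2
    have hpow : 2 ^ (2 * k + 1) < n := by
      rw [← Nat.lt_clog_iff_pow_lt (by norm_num)]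
      omega
    have hP1 : 2 ^ k + 1 ≤ s := by
      rcases Nat.eq_zero_or_pos k with hk0 | hk1
      · rw [hk0]; simpa using hs2
      · have e1 : (2 ^ k + 1) * (2 ^ k + 1) = 2 ^ (2 * k) + 2 * 2 ^ k + 1 := by
          rw [two_mul, pow_add]; ring
        have e2 : 2 * 2 ^ k ≤ 2 ^ (2 * k) := by
          calc 2 * 2 ^ k = 2 ^ (k + 1) := by rw [pow_succ]; ring
          _ ≤ 2 ^ (2 * k) := Nat.pow_le_pow_right (by norm_num) (by omega)
        have e3 : 2 ^ (2 * k) + 2 ^ (2 * k) = 2 ^ (2 * k + 1) := by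
          rw [pow_succ]; ring
        have hsq : (2 ^ k + 1) * (2 ^ k + 1) ≤ n := by
          rw [e1]; omega
        have h4 : 2 ^ k + 1 ≤ Nat.sqrt n := Nat.le_sqrt.mpr hsq
        exact le_trans h4 (le_max_right _ _)
    have h2kn : 2 ^ k < n := by omega
    have hP2 : 2 ^ k * s + 2 ^ k ≤ n := by
      rcases Nat.eq_zero_or_pos k with hk0 | hk1
      · rw [hk0]; simpa using hsn
      · have h3 : 2 ≤ Nat.sqrt n := by
          by_contra hc
          push_neg at hc
          have hseq : s = 2 := by
            rw [hsdef]
            exact max_eq_left (by omega)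
          have h5 : (2 : ℕ) ≤ 2 ^ k := by
            calc (2 : ℕ) = 2 ^ 1 := by norm_num
            _ ≤ 2 ^ k := Nat.pow_le_pow_right (by norm_num) hk1
          omega
        have hss : s * s ≤ n := by
          have : s = Nat.sqrt n := max_eq_right h3
          rw [this]; exact Nat.sqrt_le n
        have h4 : (2 ^ k + 1) * s ≤ s * s := Nat.mul_le_mul_right s hP1
        have h5 : 2 ^ k * s + 2 ^ k < (2 ^ k + 1) * s := by
          have h6 : (2 ^ k + 1) * s = 2 ^ k * s + s := by ring
          omega
        omega
    -- key claim: bases `i < j ≤ 2 ^ k` have different membership patterns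
    have hx : ∀ i j : ℕ, i < j → j ≤ 2 ^ k → ∀ (hi : i < n) (hj : j < n),
        ∃ X ∈ Xs, ¬ ((⟨i, hi⟩ : Fin n) ∈ X ↔ (⟨j, hj⟩ : Fin n) ∈ X) := by
      intro i j hij hj2 hi hj
      have hjs : j < s := by omega
      have his : i < s := by omega
      set cv : ℕ := s + ((j - i - 1) * s + i) with hcvdef
      have hcvn : cv < n := by
        have h1 : j - i - 1 ≤ 2 ^ k - 1 := by omega
        have h2 : (j - i - 1) * s ≤ (2 ^ k - 1) * s := Nat.mul_le_mul_right s h1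
        have h3 : s + (2 ^ k - 1) * s = 2 ^ k * s := by
          have e : (2 ^ k - 1) + 1 = 2 ^ k := by
            have := Nat.one_le_two_pow (n := k); omega
          calc s + (2 ^ k - 1) * s = ((2 ^ k - 1) + 1) * s := by ring
          _ = 2 ^ k * s := by rw [e]
        omega
      have hscv : s ≤ cv := by omega
      have hpa : paf s cv = i := by
        have e1 : cv - s = s * (j - i - 1) + i := by rw [Nat.mul_comm]; omega
        rw [paf, e1, Nat.mul_add_mod, Nat.mod_eq_of_lt his]
      have hdiv : (cv - s) / s = j - i - 1 := by
        have e1 : cv - s = s * (j - i - 1) + i := by rw [Nat.mul_comm]; omega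
        rw [e1, Nat.mul_add_div hs0, Nat.div_eq_of_lt his]
        omega
      have hpb : pbf s cv = j := by
        have e2 : (cv - s) % s = i := hpa
        have e3 : (j - i - 1) % (s - 1) = j - i - 1 := Nat.mod_eq_of_lt (by omega)
        rw [pbf, e2, hdiv, e3, show i + (j - i - 1) + 1 = j from by omega,
          Nat.mod_eq_of_lt hjs]
      set C : Fin n := ⟨cv, hcvn⟩ with hC
      obtain ⟨⟨w1, hw1⟩, ⟨w2, hw2⟩⟩ := hcon C
      rw [dinvFam_iff] at hw1 hw2
      have hDC : ∀ w : Fin n, ¬ myD n s C w := by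
        intro w hw
        rcases hw with ⟨h1, _, _⟩ | ⟨h1, h2 | h2⟩
        · have : cv < s := h1
          omega
        · have h3 := paf_lt hs0 w.val
          have h4 : cv = paf s w.val := h2
          omega
        · have h3 := pbf_lt hs0 w.val
          have h4 : cv = pbf s w.val := h2
          omega
      rcases hw1 with ⟨hf1, hD1⟩ | ⟨_, hD1⟩
      swap
      · exact absurd hD1 (hDC w1)
      rcases hw2 with ⟨_, hD2⟩ | ⟨hf2, hD2⟩
      · exact absurd hD2 (hDC w2)
      have hw1ij : w1.val = i ∨ w1.val = j := by
        rcases hD1 with ⟨_, h1, _⟩ | ⟨_, h⟩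
        · have : cv < s := h1
          omega
        · rcases h with h | h
          · left; rw [h]; exact hpa
          · right; rw [h]; exact hpb
      have hw2ij : w2.val = i ∨ w2.val = j := by
        rcases hD2 with ⟨_, h1, _⟩ | ⟨_, h⟩
        · have : cv < s := h1
          omega
        · rcases h with h | h
          · left; rw [h]; exact hpa
          · right; rw [h]; exact hpb
      by_contra hno
      push_neg at hno
      have hflip_ij : flipb Xs C ⟨i, hi⟩ = flipb Xs C ⟨j, hj⟩ :=
        flipb_congr Xs C _ _ hno
      have hw1e : w1 = (⟨i, hi⟩ : Fin n) ∨ w1 = (⟨j, hj⟩ : Fin n) := by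
        rcases hw1ij with h | h
        · left; exact Fin.ext h
        · right; exact Fin.ext h
      have hw2e : w2 = (⟨i, hi⟩ : Fin n) ∨ w2 = (⟨j, hj⟩ : Fin n) := by
        rcases hw2ij with h | h
        · left; exact Fin.ext h
        · right; exact Fin.ext h
      have hcontra : (true : Bool) = false := by
        rw [← hf1, ← hf2, flipb_symm Xs w2 C]
        rcases hw1e with h1 | h1 <;> rcases hw2e with h2 | h2 <;>
          rw [h1, h2] <;> simp [hflip_ij]
      simp at hcontra
    -- pigeonhole on membership patterns
    have hfinlt : ∀ i : Fin (2 ^ k + 1), (i : ℕ) < n := by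
      intro i
      have := i.isLt
      omega
    set f : Fin (2 ^ k + 1) → (Fin Xs.length → Bool) :=
      fun i m => @decide ((⟨i.val, hfinlt i⟩ : Fin n) ∈ Xs.get m)
        (Classical.propDecidable _) with hf
    have hinj : Function.Injective f := by
      intro i j hfeq
      by_contra hne
      have hij : (i : ℕ) ≠ (j : ℕ) := fun h => hne (Fin.ext h)
      rcases Nat.lt_or_ge i.val j.val with h | h
      · obtain ⟨X, hXmem, hXne⟩ := hx i.val j.val h (by omega) (hfinlt i) (hfinlt j)
        obtain ⟨m, hm⟩ := List.mem_iff_get.mp hXmem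
        have h5 := congrFun hfeq m
        rw [hf] at h5
        simp only at h5
        rw [decide_eq_decide] at h5
        rw [hm] at h5
        exact hXne h5
      · have h' : j.val < i.val := by omega
        obtain ⟨X, hXmem, hXne⟩ := hx j.val i.val h' (by omega) (hfinlt j) (hfinlt i)
        obtain ⟨m, hm⟩ := List.mem_iff_get.mp hXmem
        have h5 := congrFun hfeq m
        rw [hf] at h5
        simp only at h5
        rw [decide_eq_decide] at h5
        rw [hm] at h5
        exact hXne h5.symm
    have hcard := Fintype.card_le_of_injective f hinj
    rw [Fintype.card_fin, Fintype.card_fun, Fintype.card_bool, Fintype.card_fin] at hcard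
    rw [← hk] at hcard
    omega
end

section
/- For positive integers n, k with n ≥ k+2, there exists a 2k-edge-connected digraph D on n vertices such that at least (1/2)·log₂(n-k+1) inversions are needed to transform D into a k-arc-strong digraph. -/
open scoped Classical

namespace Stmt7

variable {V : Type*}

/-- Number of sets in the list containing both `u` and `v`. -/
noncomputable def pcnt (Xs : List (Set V)) (u v : V) : ℕ :=
  Xs.countP (fun X => decide (u ∈ X ∧ v ∈ X))

lemma pcnt_nil (u v : V) : pcnt ([] : List (Set V)) u v = 0 := rfl

lemma pcnt_cons (X : Set V) (Xs : List (Set V)) (u v : V) :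
    pcnt (X :: Xs) u v = pcnt Xs u v + (if u ∈ X ∧ v ∈ X then 1 else 0) := by
  simp only [pcnt, List.countP_cons]
  by_cases h : u ∈ X ∧ v ∈ X <;> simp [h]

lemma pcnt_symm (Xs : List (Set V)) (u v : V) : pcnt Xs u v = pcnt Xs v u := by
  unfold pcnt
  apply List.countP_congr
  intro X _
  simp only [decide_eq_true_eq]
  tauto

/-- The parity description of iterated inversions. -/
lemma dinvFam_iff (D : V → V → Prop) (Xs : List (Set V)) (u v : V) :
    dinvFam D Xs u v ↔
      ((Odd (pcnt Xs u v) ∧ D v u) ∨ (¬ Odd (pcnt Xs u v) ∧ D u v)) := by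
  induction Xs generalizing D with
  | nil =>
    show D u v ↔ _
    rw [pcnt_nil]
    simp [Nat.odd_iff]
  | cons X T ih =>
    have hstep : dinvFam D (X :: T) u v = dinvFam (dinv D X) T u v := rfl
    rw [hstep, ih]
    by_cases h : u ∈ X ∧ v ∈ X
    · have h' : v ∈ X ∧ u ∈ X := ⟨h.2, h.1⟩
      have e1 : dinv D X v u ↔ D u v := by
        constructor
        · rintro (⟨_, _, hd⟩ | ⟨hn, _⟩)
          · exact hd
          · exact absurd h' hn
        · intro hd; exact Or.inl ⟨h'.1, h'.2, hd⟩
      have e2 : dinv D X u v ↔ D v u := by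
        constructor
        · rintro (⟨_, _, hd⟩ | ⟨hn, _⟩)
          · exact hd
          · exact absurd h hn
        · intro hd; exact Or.inl ⟨h.1, h.2, hd⟩
      have ec : pcnt (X :: T) u v = pcnt T u v + 1 := by
        rw [pcnt_cons]; simp [h]
      rw [ec]
      simp only [e1, e2, Nat.odd_add_one]
      tauto
    · have e1 : dinv D X v u ↔ D v u := by
        have h' : ¬ (v ∈ X ∧ u ∈ X) := fun hc => h ⟨hc.2, hc.1⟩
        constructor
        · rintro (⟨hv, hu, _⟩ | ⟨_, hd⟩)
          · exact absurd ⟨hv, hu⟩ h'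
          · exact hd
        · intro hd; exact Or.inr ⟨h', hd⟩
      have e2 : dinv D X u v ↔ D u v := by
        constructor
        · rintro (⟨hv, hu, _⟩ | ⟨_, hd⟩)
          · exact absurd ⟨hv, hu⟩ h
          · exact hd
        · intro hd; exact Or.inr ⟨h, hd⟩
      have ec : pcnt (X :: T) u v = pcnt T u v := by
        rw [pcnt_cons]; simp [h]
      rw [ec]
      simp only [e1, e2]
  
lemma dinvFam_of_both {D : V → V → Prop} {Xs : List (Set V)} {u v : V}
    (h1 : D u v) (h2 : D v u) : dinvFam D Xs u v := by
  rw [dinvFam_iff]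
  by_cases h : Odd (pcnt Xs u v)
  · exact Or.inl ⟨h, h2⟩
  · exact Or.inr ⟨h, h1⟩

lemma dinvFam_not_of_none {D : V → V → Prop} {Xs : List (Set V)} {u v : V}
    (h1 : ¬ D u v) (h2 : ¬ D v u) : ¬ dinvFam D Xs u v := by
  rw [dinvFam_iff]
  rintro (⟨_, hd⟩ | ⟨_, hd⟩)
  · exact h2 hd
  · exact h1 hd

/-- if there is an arc u→v and no arc v→u, the final digraph has u→v iff flip-count is even -/
lemma dinvFam_fwd {D : V → V → Prop} {Xs : List (Set V)} {u v : V}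
    (h1 : D u v) (h2 : ¬ D v u) : dinvFam D Xs u v ↔ ¬ Odd (pcnt Xs u v) := by
  rw [dinvFam_iff]
  constructor
  · rintro (⟨_, hd⟩ | ⟨he, _⟩)
    · exact absurd hd h2
    · exact he
  · intro he; exact Or.inr ⟨he, h1⟩

/-- if there is an arc u→v and no arc v→u, the final digraph has v→u iff flip-count is odd -/
lemma dinvFam_bwd {D : V → V → Prop} {Xs : List (Set V)} {u v : V}
    (h1 : D u v) (h2 : ¬ D v u) : dinvFam D Xs v u ↔ Odd (pcnt Xs u v) := by
  rw [dinvFam_iff, pcnt_symm Xs v u]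
  constructor
  · rintro (⟨ho, _⟩ | ⟨_, hd⟩)
    · exact ho
    · exact absurd hd h2
  · intro ho; exact Or.inl ⟨ho, h1⟩

lemma pcnt_congr {Xs : List (Set V)} {a b : V}
    (h : ∀ X ∈ Xs, a ∈ X ↔ b ∈ X) (u : V) :
    pcnt Xs u a = pcnt Xs u b := by
  unfold pcnt
  apply List.countP_congr
  intro X hX
  have := h X hX
  simp only [decide_eq_true_eq]
  tauto

lemma odd_pcnt_single (X : Set V) (u v : V) :
    Odd (pcnt [X] u v) ↔ (u ∈ X ∧ v ∈ X) := by
  rw [pcnt_cons, pcnt_nil]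
  by_cases h : u ∈ X ∧ v ∈ X
  · rw [if_pos h]
    constructor
    · intro _; exact h
    · intro _; exact ⟨0, by omega⟩
  · rw [if_neg h]
    constructor
    · rintro ⟨c, hc⟩; omega
    · intro hc; exact absurd hc h



lemma outCut_singleton (D : V → V → Prop) (w : V) :
    outCut D {w} = {u | D w u ∧ u ≠ w}.ncard := by
  unfold outCut
  have h : {p : V × V | p.1 ∈ ({w} : Set V) ∧ p.2 ∉ ({w} : Set V) ∧ D p.1 p.2}
      = (fun u => (w, u)) '' {u | D w u ∧ u ≠ w} := by
    ext ⟨a, b⟩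
    constructor
    · rintro ⟨ha, hb, hD⟩
      have ha' : a = w := ha
      subst ha'
      exact ⟨b, ⟨hD, hb⟩, rfl⟩
    · rintro ⟨u, ⟨hD, hu⟩, heq⟩
      rw [Prod.ext_iff] at heq
      obtain ⟨h1, h2⟩ := heq
      simp only at h1 h2
      subst h1; subst h2
      exact ⟨rfl, hu, hD⟩
  rw [h, Set.ncard_image_of_injective]
  intro a b hab
  simpa using hab

lemma outCut_compl_singleton (D : V → V → Prop) (w : V) :
    outCut D (Set.univ \ {w}) = {u | D u w ∧ u ≠ w}.ncard := by
  unfold outCut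
  have h : {p : V × V | p.1 ∈ (Set.univ \ {w} : Set V) ∧ p.2 ∉ (Set.univ \ {w} : Set V) ∧ D p.1 p.2}
      = (fun u => (u, w)) '' {u | D u w ∧ u ≠ w} := by
    ext ⟨a, b⟩
    constructor
    · rintro ⟨ha, hb, hD⟩
      have ha' : a ≠ w := ha.2
      have hb' : b = w := by
        by_contra hc
        exact hb ⟨trivial, hc⟩
      subst hb'
      exact ⟨a, ⟨hD, ha'⟩, rfl⟩
    · rintro ⟨u, ⟨hD, hu⟩, heq⟩
      rw [Prod.ext_iff] at heq
      obtain ⟨h1, h2⟩ := heq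
      simp only at h1 h2
      subst h1; subst h2
      exact ⟨⟨trivial, hu⟩, by simp, hD⟩
  rw [h, Set.ncard_image_of_injective]
  intro a b hab
  simpa using hab

/-- ncard of a lower Fin-interval -/
lemma ncard_val_lt (n j : ℕ) (hj : j ≤ n) : {w : Fin n | (w : ℕ) < j}.ncard = j := by
  have h : {w : Fin n | (w : ℕ) < j} = (fun i : Fin j => Fin.castLE hj i) '' Set.univ := by
    ext w
    constructor
    · intro hw
      exact ⟨⟨(w : ℕ), hw⟩, trivial, by ext; simp [Fin.castLE]⟩
    · rintro ⟨i, _, rfl⟩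
      exact i.isLt
  rw [h, Set.ncard_image_of_injective _ (Fin.castLE_injective hj)]
  simp [Set.ncard_univ]

-- monotonicity helper in finite types
lemma ncard_le_of_subset' [Finite V] {A B : Set V} (h : A ⊆ B) : A.ncard ≤ B.ncard :=
  Set.ncard_le_ncard h (Set.toFinite _)

lemma ncard_le_outCut [Finite V] {D : V → V → Prop} {S : Set V} {T : Set (V × V)}
    (hT : T ⊆ {p : V × V | p.1 ∈ S ∧ p.2 ∉ S ∧ D p.1 p.2}) : T.ncard ≤ outCut D S :=
  Set.ncard_le_ncard hT (Set.toFinite _)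

/-- triangle-number facts -/
lemma choose2_succ (b : ℕ) : (b + 1).choose 2 = b.choose 2 + b := by
  show (b + 1).choose (1 + 1) = b.choose 2 + b
  rw [Nat.choose_succ_succ, Nat.choose_one_right]
  exact Nat.add_comm _ _

lemma enc_lt {m a b : ℕ} (hab : a < b) (hbm : b < m) : a + b.choose 2 < m.choose 2 := by
  have h1 : a + b.choose 2 < (b + 1).choose 2 := by rw [choose2_succ]; omega
  have h2 : (b + 1).choose 2 ≤ m.choose 2 := Nat.choose_le_choose 2 (by omega)
  omega

lemma enc_inj {a b a' b' : ℕ} (h : a < b) (h' : a' < b')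
    (he : a + b.choose 2 = a' + b'.choose 2) : a = a' ∧ b = b' := by
  rcases lt_trichotomy b b' with hb | hb | hb
  · have : a + b.choose 2 < b'.choose 2 := by
      have := enc_lt h hb
      omega
    omega
  · subst hb
    exact ⟨by omega, rfl⟩
  · have : a' + b'.choose 2 < b.choose 2 := by
      have := enc_lt h' hb
      omega
    omega

lemma enc_decode {m : ℕ} : ∀ g, g < m.choose 2 → ∃ a b, a < b ∧ b < m ∧ g = a + b.choose 2 := by
  induction m with
  | zero => intro g hg; simp at hg
  | succ m ih =>
    intro g hg
    rw [choose2_succ] at hg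
    by_cases h : g < m.choose 2
    · obtain ⟨a, b, h1, h2, h3⟩ := ih g h
      exact ⟨a, b, h1, by omega, h3⟩
    · refine ⟨g - m.choose 2, m, by omega, by omega, by omega⟩

lemma two_mul_choose2 (j : ℕ) : 2 * j.choose 2 = j * (j - 1) := by
  induction j with
  | zero => simp
  | succ j ih =>
    rw [choose2_succ]
    cases j with
    | zero => simp
    | succ i =>
      rw [Nat.mul_add, ih]
      simp only [Nat.succ_sub_one]
      ring


section CaseA

def isHub (n k : ℕ) (w : Fin n) : Prop := (w : ℕ) < k - 1
def isB (n k m : ℕ) (w : Fin n) : Prop := k - 1 ≤ (w : ℕ) ∧ (w : ℕ) < k - 1 + m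
def isX (n k m : ℕ) (w : Fin n) : Prop := k - 1 + m ≤ (w : ℕ)

def pairIdx (m g a b : ℕ) : Prop :=
  a < b ∧ b < m ∧ (g = a + b.choose 2 ∨ (m.choose 2 ≤ g ∧ a = 0 ∧ b = 1))

/-- The case-A digraph: a hub of `k-1` universal digon vertices, `m` special
vertices joined pairwise by digons, and gadget vertices each with two single
out-arcs to a pair of special vertices. -/
def DA (n k m : ℕ) : Fin n → Fin n → Prop := fun u v =>
  u ≠ v ∧ (isHub n k u ∨ isHub n k v ∨ (isB n k m u ∧ isB n k m v) ∨
    (isX n k m u ∧ ∃ a b : ℕ, pairIdx m ((u : ℕ) - (k - 1 + m)) a b ∧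
      ((v : ℕ) = k - 1 + a ∨ (v : ℕ) = k - 1 + b)))

lemma pairIdx_total {m : ℕ} (hm : 2 ≤ m) (g : ℕ) : ∃ a b, pairIdx m g a b := by
  by_cases h : g < m.choose 2
  · obtain ⟨a, b, h1, h2, h3⟩ := enc_decode g h
    exact ⟨a, b, h1, h2, Or.inl h3⟩
  · exact ⟨0, 1, by omega, by omega, Or.inr ⟨by omega, rfl, rfl⟩⟩

lemma pairIdx_func {m g a b a' b' : ℕ} (h : pairIdx m g a b) (h' : pairIdx m g a' b') :
    a = a' ∧ b = b' := by
  obtain ⟨h1, h2, h3⟩ := h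
  obtain ⟨h1', h2', h3'⟩ := h'
  rcases h3 with h3 | ⟨h3, rfl, rfl⟩ <;> rcases h3' with h3' | ⟨h3', he1, he2⟩
  · exact enc_inj h1 h1' (by omega)
  · exact absurd (enc_lt h1 h2) (by omega)
  · exact absurd (enc_lt h1' h2') (by omega)
  · exact ⟨he1.symm, he2.symm⟩

lemma DA_irrefl (n k m : ℕ) (v : Fin n) : ¬ DA n k m v v := fun h => h.1 rfl

lemma DA_hub_digon {n k m : ℕ} {u v : Fin n} (h : isHub n k u ∨ isHub n k v) (hne : u ≠ v) :
    DA n k m u v ∧ DA n k m v u :=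
  ⟨⟨hne, by tauto⟩, ⟨hne.symm, by tauto⟩⟩

/-- the key forcing lemma: in a `k`-arc-strong inversion of `DA`, the two single arcs of any
gadget must have opposite flip parities. -/
lemma forceA {n k m : ℕ} (hk : 0 < k) (hm : 2 ≤ m)
    (hroom : k - 1 + m + m.choose 2 ≤ n)
    {Xs : List (Set (Fin n))} (hAS : kArcStrong (dinvFam (DA n k m) Xs) k)
    {a b : ℕ} (hab : a < b) (hbm : b < m)
    {x va vb : Fin n}
    (hx : (x : ℕ) = k - 1 + m + (a + b.choose 2))
    (hva : (va : ℕ) = k - 1 + a) (hvb : (vb : ℕ) = k - 1 + b) :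
    ¬ (Odd (pcnt Xs x va) ↔ Odd (pcnt Xs x vb)) := by
  have henc : a + b.choose 2 < m.choose 2 := enc_lt hab hbm
  have hxX : isX n k m x := by unfold isX; omega
  have hpi : pairIdx m ((x : ℕ) - (k - 1 + m)) a b := by
    refine ⟨hab, hbm, Or.inl ?_⟩
    omega
  have hvax : va ≠ x := Fin.ne_of_val_ne (by omega)
  have hvbx : vb ≠ x := Fin.ne_of_val_ne (by omega)
  -- arcs from the gadget to its two targets
  have hDxva : DA n k m x va :=
    ⟨hvax.symm, Or.inr (Or.inr (Or.inr ⟨hxX, a, b, hpi, Or.inl hva⟩))⟩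
  have hDxvb : DA n k m x vb :=
    ⟨hvbx.symm, Or.inr (Or.inr (Or.inr ⟨hxX, a, b, hpi, Or.inr hvb⟩))⟩
  -- no arcs back
  have hnoback : ∀ w : Fin n, ¬ isHub n k w → ¬ DA n k m w x := by
    rintro w hw ⟨hne, hcase⟩
    rcases hcase with h | h | h | h
    · exact hw h
    · unfold isHub at h; omega
    · obtain ⟨_, hBx⟩ := h
      unfold isB at hBx; omega
    · obtain ⟨hXw, a', b', hpi', hval⟩ := h
      obtain ⟨h1', h2', _⟩ := hpi'
      rcases hval with hval | hval <;> omega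
  have hnava : ¬ DA n k m va x := hnoback va (by unfold isHub; omega)
  have hnavb : ¬ DA n k m vb x := hnoback vb (by unfold isHub; omega)
  -- no other incident arcs at the gadget
  have hnone : ∀ u : Fin n, ¬ isHub n k u → u ≠ va → u ≠ vb → u ≠ x →
      ¬ DA n k m x u ∧ ¬ DA n k m u x := by
    intro u hu h1 h2 h3
    constructor
    · rintro ⟨hne, hcase⟩
      rcases hcase with h | h | h | h
      · unfold isHub at h; omega
      · exact hu h
      · obtain ⟨hBx, _⟩ := h
        unfold isB at hBx; omega
      · obtain ⟨_, a', b', hpi', hval⟩ := h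
        obtain ⟨haa, hbb⟩ := pairIdx_func hpi' hpi
        subst haa; subst hbb
        rcases hval with hval | hval
        · exact h1 (Fin.val_injective (by omega))
        · exact h2 (Fin.val_injective (by omega))
    · exact hnoback u hu
  have hubne : ∀ u : Fin n, isHub n k u → u ≠ x := by
    intro u hu
    unfold isHub at hu
    exact Fin.ne_of_val_ne (by omega)
  have hhubcard : {u : Fin n | isHub n k u}.ncard = k - 1 := by
    have : {u : Fin n | isHub n k u} = {w : Fin n | (w : ℕ) < k - 1} := rfl
    rw [this]
    exact ncard_val_lt n (k - 1) (by omega)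
  set D' := dinvFam (DA n k m) Xs with hD'
  intro hiff
  by_cases hodd : Odd (pcnt Xs x va)
  · -- both arcs flipped: the gadget has out-neighbourhood exactly the hub
    have hodd' : Odd (pcnt Xs x vb) := hiff.mp hodd
    have hset : {u : Fin n | D' x u ∧ u ≠ x} = {u : Fin n | isHub n k u} := by
      ext u
      constructor
      · rintro ⟨hDu, hne⟩
        by_contra hH
        by_cases h1 : u = va
        · subst h1
          rw [hD', dinvFam_fwd hDxva hnava] at hDu
          exact hDu hodd
        · by_cases h2 : u = vb
          · subst h2
            rw [hD', dinvFam_fwd hDxvb hnavb] at hDu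
            exact hDu hodd'
          · exact dinvFam_not_of_none (hnone u hH h1 h2 hne).1 (hnone u hH h1 h2 hne).2 hDu
      · intro hH
        have hd := DA_hub_digon (m := m) (Or.inr hH) ((hubne u hH).symm)
        exact ⟨dinvFam_of_both hd.1 hd.2, hubne u hH⟩
    have hcut : outCut D' {x} = k - 1 := by
      rw [outCut_singleton, hset, hhubcard]
    have := hAS {x} ⟨x, rfl⟩ (by
      intro hc
      have : va ∈ ({x} : Set (Fin n)) := hc ▸ Set.mem_univ va
      exact hvax this)
    omega
  · -- both arcs unflipped: the gadget has in-neighbourhood exactly the hub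
    have hodd' : ¬ Odd (pcnt Xs x vb) := fun h => hodd (hiff.mpr h)
    have hset : {u : Fin n | D' u x ∧ u ≠ x} = {u : Fin n | isHub n k u} := by
      ext u
      constructor
      · rintro ⟨hDu, hne⟩
        by_contra hH
        by_cases h1 : u = va
        · subst h1
          rw [hD', dinvFam_bwd hDxva hnava] at hDu
          exact hodd hDu
        · by_cases h2 : u = vb
          · subst h2
            rw [hD', dinvFam_bwd hDxvb hnavb] at hDu
            exact hodd' hDu
          · exact dinvFam_not_of_none (hnone u hH h1 h2 hne).2 (hnone u hH h1 h2 hne).1 hDu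
      · intro hH
        have hd := DA_hub_digon (m := m) (Or.inr hH) ((hubne u hH).symm)
        exact ⟨dinvFam_of_both hd.2 hd.1, hubne u hH⟩
    have hcut : outCut D' (Set.univ \ {x}) = k - 1 := by
      rw [outCut_compl_singleton, hset, hhubcard]
    have hne1 : (Set.univ \ {x} : Set (Fin n)).Nonempty := ⟨va, ⟨trivial, hvax⟩⟩
    have hne2 : (Set.univ \ {x} : Set (Fin n)) ≠ Set.univ := by
      intro hc
      have : x ∈ (Set.univ \ {x} : Set (Fin n)) := by rw [hc]; trivial
      exact this.2 rfl
    have := hAS (Set.univ \ {x}) hne1 hne2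
    omega


lemma cardA {n k m : ℕ} (hk : 0 < k) (hm : 2 ≤ m)
    (hroom : k - 1 + m + m.choose 2 ≤ n)
    {Xs : List (Set (Fin n))} (hAS : kArcStrong (dinvFam (DA n k m) Xs) k) :
    m ≤ 2 ^ Xs.length := by
  have hbound : ∀ a : ℕ, a < m → k - 1 + a < n := by intro a ha; omega
  let P : Fin n → (Fin Xs.length → Bool) := fun v i => decide (v ∈ Xs.get i)
  have key : ∀ (a b : ℕ) (ha : a < b) (hb : b < m),
      P ⟨k - 1 + a, hbound a (by omega)⟩ ≠ P ⟨k - 1 + b, hbound b hb⟩ := by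
    intro a b hab hbm heq
    have henc : a + b.choose 2 < m.choose 2 := enc_lt hab hbm
    have hxlt : k - 1 + m + (a + b.choose 2) < n := by omega
    have hmem : ∀ X ∈ Xs,
        ((⟨k - 1 + a, hbound a (by omega)⟩ : Fin n) ∈ X ↔
         (⟨k - 1 + b, hbound b hbm⟩ : Fin n) ∈ X) := by
      intro X hX
      obtain ⟨i, hi⟩ := List.mem_iff_get.mp hX
      have hfi := congrFun heq i
      simp only [P] at hfi
      rw [← hi]
      exact decide_eq_decide.mp hfi
    have hpc := pcnt_congr hmem (⟨k - 1 + m + (a + b.choose 2), hxlt⟩ : Fin n)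
    exact forceA hk hm hroom hAS hab hbm
      (x := ⟨k - 1 + m + (a + b.choose 2), hxlt⟩)
      (va := ⟨k - 1 + a, hbound a (by omega)⟩)
      (vb := ⟨k - 1 + b, hbound b hbm⟩)
      rfl rfl rfl (by rw [hpc])
  have hinj : Function.Injective
      (fun a : Fin m => P ⟨k - 1 + (a : ℕ), hbound _ a.isLt⟩) := by
    intro a b heq
    by_contra hne
    have hne' : (a : ℕ) ≠ (b : ℕ) := fun h => hne (Fin.val_injective h)
    rcases Nat.lt_or_ge (a : ℕ) (b : ℕ) with h | h
    · exact key _ _ h b.isLt heq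
    · exact key _ _ (by omega) a.isLt heq.symm
  calc m = Fintype.card (Fin m) := (Fintype.card_fin m).symm
    _ ≤ Fintype.card (Fin Xs.length → Bool) := Fintype.card_le_of_injective _ hinj
    _ = 2 ^ Xs.length := by simp

lemma edgeConnA {n k m : ℕ} (hk : 0 < k) (hm : 2 ≤ m)
    (hroom : k - 1 + m + m.choose 2 ≤ n) :
    edgeConn (DA n k m) (2 * k) := by
  intro S hS hSU
  obtain ⟨s0, hs0⟩ := hS
  obtain ⟨w0, hw0⟩ := (Set.ne_univ_iff_exists_notMem S).mp hSU
  set C : Set (Fin n) := {w : Fin n | (w : ℕ) < k - 1 + m} with hC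
  have hCcard : C.ncard = k - 1 + m := ncard_val_lt n (k - 1 + m) (by omega)
  have harc : ∀ u v : Fin n, (u : ℕ) < k - 1 + m → (v : ℕ) < k - 1 + m → u ≠ v →
      DA n k m u v := by
    intro u v hu hv hne
    refine ⟨hne, ?_⟩
    by_cases h1 : isHub n k u
    · exact Or.inl h1
    · by_cases h2 : isHub n k v
      · exact Or.inr (Or.inl h2)
      · refine Or.inr (Or.inr (Or.inl ⟨⟨?_, hu⟩, ⟨?_, hv⟩⟩)) <;>
          · unfold isHub at *; omega
  set Hb : Set (Fin n) := {w : Fin n | (w : ℕ) < k - 1} with hHb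
  have hHbcard : Hb.ncard = k - 1 := ncard_val_lt n (k - 1) (by omega)
  by_cases hCS : (C ∩ S).Nonempty
  · by_cases hCS' : (C \ S).Nonempty
    · -- both sides meet the digon-complete core
      obtain ⟨u0, hu0C, hu0S⟩ := hCS
      obtain ⟨v0, hv0C, hv0S⟩ := hCS'
      have hu0C' : (u0 : ℕ) < k - 1 + m := hu0C
      have hv0C' : (v0 : ℕ) < k - 1 + m := hv0C
      set A1 : Set (Fin n × Fin n) := (fun w => (u0, w)) '' (C \ S) with hA1
      set A2 : Set (Fin n × Fin n) := (fun u => (u, v0)) '' (C ∩ S) with hA2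
      have hinj1 : Function.Injective (fun w : Fin n => (u0, w)) := by
        intro a b h; simpa using h
      have hinj2 : Function.Injective (fun u : Fin n => (u, v0)) := by
        intro a b h; simpa using h
      have hcard1 : A1.ncard = (C \ S).ncard := Set.ncard_image_of_injective _ hinj1
      have hcard2 : A2.ncard = (C ∩ S).ncard := Set.ncard_image_of_injective _ hinj2
      have hunion : A1.ncard + A2.ncard ≤ (A1 ∪ A2).ncard + 1 := by
        have h1 := Set.ncard_union_add_ncard_inter A1 A2 (Set.toFinite _) (Set.toFinite _)
        have h2 : (A1 ∩ A2).ncard ≤ 1 := by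
          have hsub : A1 ∩ A2 ⊆ {(u0, v0)} := by
            rintro ⟨p, q⟩ ⟨⟨w, _, hw2⟩, ⟨u, _, hu2⟩⟩
            have h1' : u0 = p := congrArg Prod.fst hw2
            have h2' : v0 = q := congrArg Prod.snd hu2
            rw [Set.mem_singleton_iff]
            rw [Prod.ext_iff]
            exact ⟨h1'.symm, h2'.symm⟩
          calc (A1 ∩ A2).ncard ≤ ({(u0, v0)} : Set (Fin n × Fin n)).ncard :=
                Set.ncard_le_ncard hsub (Set.toFinite _)
            _ = 1 := Set.ncard_singleton _
        omega
      have hdisj : Disjoint (C ∩ S) (C \ S) :=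
        Set.disjoint_left.mpr (fun w hw1 hw2 => hw2.2 hw1.2)
      have hsum : (C ∩ S).ncard + (C \ S).ncard = k - 1 + m := by
        rw [← hCcard, ← Set.ncard_union_eq hdisj (Set.toFinite _) (Set.toFinite _)]
        congr 1
        ext w
        constructor
        · rintro (⟨h, _⟩ | ⟨h, _⟩) <;> exact h
        · intro hw
          by_cases h : w ∈ S
          · exact Or.inl ⟨hw, h⟩
          · exact Or.inr ⟨hw, h⟩
      have hsub1 : A1 ∪ A2 ⊆ {p : Fin n × Fin n | p.1 ∈ S ∧ p.2 ∉ S ∧ DA n k m p.1 p.2} := by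
        rintro _ (⟨w, ⟨hwC, hwS⟩, rfl⟩ | ⟨u, ⟨huC, huS⟩, rfl⟩)
        · have hne : u0 ≠ w := by rintro rfl; exact hwS hu0S
          exact ⟨hu0S, hwS, harc _ _ hu0C' hwC hne⟩
        · have hne : u ≠ v0 := by rintro rfl; exact hv0S huS
          exact ⟨huS, hv0S, harc _ _ huC hv0C' hne⟩
      have hsub2 : A1 ∪ A2 ⊆ {p : Fin n × Fin n | p.1 ∈ S ∧ p.2 ∉ S ∧
          (fun a b => DA n k m b a) p.1 p.2} := by
        rintro _ (⟨w, ⟨hwC, hwS⟩, rfl⟩ | ⟨u, ⟨huC, huS⟩, rfl⟩)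
        · have hne : w ≠ u0 := by rintro rfl; exact hwS hu0S
          exact ⟨hu0S, hwS, harc _ _ hwC hu0C' hne⟩
        · have hne : v0 ≠ u := by rintro rfl; exact hv0S huS
          exact ⟨huS, hv0S, harc _ _ hv0C' huC hne⟩
      have hb1 : (A1 ∪ A2).ncard ≤ outCut (DA n k m) S := ncard_le_outCut hsub1
      have hb2 : (A1 ∪ A2).ncard ≤ outCut (fun a b => DA n k m b a) S :=
        ncard_le_outCut hsub2
      have hm1 : 0 < (C ∩ S).ncard := (Set.ncard_pos (Set.toFinite _)).mpr ⟨u0, hu0C, hu0S⟩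
      have hm2 : 0 < (C \ S).ncard := (Set.ncard_pos (Set.toFinite _)).mpr ⟨v0, hv0C, hv0S⟩
      omega
    · -- the whole core is inside S; pick a gadget vertex outside
      have hCsub : C ⊆ S := by
        intro w hw
        by_contra hc
        exact hCS' ⟨w, hw, hc⟩
      have hw0X : k - 1 + m ≤ (w0 : ℕ) := by
        by_contra hc
        exact hw0 (hCsub (show (w0 : ℕ) < k - 1 + m by omega))
      obtain ⟨a, b, hpi⟩ := pairIdx_total hm ((w0 : ℕ) - (k - 1 + m))
      have hab := hpi.1
      have hbm := hpi.2.1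
      obtain ⟨va, hvaval⟩ : ∃ va : Fin n, (va : ℕ) = k - 1 + a := ⟨⟨k - 1 + a, by omega⟩, rfl⟩
      obtain ⟨vb, hvbval⟩ : ∃ vb : Fin n, (vb : ℕ) = k - 1 + b := ⟨⟨k - 1 + b, by omega⟩, rfl⟩
      have hvaC : va ∈ C := show (va : ℕ) < k - 1 + m by omega
      have hvbC : vb ∈ C := show (vb : ℕ) < k - 1 + m by omega
      have hDwa : DA n k m w0 va :=
        ⟨Fin.ne_of_val_ne (by omega), Or.inr (Or.inr (Or.inr
          ⟨hw0X, a, b, hpi, Or.inl hvaval⟩))⟩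
      have hDwb : DA n k m w0 vb :=
        ⟨Fin.ne_of_val_ne (by omega), Or.inr (Or.inr (Or.inr
          ⟨hw0X, a, b, hpi, Or.inr hvbval⟩))⟩
      have hHbS : ∀ h ∈ Hb, h ∈ S := by
        intro h hh
        have : (h : ℕ) < k - 1 := hh
        exact hCsub (show (h : ℕ) < k - 1 + m by omega)
      have hsub1 : (fun h => (h, w0)) '' Hb ⊆
          {p : Fin n × Fin n | p.1 ∈ S ∧ p.2 ∉ S ∧ DA n k m p.1 p.2} := by
        rintro _ ⟨u, hu, rfl⟩
        have hu' : (u : ℕ) < k - 1 := hu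
        have hne : u ≠ w0 := Fin.ne_of_val_ne (by omega)
        exact ⟨hHbS u hu, hw0, (DA_hub_digon (m := m) (Or.inl hu') hne).1⟩
      have hsub2 : (fun u => (u, w0)) '' (insert va (insert vb Hb)) ⊆
          {p : Fin n × Fin n | p.1 ∈ S ∧ p.2 ∉ S ∧ (fun a b => DA n k m b a) p.1 p.2} := by
        rintro _ ⟨u, hu, rfl⟩
        rcases hu with rfl | rfl | hu
        · exact ⟨hCsub hvaC, hw0, hDwa⟩
        · exact ⟨hCsub hvbC, hw0, hDwb⟩
        · have hu' : (u : ℕ) < k - 1 := hu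
          have hne : w0 ≠ u := Fin.ne_of_val_ne (by omega)
          exact ⟨hHbS u hu, hw0, (DA_hub_digon (m := m) (Or.inr hu') hne).1⟩
      have hic : (insert va (insert vb Hb)).ncard = k + 1 := by
        have h1 : vb ∉ Hb := by
          show ¬ (vb : ℕ) < k - 1
          omega
        have h2 : va ∉ insert vb Hb := by
          rintro (h | h)
          · exact absurd (congrArg Fin.val h) (by omega)
          · exact absurd (show (va : ℕ) < k - 1 from h) (by omega)
        rw [Set.ncard_insert_of_notMem h2 (Set.toFinite _),
          Set.ncard_insert_of_notMem h1 (Set.toFinite _), hHbcard]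
        omega
      have hinj : Function.Injective (fun u : Fin n => (u, w0)) := by
        intro p q h; simpa using h
      have hb1 : k - 1 ≤ outCut (DA n k m) S := by
        have := ncard_le_outCut hsub1
        rwa [Set.ncard_image_of_injective _ hinj, hHbcard] at this
      have hb2 : k + 1 ≤ outCut (fun a b => DA n k m b a) S := by
        have h0 : ((fun u => (u, w0)) '' (insert va (insert vb Hb))).ncard ≤
            outCut (fun a b => DA n k m b a) S := ncard_le_outCut hsub2
        rwa [Set.ncard_image_of_injective _ hinj, hic] at h0
      omega
  · -- the core misses S entirely; S consists of gadget vertices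
    have hCS' : ∀ w : Fin n, w ∈ C → w ∉ S := by
      intro w hw hc
      exact hCS ⟨w, hw, hc⟩
    have hs0X : k - 1 + m ≤ (s0 : ℕ) := by
      by_contra hc
      exact hCS' s0 (show (s0 : ℕ) < k - 1 + m by omega) hs0
    obtain ⟨a, b, hpi⟩ := pairIdx_total hm ((s0 : ℕ) - (k - 1 + m))
    have hab := hpi.1
    have hbm := hpi.2.1
    obtain ⟨va, hvaval⟩ : ∃ va : Fin n, (va : ℕ) = k - 1 + a := ⟨⟨k - 1 + a, by omega⟩, rfl⟩
    obtain ⟨vb, hvbval⟩ : ∃ vb : Fin n, (vb : ℕ) = k - 1 + b := ⟨⟨k - 1 + b, by omega⟩, rfl⟩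
    have hvaC : va ∈ C := show (va : ℕ) < k - 1 + m by omega
    have hvbC : vb ∈ C := show (vb : ℕ) < k - 1 + m by omega
    have hDsa : DA n k m s0 va :=
      ⟨Fin.ne_of_val_ne (by omega), Or.inr (Or.inr (Or.inr
        ⟨hs0X, a, b, hpi, Or.inl hvaval⟩))⟩
    have hDsb : DA n k m s0 vb :=
      ⟨Fin.ne_of_val_ne (by omega), Or.inr (Or.inr (Or.inr
        ⟨hs0X, a, b, hpi, Or.inr hvbval⟩))⟩
    have hHbnS : ∀ h ∈ Hb, h ∉ S := by
      intro h hh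
      have : (h : ℕ) < k - 1 := hh
      exact hCS' h (show (h : ℕ) < k - 1 + m by omega)
    have hsub1 : (fun u => (s0, u)) '' (insert va (insert vb Hb)) ⊆
        {p : Fin n × Fin n | p.1 ∈ S ∧ p.2 ∉ S ∧ DA n k m p.1 p.2} := by
      rintro _ ⟨u, hu, rfl⟩
      rcases hu with rfl | rfl | hu
      · exact ⟨hs0, hCS' _ hvaC, hDsa⟩
      · exact ⟨hs0, hCS' _ hvbC, hDsb⟩
      · have hu' : (u : ℕ) < k - 1 := hu
        have hne : s0 ≠ u := Fin.ne_of_val_ne (by omega)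
        exact ⟨hs0, hHbnS u hu, (DA_hub_digon (m := m) (Or.inr hu') hne).1⟩
    have hsub2 : (fun u => (s0, u)) '' Hb ⊆
        {p : Fin n × Fin n | p.1 ∈ S ∧ p.2 ∉ S ∧ (fun a b => DA n k m b a) p.1 p.2} := by
      rintro _ ⟨u, hu, rfl⟩
      have hu' : (u : ℕ) < k - 1 := hu
      have hne : u ≠ s0 := Fin.ne_of_val_ne (by omega)
      exact ⟨hs0, hHbnS u hu, (DA_hub_digon (m := m) (Or.inl hu') hne).1⟩
    have hic : (insert va (insert vb Hb)).ncard = k + 1 := by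
      have h1 : vb ∉ Hb := by
        show ¬ (vb : ℕ) < k - 1
        omega
      have h2 : va ∉ insert vb Hb := by
        rintro (h | h)
        · exact absurd (congrArg Fin.val h) (by omega)
        · exact absurd (show (va : ℕ) < k - 1 from h) (by omega)
      rw [Set.ncard_insert_of_notMem h2 (Set.toFinite _),
        Set.ncard_insert_of_notMem h1 (Set.toFinite _), hHbcard]
      omega
    have hinj : Function.Injective (fun u : Fin n => (s0, u)) := by
      intro p q h; simpa using h
    have hb1 : k + 1 ≤ outCut (DA n k m) S := by
      have := ncard_le_outCut hsub1
      rwa [Set.ncard_image_of_injective _ hinj, hic] at this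
    have hb2 : k - 1 ≤ outCut (fun a b => DA n k m b a) S := by
      have h0 : ((fun u => (s0, u)) '' Hb).ncard ≤
          outCut (fun a b => DA n k m b a) S := ncard_le_outCut hsub2
      rwa [Set.ncard_image_of_injective _ hinj, hHbcard] at h0
    omega

end CaseA

section Gadget

/-- general out-gadget forcing: a vertex `w` whose incident arcs are digons to the hub
together with single out-arcs to `s1`, `s2` must have exactly one of them flipped. -/
lemma force_gadget_out {n k : ℕ} {D : Fin n → Fin n → Prop} (hk : 0 < k)
    {Xs : List (Set (Fin n))} (hAS : kArcStrong (dinvFam D Xs) k)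
    {w s1 s2 : Fin n} (h1w : s1 ≠ w)
    (hhubcard : {u : Fin n | isHub n k u}.ncard = k - 1)
    (hhub : ∀ u : Fin n, isHub n k u → u ≠ w ∧ D w u ∧ D u w)
    (hD1 : D w s1) (hD2 : D w s2) (hn1 : ¬ D s1 w) (hn2 : ¬ D s2 w)
    (hnone : ∀ u : Fin n, ¬ isHub n k u → u ≠ s1 → u ≠ s2 → u ≠ w →
      ¬ D w u ∧ ¬ D u w) :
    ¬ (Odd (pcnt Xs w s1) ↔ Odd (pcnt Xs w s2)) := by
  set D' := dinvFam D Xs with hD'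
  intro hiff
  by_cases hodd : Odd (pcnt Xs w s1)
  · have hodd' : Odd (pcnt Xs w s2) := hiff.mp hodd
    have hset : {u : Fin n | D' w u ∧ u ≠ w} = {u : Fin n | isHub n k u} := by
      ext u
      constructor
      · rintro ⟨hDu, hne⟩
        by_contra hH
        by_cases h1 : u = s1
        · subst h1
          rw [hD', dinvFam_fwd hD1 hn1] at hDu
          exact hDu hodd
        · by_cases h2 : u = s2
          · subst h2
            rw [hD', dinvFam_fwd hD2 hn2] at hDu
            exact hDu hodd'
          · exact dinvFam_not_of_none (hnone u hH h1 h2 hne).1 (hnone u hH h1 h2 hne).2 hDu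
      · intro hH
        obtain ⟨hne, hd1, hd2⟩ := hhub u hH
        exact ⟨dinvFam_of_both hd1 hd2, hne⟩
    have hcut : outCut D' {w} = k - 1 := by
      rw [outCut_singleton, hset, hhubcard]
    have := hAS {w} ⟨w, rfl⟩ (by
      intro hc
      have : s1 ∈ ({w} : Set (Fin n)) := by rw [hc]; trivial
      exact h1w this)
    omega
  · have hodd' : ¬ Odd (pcnt Xs w s2) := fun h => hodd (hiff.mpr h)
    have hset : {u : Fin n | D' u w ∧ u ≠ w} = {u : Fin n | isHub n k u} := by
      ext u
      constructor
      · rintro ⟨hDu, hne⟩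
        by_contra hH
        by_cases h1 : u = s1
        · subst h1
          rw [hD', dinvFam_bwd hD1 hn1] at hDu
          exact hodd hDu
        · by_cases h2 : u = s2
          · subst h2
            rw [hD', dinvFam_bwd hD2 hn2] at hDu
            exact hodd' hDu
          · exact dinvFam_not_of_none (hnone u hH h1 h2 hne).2 (hnone u hH h1 h2 hne).1 hDu
      · intro hH
        obtain ⟨hne, hd1, hd2⟩ := hhub u hH
        exact ⟨dinvFam_of_both hd2 hd1, hne⟩
    have hcut : outCut D' (Set.univ \ {w}) = k - 1 := by
      rw [outCut_compl_singleton, hset, hhubcard]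
    have hne1 : (Set.univ \ {w} : Set (Fin n)).Nonempty := ⟨s1, ⟨trivial, h1w⟩⟩
    have hne2 : (Set.univ \ {w} : Set (Fin n)) ≠ Set.univ := by
      intro hc
      have : w ∈ (Set.univ \ {w} : Set (Fin n)) := by rw [hc]; trivial
      exact this.2 rfl
    have := hAS (Set.univ \ {w}) hne1 hne2
    omega

/-- general in-gadget forcing: a vertex `w` whose incident arcs are digons to the hub
together with single in-arcs from `s1`, `s2` must have exactly one of them flipped. -/
lemma force_gadget_in {n k : ℕ} {D : Fin n → Fin n → Prop} (hk : 0 < k)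
    {Xs : List (Set (Fin n))} (hAS : kArcStrong (dinvFam D Xs) k)
    {w s1 s2 : Fin n} (h1w : s1 ≠ w)
    (hhubcard : {u : Fin n | isHub n k u}.ncard = k - 1)
    (hhub : ∀ u : Fin n, isHub n k u → u ≠ w ∧ D w u ∧ D u w)
    (hD1 : D s1 w) (hD2 : D s2 w) (hn1 : ¬ D w s1) (hn2 : ¬ D w s2)
    (hnone : ∀ u : Fin n, ¬ isHub n k u → u ≠ s1 → u ≠ s2 → u ≠ w →
      ¬ D w u ∧ ¬ D u w) :
    ¬ (Odd (pcnt Xs w s1) ↔ Odd (pcnt Xs w s2)) := by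
  set D' := dinvFam D Xs with hD'
  intro hiff
  by_cases hodd : Odd (pcnt Xs w s1)
  · -- both in-arcs flipped : w has in-neighbourhood exactly the hub
    have hodd' : Odd (pcnt Xs w s2) := hiff.mp hodd
    have hset : {u : Fin n | D' u w ∧ u ≠ w} = {u : Fin n | isHub n k u} := by
      ext u
      constructor
      · rintro ⟨hDu, hne⟩
        by_contra hH
        by_cases h1 : u = s1
        · subst h1
          rw [hD', dinvFam_fwd hD1 hn1] at hDu
          exact hDu (by rwa [pcnt_symm] at hodd)
        · by_cases h2 : u = s2
          · subst h2
            rw [hD', dinvFam_fwd hD2 hn2] at hDu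
            exact hDu (by rwa [pcnt_symm] at hodd')
          · exact dinvFam_not_of_none (hnone u hH h1 h2 hne).2 (hnone u hH h1 h2 hne).1 hDu
      · intro hH
        obtain ⟨hne, hd1, hd2⟩ := hhub u hH
        exact ⟨dinvFam_of_both hd2 hd1, hne⟩
    have hcut : outCut D' (Set.univ \ {w}) = k - 1 := by
      rw [outCut_compl_singleton, hset, hhubcard]
    have hne1 : (Set.univ \ {w} : Set (Fin n)).Nonempty := ⟨s1, ⟨trivial, h1w⟩⟩
    have hne2 : (Set.univ \ {w} : Set (Fin n)) ≠ Set.univ := by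
      intro hc
      have : w ∈ (Set.univ \ {w} : Set (Fin n)) := by rw [hc]; trivial
      exact this.2 rfl
    have := hAS (Set.univ \ {w}) hne1 hne2
    omega
  · -- both in-arcs unflipped : w has out-neighbourhood exactly the hub
    have hodd' : ¬ Odd (pcnt Xs w s2) := fun h => hodd (hiff.mpr h)
    have hset : {u : Fin n | D' w u ∧ u ≠ w} = {u : Fin n | isHub n k u} := by
      ext u
      constructor
      · rintro ⟨hDu, hne⟩
        by_contra hH
        by_cases h1 : u = s1
        · subst h1
          rw [hD', dinvFam_bwd hD1 hn1] at hDu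
          exact hodd (by rwa [pcnt_symm] at hDu)
        · by_cases h2 : u = s2
          · subst h2
            rw [hD', dinvFam_bwd hD2 hn2] at hDu
            exact hodd' (by rwa [pcnt_symm] at hDu)
          · exact dinvFam_not_of_none (hnone u hH h1 h2 hne).1 (hnone u hH h1 h2 hne).2 hDu
      · intro hH
        obtain ⟨hne, hd1, hd2⟩ := hhub u hH
        exact ⟨dinvFam_of_both hd1 hd2, hne⟩
    have hcut : outCut D' {w} = k - 1 := by
      rw [outCut_singleton, hset, hhubcard]
    have := hAS {w} ⟨w, rfl⟩ (by
      intro hc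
      have : s1 ∈ ({w} : Set (Fin n)) := by rw [hc]; trivial
      exact h1w this)
    omega

end Gadget

section CaseB

/-- case B digraph (`n = k + 4`): hub of `k-1` universal digon vertices together with a
pentagon gadget on the five remaining vertices. -/
def DB (n k : ℕ) : Fin n → Fin n → Prop := fun u v =>
  u ≠ v ∧ (isHub n k u ∨ isHub n k v ∨
    (((u : ℕ) = k + 2 ∧ (v : ℕ) = k - 1) ∨ ((u : ℕ) = k + 2 ∧ (v : ℕ) = k) ∨
     ((u : ℕ) = k + 3 ∧ (v : ℕ) = k - 1) ∨ ((u : ℕ) = k + 3 ∧ (v : ℕ) = k + 1) ∨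
     ((u : ℕ) = k ∧ (v : ℕ) = k + 1)))

lemma DB_irrefl (n k : ℕ) (v : Fin n) : ¬ DB n k v v := fun h => h.1 rfl

lemma DB_hub_digon {n k : ℕ} {u v : Fin n} (h : isHub n k u ∨ isHub n k v) (hne : u ≠ v) :
    DB n k u v ∧ DB n k v u :=
  ⟨⟨hne, by tauto⟩, ⟨hne.symm, by tauto⟩⟩

lemma caseB_bound {n k : ℕ} (hk : 0 < k) (hn4 : n = k + 4)
    {Xs : List (Set (Fin n))} (hAS : kArcStrong (dinvFam (DB n k) Xs) k) :
    2 ≤ Xs.length := by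
  obtain ⟨v1, hv1⟩ : ∃ w : Fin n, (w : ℕ) = k - 1 := ⟨⟨k - 1, by omega⟩, rfl⟩
  obtain ⟨v2, hv2⟩ : ∃ w : Fin n, (w : ℕ) = k := ⟨⟨k, by omega⟩, rfl⟩
  obtain ⟨v3, hv3⟩ : ∃ w : Fin n, (w : ℕ) = k + 1 := ⟨⟨k + 1, by omega⟩, rfl⟩
  obtain ⟨x1, hx1⟩ : ∃ w : Fin n, (w : ℕ) = k + 2 := ⟨⟨k + 2, by omega⟩, rfl⟩
  obtain ⟨x2, hx2⟩ : ∃ w : Fin n, (w : ℕ) = k + 3 := ⟨⟨k + 3, by omega⟩, rfl⟩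
  have hhubcard : {u : Fin n | isHub n k u}.ncard = k - 1 := by
    have : {u : Fin n | isHub n k u} = {w : Fin n | (w : ℕ) < k - 1} := rfl
    rw [this]
    exact ncard_val_lt n (k - 1) (by omega)
  have hubval : ∀ u : Fin n, isHub n k u → (u : ℕ) < k - 1 := fun u hu => hu
  -- all vertices are hub or one of the five
  have hfive : ∀ u : Fin n, ¬ isHub n k u →
      (u : ℕ) = k - 1 ∨ (u : ℕ) = k ∨ (u : ℕ) = k + 1 ∨ (u : ℕ) = k + 2 ∨ (u : ℕ) = k + 3 := by
    intro u hu
    have h1 : ¬ (u : ℕ) < k - 1 := hu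
    have h2 : (u : ℕ) < n := u.isLt
    omega
  -- forcing at x1
  have hhubx1 : ∀ u : Fin n, isHub n k u → u ≠ x1 ∧ DB n k x1 u ∧ DB n k u x1 := by
    intro u hu
    have := hubval u hu
    have hne : u ≠ x1 := Fin.ne_of_val_ne (by omega)
    exact ⟨hne, (DB_hub_digon (Or.inl hu) hne).2, (DB_hub_digon (Or.inl hu) hne).1⟩
  have hF1 : ¬ (Odd (pcnt Xs x1 v1) ↔ Odd (pcnt Xs x1 v2)) := by
    refine force_gadget_out hk hAS (Fin.ne_of_val_ne (by omega : (v1 : ℕ) ≠ (x1 : ℕ)))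
      hhubcard hhubx1 ⟨Fin.ne_of_val_ne (by omega), Or.inr (Or.inr (Or.inl ⟨hx1, hv1⟩))⟩
      ⟨Fin.ne_of_val_ne (by omega), Or.inr (Or.inr (Or.inr (Or.inl ⟨hx1, hv2⟩)))⟩
      ?_ ?_ ?_
    · rintro ⟨_, h | h | h⟩
      · exact absurd (hubval _ h) (by omega)
      · exact absurd (hubval _ h) (by omega)
      · rcases h with ⟨h1, h2⟩ | ⟨h1, h2⟩ | ⟨h1, h2⟩ | ⟨h1, h2⟩ | ⟨h1, h2⟩ <;> omega
    · rintro ⟨_, h | h | h⟩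
      · exact absurd (hubval _ h) (by omega)
      · exact absurd (hubval _ h) (by omega)
      · rcases h with ⟨h1, h2⟩ | ⟨h1, h2⟩ | ⟨h1, h2⟩ | ⟨h1, h2⟩ | ⟨h1, h2⟩ <;> omega
    · intro u hu h1 h2 h3
      have hval := hfive u hu
      have hne1 : (u : ℕ) ≠ k - 1 := fun h => h1 (Fin.val_injective (by omega))
      have hne2 : (u : ℕ) ≠ k := fun h => h2 (Fin.val_injective (by omega))
      have hne3 : (u : ℕ) ≠ k + 2 := fun h => h3 (Fin.val_injective (by omega))
      constructor
      · rintro ⟨_, h | h | h⟩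
        · exact absurd (hubval _ h) (by omega)
        · exact hu h
        · rcases h with ⟨ha, hb⟩ | ⟨ha, hb⟩ | ⟨ha, hb⟩ | ⟨ha, hb⟩ | ⟨ha, hb⟩ <;> omega
      · rintro ⟨_, h | h | h⟩
        · exact hu h
        · exact absurd (hubval _ h) (by omega)
        · rcases h with ⟨ha, hb⟩ | ⟨ha, hb⟩ | ⟨ha, hb⟩ | ⟨ha, hb⟩ | ⟨ha, hb⟩ <;> omega
  -- forcing at x2
  have hhubx2 : ∀ u : Fin n, isHub n k u → u ≠ x2 ∧ DB n k x2 u ∧ DB n k u x2 := by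
    intro u hu
    have := hubval u hu
    have hne : u ≠ x2 := Fin.ne_of_val_ne (by omega)
    exact ⟨hne, (DB_hub_digon (Or.inl hu) hne).2, (DB_hub_digon (Or.inl hu) hne).1⟩
  have hF2 : ¬ (Odd (pcnt Xs x2 v1) ↔ Odd (pcnt Xs x2 v3)) := by
    refine force_gadget_out hk hAS (Fin.ne_of_val_ne (by omega : (v1 : ℕ) ≠ (x2 : ℕ)))
      hhubcard hhubx2
      ⟨Fin.ne_of_val_ne (by omega), Or.inr (Or.inr (Or.inr (Or.inr (Or.inl ⟨hx2, hv1⟩))))⟩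
      ⟨Fin.ne_of_val_ne (by omega), Or.inr (Or.inr (Or.inr (Or.inr (Or.inr (Or.inl ⟨hx2, hv3⟩)))))⟩
      ?_ ?_ ?_
    · rintro ⟨_, h | h | h⟩
      · exact absurd (hubval _ h) (by omega)
      · exact absurd (hubval _ h) (by omega)
      · rcases h with ⟨h1, h2⟩ | ⟨h1, h2⟩ | ⟨h1, h2⟩ | ⟨h1, h2⟩ | ⟨h1, h2⟩ <;> omega
    · rintro ⟨_, h | h | h⟩
      · exact absurd (hubval _ h) (by omega)
      · exact absurd (hubval _ h) (by omega)
      · rcases h with ⟨h1, h2⟩ | ⟨h1, h2⟩ | ⟨h1, h2⟩ | ⟨h1, h2⟩ | ⟨h1, h2⟩ <;> omega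
    · intro u hu h1 h2 h3
      have hval := hfive u hu
      have hne1 : (u : ℕ) ≠ k - 1 := fun h => h1 (Fin.val_injective (by omega))
      have hne2 : (u : ℕ) ≠ k + 1 := fun h => h2 (Fin.val_injective (by omega))
      have hne3 : (u : ℕ) ≠ k + 3 := fun h => h3 (Fin.val_injective (by omega))
      constructor
      · rintro ⟨_, h | h | h⟩
        · exact absurd (hubval _ h) (by omega)
        · exact hu h
        · rcases h with ⟨ha, hb⟩ | ⟨ha, hb⟩ | ⟨ha, hb⟩ | ⟨ha, hb⟩ | ⟨ha, hb⟩ <;> omega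
      · rintro ⟨_, h | h | h⟩
        · exact hu h
        · exact absurd (hubval _ h) (by omega)
        · rcases h with ⟨ha, hb⟩ | ⟨ha, hb⟩ | ⟨ha, hb⟩ | ⟨ha, hb⟩ | ⟨ha, hb⟩ <;> omega
  -- forcing at v1 (in-gadget)
  have hhubv1 : ∀ u : Fin n, isHub n k u → u ≠ v1 ∧ DB n k v1 u ∧ DB n k u v1 := by
    intro u hu
    have := hubval u hu
    have hne : u ≠ v1 := Fin.ne_of_val_ne (by omega)
    exact ⟨hne, (DB_hub_digon (Or.inl hu) hne).2, (DB_hub_digon (Or.inl hu) hne).1⟩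
  have hF3 : ¬ (Odd (pcnt Xs v1 x1) ↔ Odd (pcnt Xs v1 x2)) := by
    refine force_gadget_in hk hAS (Fin.ne_of_val_ne (by omega : (x1 : ℕ) ≠ (v1 : ℕ)))
      hhubcard hhubv1
      ⟨Fin.ne_of_val_ne (by omega), Or.inr (Or.inr (Or.inl ⟨hx1, hv1⟩))⟩
      ⟨Fin.ne_of_val_ne (by omega), Or.inr (Or.inr (Or.inr (Or.inr (Or.inl ⟨hx2, hv1⟩))))⟩
      ?_ ?_ ?_
    · rintro ⟨_, h | h | h⟩
      · exact absurd (hubval _ h) (by omega)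
      · exact absurd (hubval _ h) (by omega)
      · rcases h with ⟨h1, h2⟩ | ⟨h1, h2⟩ | ⟨h1, h2⟩ | ⟨h1, h2⟩ | ⟨h1, h2⟩ <;> omega
    · rintro ⟨_, h | h | h⟩
      · exact absurd (hubval _ h) (by omega)
      · exact absurd (hubval _ h) (by omega)
      · rcases h with ⟨h1, h2⟩ | ⟨h1, h2⟩ | ⟨h1, h2⟩ | ⟨h1, h2⟩ | ⟨h1, h2⟩ <;> omega
    · intro u hu h1 h2 h3
      have hval := hfive u hu
      have hne1 : (u : ℕ) ≠ k + 2 := fun h => h1 (Fin.val_injective (by omega))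
      have hne2 : (u : ℕ) ≠ k + 3 := fun h => h2 (Fin.val_injective (by omega))
      have hne3 : (u : ℕ) ≠ k - 1 := fun h => h3 (Fin.val_injective (by omega))
      constructor
      · rintro ⟨_, h | h | h⟩
        · exact absurd (hubval _ h) (by omega)
        · exact hu h
        · rcases h with ⟨ha, hb⟩ | ⟨ha, hb⟩ | ⟨ha, hb⟩ | ⟨ha, hb⟩ | ⟨ha, hb⟩ <;> omega
      · rintro ⟨_, h | h | h⟩
        · exact hu h
        · exact absurd (hubval _ h) (by omega)
        · rcases h with ⟨ha, hb⟩ | ⟨ha, hb⟩ | ⟨ha, hb⟩ | ⟨ha, hb⟩ | ⟨ha, hb⟩ <;> omega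
  -- now refute short inversion lists
  by_contra hlen
  push_neg at hlen
  rcases Xs with _ | ⟨X, _ | ⟨Y, T⟩⟩
  · rw [pcnt_nil, pcnt_nil] at hF1
    exact hF1 Iff.rfl
  · rw [odd_pcnt_single, odd_pcnt_single] at hF1 hF2 hF3
    have hx1X : x1 ∈ X := by tauto
    have hx2X : x2 ∈ X := by tauto
    exact hF3 (by tauto)
  · simp only [List.length_cons] at hlen
    omega

open Fin.NatCast Fin.CommRing in
lemma cycle_bdry {g : Fin 5 → Prop} (i0 j0 : Fin 5) (h : g i0) (h' : ¬ g j0) :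
    ∃ i, g i ∧ ¬ g (i + 1) := by
  by_contra hc
  push_neg at hc
  have aux : ∀ l : ℕ, g (i0 + (l : Fin 5)) := by
    intro l
    induction l with
    | zero => simpa using h
    | succ l ih =>
      have he : ((l + 1 : ℕ) : Fin 5) = ((l : ℕ) : Fin 5) + 1 := by push_cast; ring
      rw [he, ← add_assoc]
      exact hc _ ih
  have hj : g j0 := by
    have := aux ((j0 - i0 : Fin 5) : ℕ)
    rwa [Fin.cast_val_eq_self, add_comm, sub_add_cancel] at this
  exact h' hj

lemma assemble {α : Type*} [Finite α] {A B P : Set α} {e1 e2 : α}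
    (hPA : P ⊆ A) (hPB : P ⊆ B) (h1 : e1 ∈ A ∪ B) (h2 : e2 ∈ A ∪ B) (hne : e1 ≠ e2)
    (hd1 : e1 ∉ P) (hd2 : e2 ∉ P) :
    2 * P.ncard + 2 ≤ A.ncard + B.ncard := by
  have hone : ∀ {Q : Set α} {e : α}, P ⊆ Q → e ∉ P → e ∈ Q → P.ncard + 1 ≤ Q.ncard := by
    intro Q e hPQ heP heQ
    have hins : insert e P ⊆ Q := Set.insert_subset heQ hPQ
    have h := Set.ncard_le_ncard hins (Set.toFinite _)
    rwa [Set.ncard_insert_of_notMem heP (Set.toFinite _)] at h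
  have htwo : ∀ {Q : Set α}, P ⊆ Q → e1 ∈ Q → e2 ∈ Q → P.ncard + 2 ≤ Q.ncard := by
    intro Q hPQ he1 he2
    have hsub : insert e1 (insert e2 P) ⊆ Q :=
      Set.insert_subset he1 (Set.insert_subset he2 hPQ)
    have h := Set.ncard_le_ncard hsub (Set.toFinite _)
    rw [Set.ncard_insert_of_notMem (by
        rintro (h | h)
        · exact hne h
        · exact hd1 h) (Set.toFinite _),
      Set.ncard_insert_of_notMem hd2 (Set.toFinite _)] at h
    omega
  have hA := Set.ncard_le_ncard hPA (Set.toFinite _)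
  have hB := Set.ncard_le_ncard hPB (Set.toFinite _)
  rcases h1 with h1' | h1' <;> rcases h2 with h2' | h2'
  · have := htwo hPA h1' h2'; omega
  · have u1 := hone hPA hd1 h1'; have u2 := hone hPB hd2 h2'; omega
  · have u1 := hone hPB hd1 h1'; have u2 := hone hPA hd2 h2'; omega
  · have := htwo hPB h1' h2'; omega

lemma edgeConnB {n k : ℕ} (hk : 0 < k) (hn4 : n = k + 4) :
    edgeConn (DB n k) (2 * k) := by
  intro S hS hSU
  obtain ⟨s0, hs0⟩ := hS
  obtain ⟨w0, hw0⟩ := (Set.ne_univ_iff_exists_notMem S).mp hSU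
  obtain ⟨v1, hv1⟩ : ∃ w : Fin n, (w : ℕ) = k - 1 := ⟨⟨k - 1, by omega⟩, rfl⟩
  obtain ⟨v2, hv2⟩ : ∃ w : Fin n, (w : ℕ) = k := ⟨⟨k, by omega⟩, rfl⟩
  obtain ⟨v3, hv3⟩ : ∃ w : Fin n, (w : ℕ) = k + 1 := ⟨⟨k + 1, by omega⟩, rfl⟩
  obtain ⟨x1, hx1⟩ : ∃ w : Fin n, (w : ℕ) = k + 2 := ⟨⟨k + 2, by omega⟩, rfl⟩
  obtain ⟨x2, hx2⟩ : ∃ w : Fin n, (w : ℕ) = k + 3 := ⟨⟨k + 3, by omega⟩, rfl⟩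
  set cyc : Fin 5 → Fin n := fun i =>
    if (i : ℕ) = 0 then v1 else if (i : ℕ) = 1 then x1 else if (i : ℕ) = 2 then v2
    else if (i : ℕ) = 3 then v3 else x2 with hcyc
  have hcv : ∀ i : Fin 5, ((cyc i : Fin n) : ℕ) =
      if (i : ℕ) = 0 then k - 1 else if (i : ℕ) = 1 then k + 2 else if (i : ℕ) = 2 then k
      else if (i : ℕ) = 3 then k + 1 else k + 3 := by
    intro i
    simp only [hcyc]
    split_ifs <;> assumption
  have hpent : ∀ i : Fin 5, k - 1 ≤ (cyc i : ℕ) := by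
    intro i
    rw [hcv i]
    split_ifs <;> omega
  have hinj : Function.Injective cyc := by
    intro a b hab
    have hval := congrArg Fin.val hab
    rw [hcv a, hcv b] at hval
    have ha := a.isLt
    have hb := b.isLt
    apply Fin.val_injective
    split_ifs at hval <;> omega
  have hadj : ∀ i : Fin 5, DB n k (cyc i) (cyc (i + 1)) ∨ DB n k (cyc (i + 1)) (cyc i) := by
    intro i
    have hval1 := hcv i
    have hval2 := hcv (i + 1)
    have hi1 : ((i + 1 : Fin 5) : ℕ) = ((i : ℕ) + 1) % 5 := by
      rw [Fin.val_add]
      norm_num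
    have h5 := i.isLt
    rcases (by omega : (i : ℕ) = 0 ∨ (i : ℕ) = 1 ∨ (i : ℕ) = 2 ∨ (i : ℕ) = 3 ∨ (i : ℕ) = 4)
      with h | h | h | h | h
    · rw [h] at hval1 hi1
      norm_num at hval1 hi1
      rw [hi1] at hval2
      norm_num at hval2
      exact Or.inr ⟨Fin.ne_of_val_ne (by omega), Or.inr (Or.inr (Or.inl ⟨hval2, hval1⟩))⟩
    · rw [h] at hval1 hi1
      norm_num at hval1 hi1
      rw [hi1] at hval2
      norm_num at hval2
      exact Or.inl ⟨Fin.ne_of_val_ne (by omega),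
        Or.inr (Or.inr (Or.inr (Or.inl ⟨hval1, hval2⟩)))⟩
    · rw [h] at hval1 hi1
      norm_num at hval1 hi1
      rw [hi1] at hval2
      norm_num at hval2
      exact Or.inl ⟨Fin.ne_of_val_ne (by omega),
        Or.inr (Or.inr (Or.inr (Or.inr (Or.inr (Or.inr ⟨hval1, hval2⟩)))))⟩
    · rw [h] at hval1 hi1
      norm_num at hval1 hi1
      rw [hi1] at hval2
      norm_num at hval2
      exact Or.inr ⟨Fin.ne_of_val_ne (by omega),
        Or.inr (Or.inr (Or.inr (Or.inr (Or.inr (Or.inl ⟨hval2, hval1⟩)))))⟩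
    · rw [h] at hval1 hi1
      norm_num at hval1 hi1
      rw [hi1] at hval2
      norm_num at hval2
      rw [hi1]
      exact Or.inl ⟨Fin.ne_of_val_ne (by omega),
        Or.inr (Or.inr (Or.inr (Or.inr (Or.inl ⟨hval1, hval2⟩))))⟩
  have hexh : ∀ w : Fin n, ¬ (w : ℕ) < k - 1 → ∃ i : Fin 5, cyc i = w := by
    intro w hw
    have hwlt := w.isLt
    rcases (by omega : (w : ℕ) = k - 1 ∨ (w : ℕ) = k ∨ (w : ℕ) = k + 1 ∨
        (w : ℕ) = k + 2 ∨ (w : ℕ) = k + 3) with h | h | h | h | h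
    · exact ⟨0, Fin.val_injective (by
        rw [hcv]; norm_num [show ((0 : Fin 5) : ℕ) = 0 from rfl]; omega)⟩
    · exact ⟨2, Fin.val_injective (by
        rw [hcv]; norm_num [show ((2 : Fin 5) : ℕ) = 2 from rfl]; omega)⟩
    · exact ⟨3, Fin.val_injective (by
        rw [hcv]; norm_num [show ((3 : Fin 5) : ℕ) = 3 from rfl]; omega)⟩
    · exact ⟨1, Fin.val_injective (by
        rw [hcv]; norm_num [show ((1 : Fin 5) : ℕ) = 1 from rfl]; omega)⟩
    · exact ⟨4, Fin.val_injective (by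
        rw [hcv]; norm_num [show ((4 : Fin 5) : ℕ) = 4 from rfl]; omega)⟩
  set Hb : Set (Fin n) := {u : Fin n | (u : ℕ) < k - 1} with hHb
  have hHbcard : Hb.ncard = k - 1 := ncard_val_lt n (k - 1) (by omega)
  set AS : Set (Fin n × Fin n) := {p : Fin n × Fin n | p.1 ∈ S ∧ p.2 ∉ S ∧ DB n k p.1 p.2}
    with hASdef
  set BS : Set (Fin n × Fin n) := {p : Fin n × Fin n | p.1 ∈ S ∧ p.2 ∉ S ∧ DB n k p.2 p.1}
    with hBSdef
  have hgoal1 : outCut (DB n k) S = AS.ncard := rfl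
  have hgoal2 : outCut (fun a b => DB n k b a) S = BS.ncard := rfl
  rw [hgoal1, hgoal2]
  by_cases hHsub : ∀ h : Fin n, (h : ℕ) < k - 1 → h ∈ S
  · -- the hub is contained in S
    have hw0p : ¬ (w0 : ℕ) < k - 1 := fun hc => hw0 (hHsub w0 hc)
    obtain ⟨j0, hj0⟩ := hexh w0 hw0p
    have hgj0 : cyc j0 ∉ S := by rw [hj0]; exact hw0
    by_cases hSp : ∃ i : Fin 5, cyc i ∈ S
    · -- pentagon meets both sides: boundary argument
      obtain ⟨i0, hi0⟩ := hSp
      obtain ⟨i, hgi, hgi1⟩ := cycle_bdry (g := fun i => cyc i ∈ S) i0 j0 hi0 hgj0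
      obtain ⟨j, hgj, hgj1⟩ :=
        cycle_bdry (g := fun i => cyc i ∉ S) j0 i0 hgj0 (not_not_intro hi0)
      have hgj1' : cyc (j + 1) ∈ S := not_not.mp hgj1
      have he1 : (cyc i, cyc (i + 1)) ∈ AS ∪ BS := by
        rcases hadj i with h | h
        · exact Or.inl ⟨hgi, hgi1, h⟩
        · exact Or.inr ⟨hgi, hgi1, h⟩
      have he2 : (cyc (j + 1), cyc j) ∈ AS ∪ BS := by
        rcases hadj j with h | h
        · exact Or.inr ⟨hgj1', hgj, h⟩
        · exact Or.inl ⟨hgj1', hgj, h⟩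
      have hne12 : (cyc i, cyc (i + 1)) ≠ (cyc (j + 1), cyc j) := by
        intro hc
        rw [Prod.ext_iff] at hc
        have h1 := hinj hc.1
        have h2 := hinj hc.2
        have h3 : j + 1 + 1 = j := by rw [← h1]; exact h2
        have h4 := congrArg Fin.val h3
        rw [Fin.val_add, Fin.val_add] at h4
        have h5 := j.isLt
        norm_num at h4
        omega
      have hPA : (fun u => (u, cyc (i + 1))) '' Hb ⊆ AS := by
        rintro _ ⟨u, hu, rfl⟩
        have hu' : (u : ℕ) < k - 1 := hu
        have hne : u ≠ cyc (i + 1) := Fin.ne_of_val_ne (by have := hpent (i + 1); omega)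
        exact ⟨hHsub u hu', hgi1, (DB_hub_digon (Or.inl hu') hne).1⟩
      have hPB : (fun u => (u, cyc (i + 1))) '' Hb ⊆ BS := by
        rintro _ ⟨u, hu, rfl⟩
        have hu' : (u : ℕ) < k - 1 := hu
        have hne : u ≠ cyc (i + 1) := Fin.ne_of_val_ne (by have := hpent (i + 1); omega)
        exact ⟨hHsub u hu', hgi1, (DB_hub_digon (Or.inl hu') hne).2⟩
      have hd1 : (cyc i, cyc (i + 1)) ∉ (fun u => (u, cyc (i + 1))) '' Hb := by
        rintro ⟨u, hu, hc⟩
        have h1 : u = cyc i := congrArg Prod.fst hc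
        have hu' : (u : ℕ) < k - 1 := hu
        rw [h1] at hu'
        have := hpent i
        omega
      have hd2 : (cyc (j + 1), cyc j) ∉ (fun u => (u, cyc (i + 1))) '' Hb := by
        rintro ⟨u, hu, hc⟩
        have h1 : u = cyc (j + 1) := congrArg Prod.fst hc
        have hu' : (u : ℕ) < k - 1 := hu
        rw [h1] at hu'
        have := hpent (j + 1)
        omega
      have hass := assemble hPA hPB he1 he2 hne12 hd1 hd2
      rw [Set.ncard_image_of_injective _
        (fun a b h => by simpa using h : Function.Injective (fun u : Fin n => (u, cyc (i + 1)))),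
        hHbcard] at hass
      omega
    · -- the pentagon misses S : S is a nonempty part of the hub, so k ≥ 2
      push_neg at hSp
      have hs0h : (s0 : ℕ) < k - 1 := by
        by_contra hc
        obtain ⟨i, hi⟩ := hexh s0 hc
        exact hSp i (by rw [hi]; exact hs0)
      have hc01 : cyc 0 ≠ cyc 1 := by
        intro hc
        have := congrArg Fin.val hc
        rw [hcv, hcv] at this
        norm_num at this
        omega
      have hsub : ∀ (w : Fin 5), ((fun u => (u, cyc w)) '' Hb ⊆ AS) ∧
          ((fun u => (u, cyc w)) '' Hb ⊆ BS) := by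
        intro w
        constructor <;>
        · rintro _ ⟨u, hu, rfl⟩
          have hu' : (u : ℕ) < k - 1 := hu
          have hne : u ≠ cyc w := Fin.ne_of_val_ne (by have := hpent w; omega)
          exact ⟨hHsub u hu', hSp w, by
            first
            | exact (DB_hub_digon (Or.inl hu') hne).1
            | exact (DB_hub_digon (Or.inl hu') hne).2⟩
      have hdisj : Disjoint ((fun u => (u, cyc 0)) '' Hb) ((fun u => (u, cyc 1)) '' Hb) := by
        rw [Set.disjoint_left]
        rintro _ ⟨u, _, rfl⟩ ⟨u', _, hc⟩
        exact hc01 (congrArg Prod.snd hc).symm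
      have hcard : ((fun u => (u, cyc 0)) '' Hb ∪ (fun u => (u, cyc 1)) '' Hb).ncard
          = (k - 1) + (k - 1) := by
        rw [Set.ncard_union_eq hdisj (Set.toFinite _) (Set.toFinite _),
          Set.ncard_image_of_injective _
            (fun a b h => by simpa using h : Function.Injective (fun u : Fin n => (u, cyc 0))),
          Set.ncard_image_of_injective _
            (fun a b h => by simpa using h : Function.Injective (fun u : Fin n => (u, cyc 1))),
          hHbcard]
      have hA : (k - 1) + (k - 1) ≤ AS.ncard := by
        rw [← hcard]
        exact Set.ncard_le_ncard (Set.union_subset (hsub 0).1 (hsub 1).1) (Set.toFinite _)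
      have hB : (k - 1) + (k - 1) ≤ BS.ncard := by
        rw [← hcard]
        exact Set.ncard_le_ncard (Set.union_subset (hsub 0).2 (hsub 1).2) (Set.toFinite _)
      omega
  · push_neg at hHsub
    obtain ⟨h', hh'val, hh'S⟩ := hHsub
    by_cases hHS : ∃ h : Fin n, (h : ℕ) < k - 1 ∧ h ∈ S
    · -- the hub is split by S
      obtain ⟨hh, hhval, hhS⟩ := hHS
      have harcs : ∀ {Q : Set (Fin n × Fin n)}, Q = AS ∨ Q = BS →
          ((fun w => (hh, w)) '' {w : Fin n | w ∉ S} ∪ (fun u => (u, h')) '' S) ⊆ Q := by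
        rintro Q (rfl | rfl) <;>
        · rintro _ (⟨w, hwS, rfl⟩ | ⟨u, huS, rfl⟩)
          · have hne : hh ≠ w := by rintro rfl; exact hwS hhS
            exact ⟨hhS, hwS, by
              first
              | exact (DB_hub_digon (Or.inl hhval) hne).1
              | exact (DB_hub_digon (Or.inl hhval) hne).2⟩
          · have hne : u ≠ h' := by rintro rfl; exact hh'S huS
            exact ⟨huS, hh'S, by
              first
              | exact (DB_hub_digon (Or.inr hh'val) hne).1
              | exact (DB_hub_digon (Or.inr hh'val) hne).2⟩
      have hinj1 : Function.Injective (fun w : Fin n => (hh, w)) := by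
        intro a b h; simpa using h
      have hinj2 : Function.Injective (fun u : Fin n => (u, h')) := by
        intro a b h; simpa using h
      have hcup : ({w : Fin n | w ∉ S}).ncard + S.ncard = n := by
        have h1 := Set.ncard_add_ncard_compl S
        have h2 : ({w : Fin n | w ∉ S}) = Sᶜ := rfl
        rw [h2]
        rw [Nat.card_eq_fintype_card, Fintype.card_fin] at h1
        omega
      have hint : ((fun w => (hh, w)) '' {w : Fin n | w ∉ S} ∩ (fun u => (u, h')) '' S).ncard
          ≤ 1 := by
        have hsub : ((fun w => (hh, w)) '' {w : Fin n | w ∉ S} ∩ (fun u => (u, h')) '' S)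
            ⊆ {(hh, h')} := by
          rintro ⟨p, q⟩ ⟨⟨w, _, hw⟩, ⟨u, _, hu⟩⟩
          have h1 : hh = p := congrArg Prod.fst hw
          have h2 : h' = q := congrArg Prod.snd hu
          rw [Set.mem_singleton_iff, Prod.ext_iff]
          exact ⟨h1.symm, h2.symm⟩
        calc _ ≤ ({(hh, h')} : Set (Fin n × Fin n)).ncard :=
              Set.ncard_le_ncard hsub (Set.toFinite _)
          _ = 1 := Set.ncard_singleton _
      have hun := Set.ncard_union_add_ncard_inter
        ((fun w => (hh, w)) '' {w : Fin n | w ∉ S}) ((fun u => (u, h')) '' S)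
        (Set.toFinite _) (Set.toFinite _)
      rw [Set.ncard_image_of_injective _ hinj1, Set.ncard_image_of_injective _ hinj2] at hun
      have hA := Set.ncard_le_ncard (harcs (Or.inl rfl)) (Set.toFinite _)
      have hB := Set.ncard_le_ncard (harcs (Or.inr rfl)) (Set.toFinite _)
      omega
    · -- S is disjoint from the hub
      push_neg at hHS
      have hs0p : ¬ (s0 : ℕ) < k - 1 := fun hc => hHS s0 hc hs0
      obtain ⟨i0, hi0⟩ := hexh s0 hs0p
      have hgi0 : cyc i0 ∈ S := by rw [hi0]; exact hs0
      by_cases hSp : ∃ j : Fin 5, cyc j ∉ S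
      · obtain ⟨j0, hj0⟩ := hSp
        obtain ⟨i, hgi, hgi1⟩ := cycle_bdry (g := fun i => cyc i ∈ S) i0 j0 hgi0 hj0
        obtain ⟨j, hgj, hgj1⟩ :=
          cycle_bdry (g := fun i => cyc i ∉ S) j0 i0 hj0 (not_not_intro hgi0)
        have hgj1' : cyc (j + 1) ∈ S := not_not.mp hgj1
        have he1 : (cyc i, cyc (i + 1)) ∈ AS ∪ BS := by
          rcases hadj i with h | h
          · exact Or.inl ⟨hgi, hgi1, h⟩
          · exact Or.inr ⟨hgi, hgi1, h⟩
        have he2 : (cyc (j + 1), cyc j) ∈ AS ∪ BS := by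
          rcases hadj j with h | h
          · exact Or.inr ⟨hgj1', hgj, h⟩
          · exact Or.inl ⟨hgj1', hgj, h⟩
        have hne12 : (cyc i, cyc (i + 1)) ≠ (cyc (j + 1), cyc j) := by
          intro hc
          rw [Prod.ext_iff] at hc
          have h1 := hinj hc.1
          have h2 := hinj hc.2
          have h3 : j + 1 + 1 = j := by rw [← h1]; exact h2
          have h4 := congrArg Fin.val h3
          rw [Fin.val_add, Fin.val_add] at h4
          have h5 := j.isLt
          norm_num at h4
          omega
        have hPA : (fun u => (cyc i, u)) '' Hb ⊆ AS := by
          rintro _ ⟨u, hu, rfl⟩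
          have hu' : (u : ℕ) < k - 1 := hu
          have hne : u ≠ cyc i := Fin.ne_of_val_ne (by have := hpent i; omega)
          exact ⟨hgi, hHS u hu', (DB_hub_digon (Or.inl hu') hne).2⟩
        have hPB : (fun u => (cyc i, u)) '' Hb ⊆ BS := by
          rintro _ ⟨u, hu, rfl⟩
          have hu' : (u : ℕ) < k - 1 := hu
          have hne : u ≠ cyc i := Fin.ne_of_val_ne (by have := hpent i; omega)
          exact ⟨hgi, hHS u hu', (DB_hub_digon (Or.inl hu') hne).1⟩
        have hd1 : (cyc i, cyc (i + 1)) ∉ (fun u => (cyc i, u)) '' Hb := by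
          rintro ⟨u, hu, hc⟩
          have h1 : u = cyc (i + 1) := congrArg Prod.snd hc
          have hu' : (u : ℕ) < k - 1 := hu
          rw [h1] at hu'
          have := hpent (i + 1)
          omega
        have hd2 : (cyc (j + 1), cyc j) ∉ (fun u => (cyc i, u)) '' Hb := by
          rintro ⟨u, hu, hc⟩
          have h1 : u = cyc j := congrArg Prod.snd hc
          have hu' : (u : ℕ) < k - 1 := hu
          rw [h1] at hu'
          have := hpent j
          omega
        have hass := assemble hPA hPB he1 he2 hne12 hd1 hd2
        rw [Set.ncard_image_of_injective _
          (fun a b h => by simpa using h : Function.Injective (fun u : Fin n => (cyc i, u))),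
          hHbcard] at hass
        omega
      · -- the pentagon is contained in S, so the complement is a nonempty part of the hub
        push_neg at hSp
        have hw0h : (w0 : ℕ) < k - 1 := by
          by_contra hc
          obtain ⟨i, hi⟩ := hexh w0 hc
          exact hw0 (by rw [← hi]; exact hSp i)
        have hc01 : cyc 0 ≠ cyc 1 := by
          intro hc
          have := congrArg Fin.val hc
          rw [hcv, hcv] at this
          norm_num at this
          omega
        have hsub : ∀ (w : Fin 5), ((fun u => (cyc w, u)) '' Hb ⊆ AS) ∧
            ((fun u => (cyc w, u)) '' Hb ⊆ BS) := by
          intro w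
          constructor <;>
          · rintro _ ⟨u, hu, rfl⟩
            have hu' : (u : ℕ) < k - 1 := hu
            have hne : u ≠ cyc w := Fin.ne_of_val_ne (by have := hpent w; omega)
            exact ⟨hSp w, hHS u hu', by
              first
              | exact (DB_hub_digon (Or.inl hu') hne).1
              | exact (DB_hub_digon (Or.inl hu') hne).2⟩
        have hdisj : Disjoint ((fun u => (cyc 0, u)) '' Hb) ((fun u => (cyc 1, u)) '' Hb) := by
          rw [Set.disjoint_left]
          rintro _ ⟨u, _, rfl⟩ ⟨u', _, hc⟩
          exact hc01 (congrArg Prod.fst hc).symm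
        have hcard : ((fun u => (cyc 0, u)) '' Hb ∪ (fun u => (cyc 1, u)) '' Hb).ncard
            = (k - 1) + (k - 1) := by
          rw [Set.ncard_union_eq hdisj (Set.toFinite _) (Set.toFinite _),
            Set.ncard_image_of_injective _
              (fun a b h => by simpa using h : Function.Injective (fun u : Fin n => (cyc 0, u))),
            Set.ncard_image_of_injective _
              (fun a b h => by simpa using h : Function.Injective (fun u : Fin n => (cyc 1, u))),
            hHbcard]
        have hA : (k - 1) + (k - 1) ≤ AS.ncard := by
          rw [← hcard]
          exact Set.ncard_le_ncard (Set.union_subset (hsub 0).1 (hsub 1).1) (Set.toFinite _)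
        have hB : (k - 1) + (k - 1) ≤ BS.ncard := by
          rw [← hcard]
          exact Set.ncard_le_ncard (Set.union_subset (hsub 0).2 (hsub 1).2) (Set.toFinite _)
        omega



end CaseB

section Final

lemma pick_m {r : ℕ} (hr : 3 ≤ r) (hr5 : r ≠ 5) :
    ∃ m, 2 ≤ m ∧ m + m.choose 2 ≤ r ∧ r ≤ m * m := by
  set P : ℕ → Prop := fun j => (j + 1).choose 2 ≤ r with hP
  have hdec : DecidablePred P := fun j => Nat.decLe _ _
  set m := Nat.findGreatest P r with hm
  have hP2 : P 2 := by
    have h33 : (2 + 1).choose 2 = 3 := by decide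
    show (2 + 1).choose 2 ≤ r
    omega
  have hm2 : 2 ≤ m := Nat.le_findGreatest (show 2 ≤ r by omega) hP2
  have hmr : m ≤ r := Nat.findGreatest_le r
  have hspec : P m := Nat.findGreatest_spec (m := 2) (show 2 ≤ r by omega) hP2
  have hmlt : m < r := by
    rcases Nat.lt_or_ge m r with h | h
    · exact h
    · exfalso
      have hmr' : m = r := by omega
      have := hspec
      rw [hmr'] at this
      have h2 : 2 * ((r + 1).choose 2) = (r + 1) * r := by
        have := two_mul_choose2 (r + 1)
        simpa using this
      show False
      have : (r + 1).choose 2 ≤ r := this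
      nlinarith
  have hnot : ¬ P (m + 1) :=
    Nat.findGreatest_is_greatest (show Nat.findGreatest P r < m + 1 by omega)
      (show m + 1 ≤ r by omega)
  have hub : r < (m + 2).choose 2 := by
    have : ¬ (m + 2).choose 2 ≤ r := hnot
    omega
  have hkey : 2 * r < (m + 2) * (m + 1) := by
    have h2 := two_mul_choose2 (m + 2)
    have h3 : (m + 2) * (m + 2 - 1) = (m + 2) * (m + 1) := by
      congr 1
    omega
  have hle : m + m.choose 2 ≤ r := by
    have := choose2_succ m
    have := hspec
    show m + m.choose 2 ≤ r
    omega
  refine ⟨m, hm2, hle, ?_⟩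
  rcases Nat.lt_or_ge m 3 with h3 | h3
  · -- m = 2 : then r < 12/2 means r ≤ 5, and r ≠ 5
    have hm22 : m = 2 := by omega
    rw [hm22] at hkey
    norm_num at hkey
    have : r ≤ 4 := by omega
    rw [hm22]
    omega
  · have hexp : (m + 2) * (m + 1) = m * m + 3 * m + 2 := by ring
    have h3m : 3 * m ≤ m * m := Nat.mul_le_mul_right m h3
    omega

lemma endgame {n k t : ℕ} (hk : 0 < k) (hn : k + 2 ≤ n) (h4 : n - k + 1 ≤ 4 ^ t) :
    Real.logb 2 ((n : ℝ) - (k : ℝ) + 1) / 2 ≤ (t : ℝ) := by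
  have hkn : k ≤ n := by omega
  have hcast : (n : ℝ) - (k : ℝ) + 1 = ((n - k + 1 : ℕ) : ℝ) := by
    push_cast [hkn]
    ring
  rw [hcast]
  have h1 : (1 : ℝ) ≤ ((n - k + 1 : ℕ) : ℝ) := by
    have : 1 ≤ n - k + 1 := by omega
    exact_mod_cast this
  have h2 : ((n - k + 1 : ℕ) : ℝ) ≤ (4 : ℝ) ^ t := by
    calc ((n - k + 1 : ℕ) : ℝ) ≤ ((4 ^ t : ℕ) : ℝ) := by exact_mod_cast h4
      _ = (4 : ℝ) ^ t := by push_cast; ring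
  have hlogle : Real.log ((n - k + 1 : ℕ) : ℝ) ≤ Real.log ((4 : ℝ) ^ t) :=
    Real.log_le_log (by linarith) h2
  have h4t : Real.log ((4 : ℝ) ^ t) = (t : ℝ) * Real.log 4 := by
    rw [Real.log_pow]
  have hlog4 : Real.log (4 : ℝ) = 2 * Real.log 2 := by
    have h44 : (4 : ℝ) = 2 ^ 2 := by norm_num
    rw [h44, Real.log_pow]
    push_cast
    ring
  have hlog2pos : 0 < Real.log 2 := Real.log_pos (by norm_num)
  rw [Real.logb, div_div, div_le_iff₀ (by positivity)]
  calc Real.log ((n - k + 1 : ℕ) : ℝ) ≤ (t : ℝ) * Real.log 4 := by rw [← h4t]; exact hlogle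
    _ = (t : ℝ) * (Real.log 2 * 2) := by rw [hlog4]; ring

end Final

end Stmt7

/-- For `n ≥ k+2`, there is a `2k`-edge-connected digraph `D` on `n` vertices such that every
family of inversions transforming `D` into a `k`-arc-strong digraph has size at least
`(1/2)·log₂(n-k+1)`. -/
theorem stmt_7 (n k : ℕ) (hk : 0 < k) (hn : k + 2 ≤ n) :
    ∃ D : Fin n → Fin n → Prop, (∀ v, ¬ D v v) ∧ edgeConn D (2 * k) ∧
      ∀ Xs : List (Set (Fin n)), kArcStrong (dinvFam D Xs) k →
        Real.logb 2 ((n : ℝ) - (k : ℝ) + 1) / 2 ≤ (Xs.length : ℝ) := by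
  have hr3 : 3 ≤ n - k + 1 := by omega
  by_cases hr5 : n - k + 1 = 5
  · -- the pentagon construction
    refine ⟨Stmt7.DB n k, Stmt7.DB_irrefl n k, Stmt7.edgeConnB hk (by omega), ?_⟩
    intro Xs hAS
    have ht2 : 2 ≤ Xs.length := Stmt7.caseB_bound hk (by omega) hAS
    have h4 : n - k + 1 ≤ 4 ^ Xs.length := by
      calc n - k + 1 = 5 := hr5
        _ ≤ 4 ^ 2 := by norm_num
        _ ≤ 4 ^ Xs.length := Nat.pow_le_pow_right (by norm_num) ht2
    exact Stmt7.endgame hk hn h4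
  · -- the subdivided complete graph construction
    obtain ⟨m, hm2, hle, hrm⟩ := Stmt7.pick_m hr3 hr5
    have hroom : k - 1 + m + m.choose 2 ≤ n := by omega
    refine ⟨Stmt7.DA n k m, Stmt7.DA_irrefl n k m, Stmt7.edgeConnA hk hm2 hroom, ?_⟩
    intro Xs hAS
    have hcard : m ≤ 2 ^ Xs.length := Stmt7.cardA hk hm2 hroom hAS
    have h4 : n - k + 1 ≤ 4 ^ Xs.length := by
      calc n - k + 1 ≤ m * m := hrm
        _ ≤ 2 ^ Xs.length * 2 ^ Xs.length := Nat.mul_le_mul hcard hcard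
        _ = 4 ^ Xs.length := by
          rw [show (4 : ℕ) = 2 * 2 from rfl, Nat.mul_pow]
    exact Stmt7.endgame hk hn h4
end

section
/- For any graph G, the cut covering number of G equals ⌈log₂ χ(G)⌉, where χ(G) is the chromatic number. -/
/-- For any graph `G`, the cut covering number of `G` (the least `t` such that there are vertex
sets `X_1, …, X_t` with every edge of `G` crossing some `X_i`) equals `⌈log₂ χ(G)⌉`. -/
theorem stmt_9 {V : Type*} [Fintype V] (G : SimpleGraph V) :
    IsLeast {t : ℕ | ∃ X : Fin t → Set V, ∀ u v : V, G.Adj u v →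
        ∃ i, (u ∈ X i ∧ v ∉ X i) ∨ (v ∈ X i ∧ u ∉ X i)}
      (Nat.clog 2 G.chromaticNumber.toNat) := by
  classical
  set n := G.chromaticNumber.toNat with hn
  set t := Nat.clog 2 n with ht
  constructor
  · -- membership: build a cut cover of size t from a coloring with n colors
    obtain ⟨C⟩ := G.colorable_chromaticNumber_of_fintype
    have hcard : n ≤ Fintype.card (Fin t → Bool) := by
      simpa using Nat.le_pow_clog (by norm_num) n
    obtain ⟨f⟩ : Nonempty (Fin n ↪ (Fin t → Bool)) := by
      rw [← Fintype.card_fin n] at hcard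
      exact Function.Embedding.nonempty_of_card_le hcard
    refine ⟨fun i => {v | f (C v) i = true}, fun u v huv => ?_⟩
    have hne : f (C u) ≠ f (C v) := fun h => C.valid huv (f.injective h)
    obtain ⟨i, hi⟩ := Function.ne_iff.mp hne
    refine ⟨i, ?_⟩
    rcases Bool.eq_false_or_eq_true (f (C u) i) with h1 | h1 <;>
      rcases Bool.eq_false_or_eq_true (f (C v) i) with h2 | h2 <;>
      simp_all [Set.mem_setOf_eq]
  · -- lower bound
    rintro s ⟨X, hX⟩
    have C : G.Coloring (Fin s → Prop) := by
      refine SimpleGraph.Coloring.mk (fun v i => v ∈ X i) (fun {u v} huv h => ?_)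
      obtain ⟨i, hi⟩ := hX u v huv
      have := congrFun h i
      rcases hi with ⟨h1, h2⟩ | ⟨h1, h2⟩ <;> simp_all
    have : G.Colorable (Fintype.card (Fin s → Prop)) := C.colorable
    have hle : G.chromaticNumber ≤ (2 ^ s : ℕ) := by
      simpa using this.chromaticNumber_le
    have hfin : n ≤ 2 ^ s := by
      have := ENat.toNat_le_toNat hle (ENat.coe_ne_top _)
      simpa only [ENat.toNat_coe] using this
    exact (Nat.clog_le_iff_le_pow (by norm_num)).mpr hfin
end

section
/- Let H be a mixed graph whose underlying graph is eulerian. Then H has an eulerian orientation (an orientation of its edges so that every vertex has equal in- and out-degree) if and only if for every vertex subset S, the number of undirected edges leaving S is at least d^+(S) - d^-(S), where d^+(S) and d^-(S) count arcs leaving and entering S respectively. -/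
open Finset

noncomputable section
open scoped Classical

variable {V : Type*} [Fintype V]

/-- count ordered pairs (a,b) with a ∈ S, b ∈ T, R a b -/
def cnt (R : V → V → Prop) (S T : Set V) : ℕ :=
  (Finset.univ.filter (fun p : V × V => p.1 ∈ S ∧ p.2 ∈ T ∧ R p.1 p.2)).card

def Sf (S : Set V) : Finset V := Finset.univ.filter (· ∈ S)

def χ (S : Set V) (v : V) : ℤ := if v ∈ S then 1 else 0

lemma cnt_eq_sum (R : V → V → Prop) (S T : Set V) :
    (cnt R S T : ℤ) = ∑ p ∈ Finset.univ.filter (fun p : V × V => R p.1 p.2),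
      χ S p.1 * χ T p.2 := by
  rw [cnt, Finset.card_filter]
  push_cast
  rw [Finset.sum_filter]
  refine Finset.sum_congr rfl fun p _ => ?_
  by_cases h1 : p.1 ∈ S <;> by_cases h2 : p.2 ∈ T <;> by_cases h3 : R p.1 p.2 <;>
    simp [χ, h1, h2, h3]

lemma ncard_pairs (P : V × V → Prop) :
    {p : V × V | P p}.ncard = (Finset.univ.filter P).card := by
  rw [← Set.ncard_coe_finset]
  congr 1
  ext p
  simp

lemma ncard_set (P : V → Prop) :
    {v : V | P v}.ncard = (Finset.univ.filter P).card := by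
  rw [← Set.ncard_coe_finset]
  congr 1
  ext p
  simp

lemma cnt_swap (R : V → V → Prop) (S T : Set V) :
    cnt R S T = cnt (fun a b => R b a) T S := by
  unfold cnt
  apply Finset.card_bij (fun p _ => Prod.swap p)
  · intro p hp; simp at hp ⊢; tauto
  · intro p hp q hq h
    exact Prod.swap_injective h
  · intro p hp
    refine ⟨Prod.swap p, ?_, by simp⟩
    simp at hp ⊢; tauto

lemma cnt_split (R : V → V → Prop) (S T : Set V) :
    cnt R S Set.univ = cnt R S T + cnt R S Tᶜ := by
  have h : ∀ U : Set V, (cnt R S U : ℤ) = ∑ p ∈ Finset.univ.filter (fun p : V × V => R p.1 p.2), χ S p.1 * χ U p.2 := fun U => cnt_eq_sum R S U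
  have := h Set.univ; have h2 := h T; have h3 := h Tᶜ
  have : (cnt R S Set.univ : ℤ) = (cnt R S T : ℤ) + cnt R S Tᶜ := by
    rw [h, h2, h3, ← Finset.sum_add_distrib]
    refine Finset.sum_congr rfl fun p _ => ?_
    by_cases h2 : p.2 ∈ T <;> simp [χ, h2]
  exact_mod_cast this

/-- sum of out-degrees over S equals pair count with first coordinate in S -/
lemma degsum (R : V → V → Prop) (S : Set V) :
    ∑ v ∈ Sf S, (Finset.univ.filter (fun w => R v w)).card = cnt R S Set.univ := by
  unfold cnt Sf
  rw [Finset.card_filter, Fintype.sum_prod_type, Finset.sum_filter]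
  refine Finset.sum_congr rfl fun v _ => ?_
  by_cases h : v ∈ S
  · rw [if_pos h, Finset.card_filter]
    refine Finset.sum_congr rfl fun w _ => ?_
    by_cases hw : R v w <;> simp [h, hw]
  · rw [if_neg h]
    refine (Finset.sum_eq_zero fun w _ => ?_).symm
    simp [h]

lemma degsum_in (R : V → V → Prop) (S : Set V) :
    ∑ v ∈ Sf S, (Finset.univ.filter (fun w => R w v)).card = cnt (fun a b => R b a) S Set.univ := by
  exact degsum (fun a b => R b a) S

lemma even_cnt_inner (R : V → V → Prop) (hsymm : ∀ u v, R u v → R v u)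
    (hirr : ∀ v, ¬ R v v) (S T : Set V) (hST : ∀ v, v ∈ S ↔ v ∈ T) :
    Even (cnt R S T) := by
  classical
  let g := (Fintype.equivFin V)
  unfold cnt
  have hset : Finset.univ.filter (fun p : V × V => p.1 ∈ S ∧ p.2 ∈ T ∧ R p.1 p.2)
      = (Finset.univ.filter (fun p : V × V => (p.1 ∈ S ∧ p.2 ∈ T ∧ R p.1 p.2) ∧ g p.1 < g p.2))
        ∪ (Finset.univ.filter (fun p : V × V => (p.1 ∈ S ∧ p.2 ∈ T ∧ R p.1 p.2) ∧ g p.2 < g p.1)) := by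
    ext p
    simp only [Finset.mem_filter, Finset.mem_union, Finset.mem_univ, true_and]
    constructor
    · intro h
      have hne : p.1 ≠ p.2 := by
        intro he; exact hirr p.2 (he ▸ h.2.2)
      have : g p.1 ≠ g p.2 := fun he => hne (g.injective he)
      rcases lt_or_gt_of_ne this with h' | h'
      · exact Or.inl ⟨h, h'⟩
      · exact Or.inr ⟨h, h'⟩
    · rintro (⟨h, _⟩ | ⟨h, _⟩) <;> exact h
  rw [hset, Finset.card_union_of_disjoint]
  · have hc : (Finset.univ.filter (fun p : V × V => (p.1 ∈ S ∧ p.2 ∈ T ∧ R p.1 p.2) ∧ g p.2 < g p.1)).card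
      = (Finset.univ.filter (fun p : V × V => (p.1 ∈ S ∧ p.2 ∈ T ∧ R p.1 p.2) ∧ g p.1 < g p.2)).card := by
      apply Finset.card_bij (fun p _ => Prod.swap p)
      · intro p hp; simp at hp ⊢
        exact ⟨⟨(hST _).2 hp.1.2.1, (hST _).1 hp.1.1, hsymm _ _ hp.1.2.2⟩, hp.2⟩
      · intro p _ q _ h; exact Prod.swap_injective h
      · intro p hp
        refine ⟨Prod.swap p, ?_, by simp⟩
        simp at hp ⊢
        exact ⟨⟨(hST _).2 hp.1.2.1, (hST _).1 hp.1.1, hsymm _ _ hp.1.2.2⟩, hp.2⟩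
    rw [hc]
    exact Even.add_self _
  · rw [Finset.disjoint_filter]
    rintro p _ ⟨-, h1⟩ ⟨-, h2⟩
    exact absurd h1 (not_lt.2 h2.le)

def degE (E : V → V → Prop) (v : V) : ℕ := (Finset.univ.filter (fun w => E v w)).card

lemma parity_lemma (E : V → V → Prop) (hsymm : ∀ u v, E u v → E v u) (hirr : ∀ v, ¬ E v v)
    (b : V → ℤ) (hpar : ∀ v, Even ((degE E v : ℤ) + b v)) (S : Set V) :
    Even ((cnt E S Sᶜ : ℤ) + ∑ v ∈ Sf S, b v) := by
  have h1 : (2 : ℤ) ∣ ∑ v ∈ Sf S, ((degE E v : ℤ) + b v) :=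
    Finset.dvd_sum fun v _ => (hpar v).two_dvd
  rw [Finset.sum_add_distrib] at h1
  have h2 : ∑ v ∈ Sf S, (degE E v : ℤ) = (cnt E S Set.univ : ℤ) := by
    have := degsum E S
    exact_mod_cast congrArg (Nat.cast (R := ℤ)) this
  have h3 : cnt E S Set.univ = cnt E S Sᶜ + cnt E S S := by
    have := cnt_split E S Sᶜ
    rwa [compl_compl] at this
  have h4 : (2 : ℤ) ∣ (cnt E S S : ℤ) :=
    Even.two_dvd (by exact_mod_cast (even_cnt_inner E hsymm hirr S S (fun v => Iff.rfl)))
  rw [h2, h3] at h1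
  push_cast at h1 ⊢
  rw [Int.even_iff]
  omega

lemma net_eq (A : V → V → Prop) (S : Set V) :
    (cnt A S Sᶜ : ℤ) - cnt A Sᶜ S
      = ∑ p ∈ Finset.univ.filter (fun p : V × V => A p.1 p.2), (χ S p.1 - χ S p.2) := by
  rw [cnt_eq_sum, cnt_eq_sum, ← Finset.sum_sub_distrib]
  refine Finset.sum_congr rfl fun p _ => ?_
  by_cases h1 : p.1 ∈ S <;> by_cases h2 : p.2 ∈ S <;>
    simp [χ, h1, h2]

lemma net_modular (A : V → V → Prop) (S T : Set V) :
    ((cnt A (S ∩ T) (S ∩ T)ᶜ : ℤ) - cnt A (S ∩ T)ᶜ (S ∩ T))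
      + ((cnt A (S ∪ T) (S ∪ T)ᶜ : ℤ) - cnt A (S ∪ T)ᶜ (S ∪ T))
      = ((cnt A S Sᶜ : ℤ) - cnt A Sᶜ S) + ((cnt A T Tᶜ : ℤ) - cnt A Tᶜ T) := by
  rw [net_eq, net_eq, net_eq, net_eq, ← Finset.sum_add_distrib, ← Finset.sum_add_distrib]
  refine Finset.sum_congr rfl fun p _ => ?_
  by_cases h1 : p.1 ∈ S <;> by_cases h2 : p.2 ∈ S <;> by_cases h3 : p.1 ∈ T <;>
    by_cases h4 : p.2 ∈ T <;>
    simp [χ, h1, h2, h3, h4] <;> ring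

lemma submod (E : V → V → Prop) (S T : Set V) :
    ((cnt E S Sᶜ : ℤ)) + cnt E T Tᶜ
      = cnt E (S ∩ T) (S ∩ T)ᶜ + cnt E (S ∪ T) (S ∪ T)ᶜ
        + cnt E (S \ T) (T \ S) + cnt E (T \ S) (S \ T) := by
  rw [cnt_eq_sum E S Sᶜ, cnt_eq_sum E T Tᶜ, cnt_eq_sum E (S ∩ T) (S ∩ T)ᶜ,
    cnt_eq_sum E (S ∪ T) (S ∪ T)ᶜ, cnt_eq_sum E (S \ T) (T \ S), cnt_eq_sum E (T \ S) (S \ T)]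
  simp only [← Finset.sum_add_distrib]
  refine Finset.sum_congr rfl fun p _ => ?_
  by_cases h1 : p.1 ∈ S <;> by_cases h2 : p.2 ∈ S <;> by_cases h3 : p.1 ∈ T <;>
    by_cases h4 : p.2 ∈ T <;>
    simp [χ, h1, h2, h3, h4]

def delE (E : V → V → Prop) (x y : V) : V → V → Prop :=
  fun a b => E a b ∧ ¬(a = x ∧ b = y) ∧ ¬(a = y ∧ b = x)

lemma cnt_step (E : V → V → Prop) (x y : V) (hxy : E x y) (hyx : E y x) (hne : x ≠ y)
    (S T : Set V) :
    cnt E S T = cnt (delE E x y) S T + (if x ∈ S ∧ y ∈ T then 1 else 0)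
      + (if y ∈ S ∧ x ∈ T then 1 else 0) := by
  unfold cnt
  rw [Finset.card_filter, Finset.card_filter]
  have e1 : (if x ∈ S ∧ y ∈ T then 1 else 0)
      = ∑ p ∈ (Finset.univ : Finset (V × V)),
        (if p = (x, y) then (if x ∈ S ∧ y ∈ T then 1 else 0) else 0) := by
    rw [Finset.sum_ite_eq' Finset.univ ((x, y) : V × V)]
    simp
  have e2 : (if y ∈ S ∧ x ∈ T then 1 else 0)
      = ∑ p ∈ (Finset.univ : Finset (V × V)),
        (if p = (y, x) then (if y ∈ S ∧ x ∈ T then 1 else 0) else 0) := by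
    rw [Finset.sum_ite_eq' Finset.univ ((y, x) : V × V)]
    simp
  rw [e1, e2, ← Finset.sum_add_distrib, ← Finset.sum_add_distrib]
  refine Finset.sum_congr rfl fun p _ => ?_
  by_cases hp1 : p = (x, y) <;> by_cases hp2 : p = (y, x)
  · exact absurd (congrArg Prod.fst (hp1.symm.trans hp2)) hne
  · subst hp1
    by_cases hS : x ∈ S <;> by_cases hT : y ∈ T <;> simp [delE, hxy, hS, hT, hne]
  · subst hp2
    by_cases hS : y ∈ S <;> by_cases hT : x ∈ T <;>
      simp [delE, hyx, hS, hT, hne, Ne.symm hne]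
  · have h1 : ¬(p.1 = x ∧ p.2 = y) := fun ⟨ha, hb⟩ => hp1 (Prod.ext ha hb)
    have h2 : ¬(p.1 = y ∧ p.2 = x) := fun ⟨ha, hb⟩ => hp2 (Prod.ext ha hb)
    simp [delE, h1, h2, hp1, hp2]

lemma degE_step_x (E : V → V → Prop) (x y : V) (hxy : E x y) (hne : x ≠ y) :
    degE (delE E x y) x + 1 = degE E x := by
  have hset : Finset.univ.filter (fun w => delE E x y x w)
      = (Finset.univ.filter (fun w => E x w)).erase y := by
    ext w
    simp only [Finset.mem_filter, Finset.mem_erase, Finset.mem_univ, true_and, delE]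
    constructor
    · rintro ⟨hE, h1, -⟩
      exact ⟨h1, hE⟩
    · rintro ⟨hwy, hE⟩
      exact ⟨hE, hwy, fun h2 => hne h2.1⟩
  have hy : y ∈ Finset.univ.filter (fun w => E x w) := by simp [hxy]
  have hpos : 1 ≤ (Finset.univ.filter (fun w => E x w)).card := Finset.card_pos.2 ⟨y, hy⟩
  rw [degE, degE, hset, Finset.card_erase_of_mem hy]
  omega

lemma degE_step_other (E : V → V → Prop) (x y w : V) (hwx : w ≠ x) (hwy : w ≠ y) :
    degE (delE E x y) w = degE E w := by
  unfold degE
  refine congrArg Finset.card ?_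
  ext z
  rw [Finset.mem_filter, Finset.mem_filter]
  simp only [Finset.mem_univ, true_and, delE]
  constructor
  · tauto
  · intro h
    refine ⟨h, ?_, ?_⟩
    · rintro ⟨h1, -⟩; exact hwx h1
    · rintro ⟨h1, -⟩; exact hwy h1

lemma sum_sf_ite (S : Set V) (x : V) :
    ∑ w ∈ Sf S, (if w = x then (1 : ℤ) else 0) = if x ∈ S then 1 else 0 := by
  rw [Finset.sum_ite_eq' (Sf S) x (fun _ => (1 : ℤ))]
  by_cases h : x ∈ S <;> simp [Sf, h]

lemma sum_sf_modular (b : V → ℤ) (S T : Set V) :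
    ((∑ w ∈ Sf (S ∩ T), b w) + ∑ w ∈ Sf (S ∪ T), b w)
      = (∑ w ∈ Sf S, b w) + ∑ w ∈ Sf T, b w := by
  unfold Sf
  rw [Finset.sum_filter, Finset.sum_filter, Finset.sum_filter, Finset.sum_filter,
    ← Finset.sum_add_distrib, ← Finset.sum_add_distrib]
  refine Finset.sum_congr rfl fun w _ => ?_
  by_cases h1 : w ∈ S <;> by_cases h2 : w ∈ T <;>
    simp [h1, h2, Set.mem_inter_iff, Set.mem_union]

lemma Sf_singleton (x : V) : Sf ({x} : Set V) = {x} := by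
  ext w; simp [Sf]

lemma degE_congr (R R' : V → V → Prop) (h : ∀ a b, R a b ↔ R' a b) : degE R = degE R' := by
  funext w
  unfold degE
  congr 1
  ext z
  simp [h]

lemma delE_comm (E : V → V → Prop) (x y : V) (a b : V) :
    delE E x y a b ↔ delE E y x a b := by
  unfold delE; tauto

lemma outc_ext (O' : V → V → Prop) (x y : V) (hno : ¬ O' x y) (w : V) :
    {z | O' w z ∨ (w = x ∧ z = y)}.ncard
      = {z | O' w z}.ncard + (if w = x then 1 else 0) := by
  by_cases hw : w = x
  · subst hw
    have hset : {z | O' w z ∨ (w = w ∧ z = y)} = insert y {z | O' w z} := by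
      ext z
      simp only [Set.mem_setOf_eq, Set.mem_insert_iff, true_and]
      tauto
    rw [hset, Set.ncard_insert_of_notMem (show y ∉ {z | O' w z} from hno), if_pos rfl]
  · have hset : {z | O' w z ∨ (w = x ∧ z = y)} = {z | O' w z} := by
      ext z
      simp only [Set.mem_setOf_eq]
      tauto
    rw [hset, if_neg hw, add_zero]

lemma inc_ext (O' : V → V → Prop) (x y : V) (hno : ¬ O' x y) (w : V) :
    {z | O' z w ∨ (z = x ∧ w = y)}.ncard
      = {z | O' z w}.ncard + (if w = y then 1 else 0) := by
  by_cases hw : w = y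
  · subst hw
    have hset : {z | O' z w ∨ (z = x ∧ w = w)} = insert x {z | O' z w} := by
      ext z
      simp only [Set.mem_setOf_eq, Set.mem_insert_iff, and_true]
      tauto
    rw [hset, Set.ncard_insert_of_notMem (show x ∉ {z | O' z w} from hno), if_pos rfl]
  · have hset : {z | O' z w ∨ (z = x ∧ w = y)} = {z | O' z w} := by
      ext z
      simp only [Set.mem_setOf_eq]
      tauto
    rw [hset, if_neg hw, add_zero]

lemma key (n : ℕ) : ∀ (E : V → V → Prop), cnt E Set.univ Set.univ = n →
    (∀ u v, E u v → E v u) → (∀ v, ¬ E v v) →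
    ∀ b : V → ℤ, (∀ v, Even ((degE E v : ℤ) + b v)) → (∑ v, b v = 0) →
    (∀ S : Set V, (∑ v ∈ Sf S, b v) ≤ (cnt E S Sᶜ : ℤ)) →
    ∃ O : V → V → Prop, (∀ u v, O u v → E u v) ∧ (∀ u v, E u v → (O u v ↔ ¬ O v u)) ∧
      ∀ v, ({w | O v w}.ncard : ℤ) - ({w | O w v}.ncard : ℤ) = b v := by
  induction n using Nat.strong_induction_on with
  | _ n IH =>
  intro E hcard hsymm hirr b hpar htot hcond
  by_cases hE : ∀ u v, ¬ E u v
  · -- base case: no edges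
    have hcnt0 : ∀ S T : Set V, cnt E S T = 0 := by
      intro S T
      unfold cnt
      rw [Finset.card_eq_zero, Finset.filter_eq_empty_iff]
      intro p _ hp
      exact hE p.1 p.2 hp.2.2
    have hb0 : ∀ w, b w = 0 := by
      have hle : ∀ w, b w ≤ 0 := by
        intro w
        have := hcond {w}
        rw [Sf_singleton, Finset.sum_singleton, hcnt0] at this
        exact_mod_cast this
      intro w
      by_contra hw
      have h1 : b w < 0 := lt_of_le_of_ne (hle w) hw
      have h2 : ∑ z ∈ Finset.univ.erase w, b z ≤ 0 :=
        Finset.sum_nonpos fun z _ => hle z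
      have h3 : b w + ∑ z ∈ Finset.univ.erase w, b z = ∑ z, b z :=
        Finset.add_sum_erase _ _ (Finset.mem_univ w)
      rw [htot] at h3
      linarith
    refine ⟨fun _ _ => False, fun u v h => h.elim, fun u v h => absurd h (hE u v), fun w => ?_⟩
    simp [hb0 w]
  · push_neg at hE
    obtain ⟨u, v, huv⟩ := hE
    have hvu := hsymm u v huv
    have hne : u ≠ v := fun h => hirr v (h ▸ huv)
    -- generic orientation step
    have step : ∀ x y : V, E x y →
        (∀ S : Set V, y ∈ S → x ∉ S → (∑ w ∈ Sf S, b w) ≠ (cnt E S Sᶜ : ℤ)) →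
        ∃ O : V → V → Prop, (∀ a c, O a c → E a c) ∧ (∀ a c, E a c → (O a c ↔ ¬ O c a)) ∧
          ∀ w, ({z | O w z}.ncard : ℤ) - ({z | O z w}.ncard : ℤ) = b w := by
      intro x y hxy hnotight
      have hyx := hsymm x y hxy
      have hnexy : x ≠ y := fun h => hirr y (h ▸ hxy)
      set E' : V → V → Prop := delE E x y with hE'
      set b' : V → ℤ := fun w => b w - (if w = x then 1 else 0) + (if w = y then 1 else 0)
        with hb'
      -- cardinality drop
      have hcs := cnt_step E x y hxy hyx hnexy Set.univ Set.univ
      rw [← hE'] at hcs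
      simp only [Set.mem_univ, and_self, if_true] at hcs
      have hlt : cnt E' Set.univ Set.univ < n := by omega
      -- symmetry/irreflexivity
      have hsymm' : ∀ a c, E' a c → E' c a := by
        rintro a c ⟨h, h1, h2⟩
        exact ⟨hsymm a c h, fun hc => h2 ⟨hc.2, hc.1⟩, fun hc => h1 ⟨hc.2, hc.1⟩⟩
      have hirr' : ∀ w, ¬ E' w w := fun w hw => hirr w hw.1
      -- parity
      have hdegx : degE E' x + 1 = degE E x := degE_step_x E x y hxy hnexy
      have hdegy : degE E' y + 1 = degE E y := by
        have hcg : degE E' = degE (delE E y x) :=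
          degE_congr _ _ (fun a c => delE_comm E x y a c)
        rw [hcg]
        exact degE_step_x E y x hyx (Ne.symm hnexy)
      have hpar' : ∀ w, Even ((degE E' w : ℤ) + b' w) := by
        intro w
        obtain ⟨k, hk⟩ := hpar w
        by_cases hwx : w = x
        · subst hwx
          have hbw : b' w = b w - 1 := by
            simp [hb', hnexy]
          exact ⟨k - 1, by rw [hbw]; omega⟩
        · by_cases hwy : w = y
          · subst hwy
            have hbw : b' w = b w + 1 := by
              simp [hb', hwx]
            exact ⟨k, by rw [hbw]; omega⟩
          · have hbw : b' w = b w := by simp [hb', hwx, hwy]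
            rw [hbw, degE_step_other E x y w hwx hwy]
            exact ⟨k, hk⟩
      -- total
      have htot' : ∑ w, b' w = 0 := by
        simp only [hb']
        rw [Finset.sum_add_distrib, Finset.sum_sub_distrib,
          Finset.sum_ite_eq' Finset.univ x (fun _ => (1 : ℤ)),
          Finset.sum_ite_eq' Finset.univ y (fun _ => (1 : ℤ))]
        simp [htot]
      -- condition
      have hcond' : ∀ S : Set V, (∑ w ∈ Sf S, b' w) ≤ (cnt E' S Sᶜ : ℤ) := by
        intro S
        have hsum : (∑ w ∈ Sf S, b' w)
            = (∑ w ∈ Sf S, b w) - (if x ∈ S then 1 else 0) + (if y ∈ S then 1 else 0) := by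
          simp only [hb']
          rw [Finset.sum_add_distrib, Finset.sum_sub_distrib, sum_sf_ite, sum_sf_ite]
        have hcnt := cnt_step E x y hxy hyx hnexy S Sᶜ
        rw [← hE'] at hcnt
        have hc := hcond S
        by_cases hxS : x ∈ S <;> by_cases hyS : y ∈ S
        · have hcnt2 : cnt E S Sᶜ = cnt E' S Sᶜ := by
            rw [hcnt, if_neg (fun hc : x ∈ S ∧ y ∈ Sᶜ => hc.2 hyS),
              if_neg (fun hc : y ∈ S ∧ x ∈ Sᶜ => hc.2 hxS)]
            omega
          rw [hsum, if_pos hxS, if_pos hyS]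
          rw [hcnt2] at hc
          omega
        · have hcnt2 : cnt E S Sᶜ = cnt E' S Sᶜ + 1 := by
            rw [hcnt, if_pos ⟨hxS, hyS⟩, if_neg (fun hc : y ∈ S ∧ x ∈ Sᶜ => hyS hc.1)]
          rw [hsum, if_pos hxS, if_neg hyS]
          rw [hcnt2] at hc
          push_cast at hc ⊢
          omega
        · have hcnt2 : cnt E S Sᶜ = cnt E' S Sᶜ + 1 := by
            rw [hcnt, if_neg (fun hc : x ∈ S ∧ y ∈ Sᶜ => hxS hc.1), if_pos ⟨hyS, hxS⟩]
          have hne2 := hnotight S hyS hxS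
          obtain ⟨k, hk⟩ := parity_lemma E hsymm hirr b hpar S
          rw [hsum, if_neg hxS, if_pos hyS]
          rw [hcnt2] at hc hne2 hk
          push_cast at hc hne2 hk ⊢
          omega
        · have hcnt2 : cnt E S Sᶜ = cnt E' S Sᶜ := by
            rw [hcnt, if_neg (fun hc : x ∈ S ∧ y ∈ Sᶜ => hxS hc.1),
              if_neg (fun hc : y ∈ S ∧ x ∈ Sᶜ => hyS hc.1)]
            omega
          rw [hsum, if_neg hxS, if_neg hyS]
          rw [hcnt2] at hc
          omega
      obtain ⟨O', hO'sub, hO'or, hO'deg⟩ :=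
        IH _ hlt E' rfl hsymm' hirr' b' hpar' htot' hcond'
      have hnoxy : ¬ O' x y := fun h => (hO'sub x y h).2.1 ⟨rfl, rfl⟩
      have hnoyx : ¬ O' y x := fun h => (hO'sub y x h).2.2 ⟨rfl, rfl⟩
      refine ⟨fun a c => O' a c ∨ (a = x ∧ c = y), ?_, ?_, ?_⟩
      · rintro a c (h | ⟨rfl, rfl⟩)
        · exact (hO'sub a c h).1
        · exact hxy
      · intro a c hac
        show O' a c ∨ (a = x ∧ c = y) ↔ ¬(O' c a ∨ (c = x ∧ a = y))
        by_cases h1 : a = x ∧ c = y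
        · obtain ⟨rfl, rfl⟩ := h1
          simp only [and_self, or_true, true_iff]
          rintro (h | ⟨h, -⟩)
          · exact hnoyx h
          · exact hnexy h.symm
        · by_cases h2 : a = y ∧ c = x
          · obtain ⟨rfl, rfl⟩ := h2
            constructor
            · rintro (h | ⟨h, -⟩)
              · exact absurd h hnoyx
              · exact absurd h.symm hnexy
            · intro h
              exact absurd (Or.inr ⟨rfl, rfl⟩) h
          · have h2' : ¬(c = x ∧ a = y) := fun hc => h2 ⟨hc.2, hc.1⟩
            rw [or_iff_left h1, or_iff_left h2']
            exact hO'or a c ⟨hac, h1, h2⟩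
      · intro w
        show ({z | O' w z ∨ (w = x ∧ z = y)}.ncard : ℤ)
            - ({z | O' z w ∨ (z = x ∧ w = y)}.ncard : ℤ) = b w
        have e1 := outc_ext O' x y hnoxy w
        have e2 := inc_ext O' x y hnoxy w
        have e3 := hO'deg w
        have hbw : b' w = (b w - if w = x then 1 else 0) + if w = y then 1 else 0 := rfl
        rw [hbw] at e3
        rw [e1, e2]
        by_cases hwx : w = x <;> by_cases hwy : w = y
        · exact absurd (hwx.symm.trans hwy) hnexy
        · rw [if_pos hwx, if_neg hwy] at e3
          rw [if_pos hwx, if_neg hwy]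
          push_cast
          omega
        · rw [if_neg hwx, if_pos hwy] at e3
          rw [if_neg hwx, if_pos hwy]
          push_cast
          omega
        · rw [if_neg hwx, if_neg hwy] at e3
          rw [if_neg hwx, if_neg hwy]
          push_cast
          omega
    by_cases htight : ∃ S : Set V, v ∈ S ∧ u ∉ S ∧ (∑ w ∈ Sf S, b w) = (cnt E S Sᶜ : ℤ)
    · obtain ⟨S0, hvS0, huS0, heq0⟩ := htight
      apply step v u hvu
      intro T huT hvT heqT
      have hsub := submod E S0 T
      have hmod := sum_sf_modular b S0 T
      have hpos : 0 < cnt E (S0 \ T) (T \ S0) := by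
        unfold cnt
        apply Finset.card_pos.2
        refine ⟨(v, u), ?_⟩
        simp only [Finset.mem_filter, Finset.mem_univ, true_and, Set.mem_diff]
        exact ⟨⟨hvS0, hvT⟩, ⟨huT, huS0⟩, hvu⟩
      have hpos' : (1 : ℤ) ≤ (cnt E (S0 \ T) (T \ S0) : ℤ) := by exact_mod_cast hpos
      have hnn : (0 : ℤ) ≤ (cnt E (T \ S0) (S0 \ T) : ℤ) := Int.natCast_nonneg _
      have hc1 := hcond (S0 ∩ T)
      have hc2 := hcond (S0 ∪ T)
      linarith
    · push_neg at htight
      exact step u v huv (fun S hvS huS heq => htight S hvS huS heq)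

lemma card_filter_congr' {α : Type*} [Fintype α] (p q : α → Prop) {hp : DecidablePred p}
    {hq : DecidablePred q} (h : ∀ a, p a ↔ q a) :
    (@Finset.filter α p hp Finset.univ).card = (@Finset.filter α q hq Finset.univ).card := by
  apply Finset.card_bij (fun a _ => a)
  · intro a ha
    simp only [Finset.mem_filter, Finset.mem_univ, true_and] at *
    exact (h a).1 ha
  · intro a _ c _ hac; exact hac
  · intro a ha
    refine ⟨a, ?_, rfl⟩
    simp only [Finset.mem_filter, Finset.mem_univ, true_and] at *
    exact (h a).2 ha

lemma ncard_cnt (R : V → V → Prop) (S : Set V) :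
    {p : V × V | p.1 ∈ S ∧ p.2 ∉ S ∧ R p.1 p.2}.ncard = cnt R S Sᶜ := by
  rw [ncard_pairs]
  unfold cnt
  apply card_filter_congr'
  intro p
  exact Iff.rfl

lemma cnt_congr (R R' : V → V → Prop) (h : ∀ a b, R a b ↔ R' a b) (S T : Set V) :
    cnt R S T = cnt R' S T := by
  unfold cnt
  apply card_filter_congr'
  intro p
  rw [h p.1 p.2]

lemma Sf_univ : Sf (Set.univ : Set V) = Finset.univ := by
  ext v; simp [Sf]

lemma degsum_ncard (R : V → V → Prop) (S : Set V) :
    ∑ v ∈ Sf S, {w | R v w}.ncard = cnt R S Set.univ := by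
  rw [← degsum]
  exact Finset.sum_congr rfl fun v _ => ncard_set _

lemma degsum_ncard_in (R : V → V → Prop) (S : Set V) :
    ∑ v ∈ Sf S, {w | R w v}.ncard = cnt (fun a b => R b a) S Set.univ := by
  rw [← degsum (fun a b => R b a) S]
  exact Finset.sum_congr rfl fun v _ => ncard_set _

end

/-- Let `H` be a mixed graph (undirected edge relation `E`, symmetric and loopless; arc
relation `A`, loopless) whose underlying graph is eulerian (every vertex has even total
degree). Then `H` has an eulerian orientation — an orientation `O` of its undirected edges
such that every vertex has equal in- and out-degree counting arcs and oriented edges — if and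
only if for every vertex set `S`, `d⁺(S) - d⁻(S)` is at most the number of undirected edges
leaving `S`. -/
theorem stmt_11 {V : Type*} [Fintype V]
    (E : V → V → Prop) (hEsymm : ∀ u v, E u v → E v u) (hEirr : ∀ v, ¬ E v v)
    (A : V → V → Prop) (hAirr : ∀ v, ¬ A v v)
    (heul : ∀ v : V, Even ({w | E v w}.ncard + {w | A v w}.ncard + {w | A w v}.ncard)) :
    (∃ O : V → V → Prop, (∀ u v, O u v → E u v) ∧ (∀ u v, E u v → (O u v ↔ ¬ O v u)) ∧
        ∀ v : V, {w | A v w}.ncard + {w | O v w}.ncard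
          = {w | A w v}.ncard + {w | O w v}.ncard)
    ↔ ∀ S : Set V,
        ({p : V × V | p.1 ∈ S ∧ p.2 ∉ S ∧ A p.1 p.2}.ncard : ℤ)
          - ({p : V × V | p.1 ∈ S ∧ p.2 ∉ S ∧ A p.2 p.1}.ncard : ℤ)
          ≤ ({p : V × V | p.1 ∈ S ∧ p.2 ∉ S ∧ E p.1 p.2}.ncard : ℤ) := by
  classical
  constructor
  · rintro ⟨O, hOsub, hOor, hOdeg⟩ S
    have hd : {p : V × V | p.1 ∈ S ∧ p.2 ∉ S ∧ A p.2 p.1}.ncard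
        = cnt (fun a b => A b a) S Sᶜ := ncard_cnt (fun a b => A b a) S
    rw [hd, ncard_cnt A S, ncard_cnt E S]
    have h1 : ∑ v ∈ Sf S, ({w | A v w}.ncard + {w | O v w}.ncard)
        = ∑ v ∈ Sf S, ({w | A w v}.ncard + {w | O w v}.ncard) :=
      Finset.sum_congr rfl fun v _ => hOdeg v
    rw [Finset.sum_add_distrib, Finset.sum_add_distrib, degsum_ncard, degsum_ncard,
      degsum_ncard_in, degsum_ncard_in] at h1
    have hsplitA := cnt_split A S Sᶜ
    have hsplitA' := cnt_split (fun a b => A b a) S Sᶜ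
    have hsplitO := cnt_split O S Sᶜ
    have hsplitO' := cnt_split (fun a b => O b a) S Sᶜ
    rw [compl_compl] at hsplitA hsplitA' hsplitO hsplitO'
    have hswapA : cnt A S S = cnt (fun a b => A b a) S S := cnt_swap A S S
    have hswapO : cnt O S S = cnt (fun a b => O b a) S S := cnt_swap O S S
    have hEsplit : cnt E S Sᶜ = cnt O S Sᶜ + cnt (fun a b => O b a) S Sᶜ := by
      unfold cnt
      rw [Finset.card_filter, Finset.card_filter, Finset.card_filter,
        ← Finset.sum_add_distrib]
      refine Finset.sum_congr rfl fun p _ => ?_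
      by_cases h1 : p.1 ∈ S
      · by_cases h2 : p.2 ∈ Sᶜ
        · by_cases hE : E p.1 p.2
          · have hiff := hOor p.1 p.2 hE
            by_cases hO : O p.1 p.2
            · simp [h1, h2, hE, hO, hiff.1 hO]
            · have hO' : O p.2 p.1 := by
                by_contra hc; exact hO (hiff.2 hc)
              simp [h1, h2, hE, hO, hO']
          · have hO1 : ¬ O p.1 p.2 := fun h => hE (hOsub _ _ h)
            have hO2 : ¬ O p.2 p.1 := fun h => hE (hEsymm _ _ (hOsub _ _ h))
            simp [h1, h2, hE, hO1, hO2]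
        · simp [h2]
      · simp [h1]
    push_cast
    omega
  · intro hS
    set b : V → ℤ := fun v => ({w | A w v}.ncard : ℤ) - ({w | A v w}.ncard : ℤ) with hb
    have hpar : ∀ v, Even ((degE E v : ℤ) + b v) := by
      intro v
      obtain ⟨k, hk⟩ := heul v
      have hdeg : degE E v = {w | E v w}.ncard := (ncard_set _).symm
      refine ⟨({w | E v w}.ncard : ℤ) + ({w | A w v}.ncard : ℤ) - k, ?_⟩
      rw [hdeg]
      simp only [hb]
      have hk' : ({w | E v w}.ncard : ℤ) + {w | A v w}.ncard + {w | A w v}.ncard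
          = (k : ℤ) + k := by exact_mod_cast hk
      omega
    have htot : ∑ v, b v = 0 := by
      simp only [hb]
      rw [Finset.sum_sub_distrib]
      have e1 : ∑ v, ({w | A w v}.ncard : ℤ)
          = (cnt (fun a b => A b a) Set.univ Set.univ : ℤ) := by
        have := degsum_ncard_in A Set.univ
        rw [Sf_univ] at this
        exact_mod_cast congrArg (Nat.cast (R := ℤ)) this
      have e2 : ∑ v, ({w | A v w}.ncard : ℤ) = (cnt A Set.univ Set.univ : ℤ) := by
        have := degsum_ncard A Set.univ
        rw [Sf_univ] at this
        exact_mod_cast congrArg (Nat.cast (R := ℤ)) this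
      have e3 : cnt A Set.univ Set.univ = cnt (fun a b => A b a) Set.univ Set.univ :=
        cnt_swap A Set.univ Set.univ
      rw [e1, e2, e3]
      ring
    have hcond : ∀ S : Set V, (∑ v ∈ Sf S, b v) ≤ (cnt E S Sᶜ : ℤ) := by
      intro S
      have hsum : ∑ v ∈ Sf S, b v
          = (cnt (fun a b => A b a) S Set.univ : ℤ) - cnt A S Set.univ := by
        simp only [hb]
        rw [Finset.sum_sub_distrib]
        congr 1
        · exact_mod_cast congrArg (Nat.cast (R := ℤ)) (degsum_ncard_in A S)
        · exact_mod_cast congrArg (Nat.cast (R := ℤ)) (degsum_ncard A S)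
      have h2 := hS Sᶜ
      have hd1 : {p : V × V | p.1 ∈ Sᶜ ∧ p.2 ∉ Sᶜ ∧ A p.1 p.2}.ncard = cnt A Sᶜ Sᶜᶜ :=
        ncard_cnt A Sᶜ
      have hd2 : {p : V × V | p.1 ∈ Sᶜ ∧ p.2 ∉ Sᶜ ∧ A p.2 p.1}.ncard
          = cnt (fun a b => A b a) Sᶜ Sᶜᶜ := ncard_cnt (fun a b => A b a) Sᶜ
      have hd3 : {p : V × V | p.1 ∈ Sᶜ ∧ p.2 ∉ Sᶜ ∧ E p.1 p.2}.ncard = cnt E Sᶜ Sᶜᶜ :=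
        ncard_cnt E Sᶜ
      rw [compl_compl] at hd1 hd2 hd3
      rw [hd1, hd2, hd3] at h2
      have s1 : cnt A Sᶜ S = cnt (fun a b => A b a) S Sᶜ := cnt_swap A Sᶜ S
      have s2 : cnt (fun a b => A b a) Sᶜ S = cnt A S Sᶜ := by
        rw [cnt_swap (fun a b => A b a) Sᶜ S]
      have s3 : cnt E Sᶜ S = cnt E S Sᶜ := by
        rw [cnt_swap E Sᶜ S]
        exact cnt_congr _ _ (fun a b => ⟨hEsymm _ _, hEsymm _ _⟩) S Sᶜ
      have sp1 := cnt_split A S Sᶜ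
      have sp2 := cnt_split (fun a b => A b a) S Sᶜ
      rw [compl_compl] at sp1 sp2
      have sw := cnt_swap A S S
      rw [hsum]
      rw [s1, s2, s3] at h2
      push_cast at h2 ⊢
      omega
    obtain ⟨O, h1, h2, h3⟩ :=
      key (cnt E Set.univ Set.univ) E rfl hEsymm hEirr b hpar htot hcond
    refine ⟨O, h1, h2, fun v => ?_⟩
    have hv := h3 v
    simp only [hb] at hv
    omega
end
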